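/- arXiv:2307.03239 — 4 statements merged into one kernel-verified Lean document; each statement's English description precedes it below -/
import Mathlib

section
/- The set of strata {H_s^u(f) : u a composition of d}, partially ordered by inclusion, is a lattice; moreover the intersection of two strata H_s^u(f) and H_s^v(f) equals the stratum H_s^{u∧v}(f), where u∧v is the meet of u and v in the lattice of compositions of d, and this intersection is the meet of the two strata. -/
noncomputable section

open Polynomial

/-- The set of partial sums `{u₁, u₁+u₂, …, d}` of a composition `u` of `d`. -/
def Composition.sums {d : ℕ} (u : Composition d) : Finset ℕ :=
  (Finset.range u.length).image fun i => u.sizeUpTo (i + 1)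

/-- `CompLe v u` : the partial order on compositions of `d`; `v ≤ u` iff the set of
partial sums of `v` is contained in the set of partial sums of `u` (equivalently, `v` is
obtained from `u` by merging blocks of consecutive parts into their sums). -/
def CompLe {d : ℕ} (v u : Composition d) : Prop := v.sums ⊆ u.sums

/-- A real univariate polynomial is hyperbolic if all of its roots are real, i.e. it has
`natDegree` many real roots counted with multiplicity. -/
def Hyperbolic (p : ℝ[X]) : Prop := p.roots.card = p.natDegree

/-- `HasComposition h u` : the composition `v(h)` of the hyperbolic polynomial `h`
(the tuple of multiplicities of its increasingly ordered distinct roots) equals `u`. -/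
def HasComposition {d : ℕ} (h : ℝ[X]) (u : Composition d) : Prop :=
  ∃ a : Fin u.length → ℝ, StrictMono a ∧
    h = ∏ i, (X - C (a i)) ^ u.blocksFun i

/-- `Hset d s f` is `H_s(f)` : the monic hyperbolic polynomials of degree `d` whose
coefficients `h_i = coeff (d-i)` agree with those of `f` for all `i ≤ s`. -/
def Hset (d s : ℕ) (f : ℝ[X]) : Set ℝ[X] :=
  {h | h.Monic ∧ h.natDegree = d ∧ Hyperbolic h ∧
    ∀ j, d - s ≤ j → h.coeff j = f.coeff j}

/-- `HSu d s f u` is the stratum `H_s^u(f) = {h ∈ H_s(f) | v(h) ≤ u}`. -/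
def HSu (d s : ℕ) (f : ℝ[X]) (u : Composition d) : Set ℝ[X] :=
  {h | h ∈ Hset d s f ∧ ∃ w : Composition d, CompLe w u ∧ HasComposition h w}

/-- `C` is a maximal chain in the poset `(L, ⊆)`. -/
def MaximalChain {α : Type*} (L C : Set (Set α)) : Prop :=
  C ⊆ L ∧ IsChain (· ⊆ ·) C ∧
    ∀ C', C' ⊆ L → IsChain (· ⊆ ·) C' → C ⊆ C' → C' = C

/-- `S` is the join (least upper bound) of the family `A` in the poset `(L, ⊆)`. -/
def IsJoinIn {α : Type*} (L A : Set (Set α)) (S : Set α) : Prop :=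
  S ∈ L ∧ (∀ a ∈ A, a ⊆ S) ∧ ∀ T ∈ L, (∀ a ∈ A, a ⊆ T) → S ⊆ T

/-- `S` is the meet (greatest lower bound) of the family `A` in the poset `(L, ⊆)`. -/
def IsMeetIn {α : Type*} (L A : Set (Set α)) (S : Set α) : Prop :=
  S ∈ L ∧ (∀ a ∈ A, S ⊆ a) ∧ ∀ T ∈ L, (∀ a ∈ A, T ⊆ a) → T ⊆ S

/-- `b` covers `a` in the poset `(L, ⊆)`. -/
def CoversIn {α : Type*} (L : Set (Set α)) (a b : Set α) : Prop :=
  a ∈ L ∧ b ∈ L ∧ a ⊂ b ∧ ∀ c ∈ L, a ⊂ c → c ⊂ b → False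

/-- The set of strata of `H_s(f)`, as sets of polynomials. -/
def strataL (d s : ℕ) (f : ℝ[X]) : Set (Set ℝ[X]) :=
  {S | ∃ u : Composition d, S = HSu d s f u}


section AuxProofs

open Finset

lemma roots_prod_pow {k : ℕ} (a : Fin k → ℝ) (m : Fin k → ℕ) :
    (∏ i, (X - C (a i)) ^ m i).roots =
      Finset.univ.val.bind fun i => (m i) • ({a i} : Multiset ℝ) := by
  have hne : (∏ i, (X - C (a i)) ^ m i) ≠ 0 := by
    apply Finset.prod_ne_zero_iff.2
    intro i _
    exact pow_ne_zero _ (Polynomial.X_sub_C_ne_zero _)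
  rw [Polynomial.roots_prod _ _ hne]
  congr 1
  funext i
  rw [Polynomial.roots_pow, Polynomial.roots_X_sub_C]

lemma count_roots_prod_pow {k : ℕ} {a : Fin k → ℝ} (ha : Function.Injective a)
    (m : Fin k → ℕ) (i : Fin k) :
    (∏ i, (X - C (a i)) ^ m i).roots.count (a i) = m i := by
  rw [roots_prod_pow, Multiset.count_bind]
  have h1 : ∀ j : Fin k,
      Multiset.count (a i) ((m j) • ({a j} : Multiset ℝ)) = if i = j then m j else 0 := by
    intro j
    rw [Multiset.count_nsmul, Multiset.count_singleton]
    by_cases h : i = j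
    · simp [h]
    · have : a i ≠ a j := fun hc => h (ha hc)
      simp [h, this]
  have h2 : (Multiset.map (fun j => Multiset.count (a i) ((m j) • ({a j} : Multiset ℝ)))
      Finset.univ.val).sum = ∑ j, if i = j then m j else 0 := by
    apply Finset.sum_congr rfl
    intro j _
    exact h1 j
  rw [h2, Finset.sum_ite_eq]
  simp

lemma mem_roots_prod_pow {k : ℕ} (a : Fin k → ℝ) (m : Fin k → ℕ) (hm : ∀ i, 0 < m i) (x : ℝ) :
    x ∈ (∏ i, (X - C (a i)) ^ m i).roots ↔ ∃ i, a i = x := by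
  rw [roots_prod_pow]
  constructor
  · intro hx
    obtain ⟨i, _, hxi⟩ := Multiset.mem_bind.1 hx
    obtain ⟨-, hx⟩ := Multiset.mem_nsmul.1 hxi
    exact ⟨i, (Multiset.mem_singleton.1 hx).symm⟩
  · rintro ⟨i, rfl⟩
    exact Multiset.mem_bind.2 ⟨i, Finset.mem_val.mpr (Finset.mem_univ i),
      Multiset.mem_nsmul.2 ⟨(hm i).ne', Multiset.mem_singleton.2 rfl⟩⟩

lemma hasComposition_unique {d : ℕ} {h : ℝ[X]} {u w : Composition d}
    (hu : HasComposition h u) (hw : HasComposition h w) : u = w := by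
  obtain ⟨a, ha, rfl⟩ := hu
  obtain ⟨b, hb, hE⟩ := hw
  set M := (∏ i, (X - C (a i)) ^ u.blocksFun i).roots with hM
  have hMb : M = (∏ i, (X - C (b i)) ^ w.blocksFun i).roots := by rw [hM, hE]
  set S := M.toFinset with hS
  have hmema : ∀ x, x ∈ S ↔ ∃ i, a i = x := by
    intro x
    rw [hS, Multiset.mem_toFinset, hM,
      mem_roots_prod_pow a _ (fun i => u.one_le_blocksFun i)]
  have hmemb : ∀ x, x ∈ S ↔ ∃ i, b i = x := by
    intro x
    rw [hS, Multiset.mem_toFinset, hMb,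
      mem_roots_prod_pow b _ (fun i => w.one_le_blocksFun i)]
  have hca : S.card = u.length := by
    have : S = Finset.univ.image a := by
      ext x
      rw [hmema x]
      simp [eq_comm]
    rw [this, Finset.card_image_of_injective _ ha.injective, Finset.card_univ, Fintype.card_fin]
  have hcb : S.card = w.length := by
    have : S = Finset.univ.image b := by
      ext x
      rw [hmemb x]
      simp [eq_comm]
    rw [this, Finset.card_image_of_injective _ hb.injective, Finset.card_univ, Fintype.card_fin]
  have hlen : u.length = w.length := hca.symm.trans hcb
  have haO : a = S.orderEmbOfFin hca :=
    Finset.orderEmbOfFin_unique hca (fun x => (hmema (a x)).2 ⟨x, rfl⟩) ha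
  have hbO : b = S.orderEmbOfFin hcb :=
    Finset.orderEmbOfFin_unique hcb (fun x => (hmemb (b x)).2 ⟨x, rfl⟩) hb
  have hab : ∀ i : Fin u.length, a i = b (Fin.cast hlen i) := by
    intro i
    rw [haO, hbO, Finset.orderEmbOfFin_apply, Finset.orderEmbOfFin_apply]
    simp
  have hcount : ∀ i : Fin u.length, u.blocksFun i = w.blocksFun (Fin.cast hlen i) := by
    intro i
    have h1 : M.count (a i) = u.blocksFun i := by
      rw [hM]; exact count_roots_prod_pow ha.injective _ i
    have h2 : M.count (b (Fin.cast hlen i)) = w.blocksFun (Fin.cast hlen i) := by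
      rw [hMb]; exact count_roots_prod_pow hb.injective _ _
    rw [← h1, hab i, h2]
  ext1
  apply List.ext_getElem
  · rw [u.blocks_length, w.blocks_length, hlen]
  · intro n h1 h2
    have hn : n < u.length := by rwa [u.blocks_length] at h1
    have := hcount ⟨n, hn⟩
    simpa [Composition.blocksFun] using this

lemma Composition.sums_eq_boundaries {d : ℕ} (c : Composition d) :
    c.sums = (c.boundaries.erase 0).image Fin.val := by
  have hbmem : ∀ y : Fin (d + 1), y ∈ c.boundaries ↔ ∃ j, c.boundary j = y := by
    intro y
    simp [Composition.boundaries]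
  ext x
  constructor
  · intro hx
    obtain ⟨i, hi, rfl⟩ := Finset.mem_image.1 hx
    rw [Finset.mem_range] at hi
    have hpos : 0 < c.sizeUpTo (i + 1) := by
      calc 0 = c.sizeUpTo 0 := c.sizeUpTo_zero.symm
        _ ≤ c.sizeUpTo i := c.monotone_sizeUpTo (Nat.zero_le i)
        _ < c.sizeUpTo (i + 1) := c.sizeUpTo_strict_mono hi
    refine Finset.mem_image.2 ⟨c.boundary ⟨i + 1, by omega⟩,
      Finset.mem_erase.2 ⟨?_, (hbmem _).2 ⟨_, rfl⟩⟩, rfl⟩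
    intro h0
    have hv := congrArg Fin.val h0
    have : c.sizeUpTo (i + 1) = 0 := by simpa [Composition.boundary] using hv
    omega
  · intro hx
    obtain ⟨y, hy, hyx⟩ := Finset.mem_image.1 hx
    obtain ⟨hy0, hyb⟩ := Finset.mem_erase.1 hy
    obtain ⟨j, rfl⟩ := (hbmem y).1 hyb
    have hjne : (j : ℕ) ≠ 0 := by
      intro h
      apply hy0
      have : j = 0 := Fin.ext (by simp [h])
      rw [this, c.boundary_zero]
    have hjle : (j : ℕ) ≤ c.length := Nat.lt_succ_iff.1 j.2
    refine Finset.mem_image.2 ⟨(j : ℕ) - 1, Finset.mem_range.2 (by omega), ?_⟩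
    have hj1 : (j : ℕ) - 1 + 1 = (j : ℕ) := by omega
    rw [hj1, ← hyx]
    rfl

/-- The meet of two compositions: the composition whose boundaries are the
intersection of the boundaries. -/
def compMeet {d : ℕ} (u v : Composition d) : Composition d :=
  (CompositionAsSet.mk (u.toCompositionAsSet.boundaries ∩ v.toCompositionAsSet.boundaries)
    (Finset.mem_inter.2 ⟨u.toCompositionAsSet.zero_mem, v.toCompositionAsSet.zero_mem⟩)
    (Finset.mem_inter.2
      ⟨u.toCompositionAsSet.getLast_mem, v.toCompositionAsSet.getLast_mem⟩)).toComposition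

lemma compMeet_sums {d : ℕ} (u v : Composition d) :
    (compMeet u v).sums = u.sums ∩ v.sums := by
  have hb : (compMeet u v).boundaries = u.boundaries ∩ v.boundaries := by
    rw [compMeet, CompositionAsSet.toComposition_boundaries]
    rfl
  rw [Composition.sums_eq_boundaries, Composition.sums_eq_boundaries,
    Composition.sums_eq_boundaries, hb, ← Finset.image_inter _ _ Fin.val_injective]
  congr 1
  ext y
  simp only [Finset.mem_erase, Finset.mem_inter]
  tauto

lemma compMeet_le_left {d : ℕ} (u v : Composition d) : CompLe (compMeet u v) u := by
  rw [CompLe, compMeet_sums]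
  exact Finset.inter_subset_left

lemma compMeet_le_right {d : ℕ} (u v : Composition d) : CompLe (compMeet u v) v := by
  rw [CompLe, compMeet_sums]
  exact Finset.inter_subset_right

lemma le_compMeet {d : ℕ} {u v z : Composition d} (h1 : CompLe z u) (h2 : CompLe z v) :
    CompLe z (compMeet u v) := by
  rw [CompLe, compMeet_sums]
  exact Finset.subset_inter h1 h2

lemma compLe_ones {d : ℕ} (w : Composition d) : CompLe w (Composition.ones d) := by
  intro x hx
  obtain ⟨i, hi, rfl⟩ := Finset.mem_image.1 hx
  rw [Finset.mem_range] at hi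
  have h1 : 0 < w.sizeUpTo (i + 1) := by
    calc 0 = w.sizeUpTo 0 := w.sizeUpTo_zero.symm
      _ ≤ w.sizeUpTo i := w.monotone_sizeUpTo (Nat.zero_le i)
      _ < w.sizeUpTo (i + 1) := w.sizeUpTo_strict_mono hi
  have h2 : w.sizeUpTo (i + 1) ≤ d := w.sizeUpTo_le _
  have hlen : (Composition.ones d).length = d := Composition.ones_length d
  refine Finset.mem_image.2 ⟨w.sizeUpTo (i + 1) - 1, Finset.mem_range.2 (by omega), ?_⟩
  rw [Composition.ones_sizeUpTo]
  omega

lemma HSu_mono {d s : ℕ} {f : ℝ[X]} {u z : Composition d} (h : CompLe u z) :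
    HSu d s f u ⊆ HSu d s f z := by
  rintro p ⟨hp, w, hw, hc⟩
  exact ⟨hp, w, hw.trans h, hc⟩

lemma HSu_inter_eq {d s : ℕ} {f : ℝ[X]} {u v m : Composition d}
    (h1 : CompLe m u) (h2 : CompLe m v)
    (h3 : ∀ z, CompLe z u → CompLe z v → CompLe z m) :
    HSu d s f u ∩ HSu d s f v = HSu d s f m := by
  ext p
  constructor
  · rintro ⟨⟨hp, w1, hw1, hc1⟩, ⟨-, w2, hw2, hc2⟩⟩
    obtain rfl := hasComposition_unique hc1 hc2
    exact ⟨hp, w1, h3 w1 hw1 hw2, hc1⟩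
  · rintro ⟨hp, w, hw, hc⟩
    exact ⟨⟨hp, w, hw.trans h1, hc⟩, ⟨hp, w, hw.trans h2, hc⟩⟩

lemma strataL_finite (d s : ℕ) (f : ℝ[X]) : (strataL d s f).Finite := by
  have : strataL d s f = Set.range (HSu d s f) := by
    ext S
    simp [strataL, Set.mem_range, eq_comm]
  rw [this]
  exact Set.finite_range _

lemma inter_mem_strataL {d s : ℕ} {f : ℝ[X]} {S T : Set ℝ[X]}
    (hS : S ∈ strataL d s f) (hT : T ∈ strataL d s f) : S ∩ T ∈ strataL d s f := by
  obtain ⟨u, rfl⟩ := hS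
  obtain ⟨v, rfl⟩ := hT
  exact ⟨compMeet u v, HSu_inter_eq (s := s) (f := f) (compMeet_le_left u v)
    (compMeet_le_right u v) (fun z hz1 hz2 => le_compMeet hz1 hz2)⟩

lemma sInter_mem_strataL {d s : ℕ} {f : ℝ[X]} (U : Set (Set ℝ[X])) (hU : U.Finite) :
    U ⊆ strataL d s f → ∀ S ∈ strataL d s f, S ∩ ⋂₀ U ∈ strataL d s f := by
  refine Set.Finite.induction_on
    (motive := fun U _ => U ⊆ strataL d s f → ∀ S ∈ strataL d s f, S ∩ ⋂₀ U ∈ strataL d s f)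
    U hU ?_ ?_
  · intro _ S hS
    simpa using hS
  · intro a U' haU' hU' ih hsub S hS
    rw [Set.sInter_insert, ← Set.inter_assoc]
    exact ih (fun x hx => hsub (Set.mem_insert_of_mem _ hx)) _
      (inter_mem_strataL hS (hsub (Set.mem_insert _ _)))

end AuxProofs

/-- The set of strata `{H_s^u(f) | u a composition of d}`, partially ordered by inclusion,
is a lattice: any two strata have a join and a meet.  Moreover, if `m = u ∧ v` is the meet
of the compositions `u` and `v`, then `H_s^u(f) ∩ H_s^v(f) = H_s^m(f)`, and this
intersection is the meet of the two strata. -/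
theorem strata_form_lattice (d s : ℕ) (hd : 1 ≤ d) (hsd : s ≤ d) (f : ℝ[X])
    (hmon : f.Monic) (hdeg : f.natDegree = d) (hhyp : Hyperbolic f) :
    (∀ S ∈ strataL d s f, ∀ T ∈ strataL d s f,
      (∃ J, IsJoinIn (strataL d s f) {S, T} J) ∧
      (∃ M, IsMeetIn (strataL d s f) {S, T} M)) ∧
    (∀ u v m : Composition d,
      (CompLe m u ∧ CompLe m v ∧
        ∀ z : Composition d, CompLe z u → CompLe z v → CompLe z m) →
      HSu d s f u ∩ HSu d s f v = HSu d s f m ∧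
      IsMeetIn (strataL d s f) {HSu d s f u, HSu d s f v} (HSu d s f m)) := by
  classical
  constructor
  · intro S hS T hT
    constructor
    · -- join
      set U : Set (Set ℝ[X]) := {Z | Z ∈ strataL d s f ∧ S ⊆ Z ∧ T ⊆ Z} with hU
      have htop : HSu d s f (Composition.ones d) ∈ U := by
        refine ⟨⟨_, rfl⟩, ?_, ?_⟩
        · obtain ⟨u, rfl⟩ := hS
          exact HSu_mono (compLe_ones u)
        · obtain ⟨v, rfl⟩ := hT
          exact HSu_mono (compLe_ones v)
      have hUfin : U.Finite := (strataL_finite d s f).subset (fun Z hZ => hZ.1)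
      have hUsub : U ⊆ strataL d s f := fun Z hZ => hZ.1
      have hJeq : HSu d s f (Composition.ones d) ∩ ⋂₀ U = ⋂₀ U :=
        Set.inter_eq_right.2 (Set.sInter_subset_of_mem htop)
      refine ⟨⋂₀ U, ?_, ?_, ?_⟩
      · rw [← hJeq]
        exact sInter_mem_strataL U hUfin hUsub _ htop.1
      · intro a ha
        apply Set.subset_sInter
        intro Z hZ
        rcases ha with rfl | ha
        · exact hZ.2.1
        · rw [Set.mem_singleton_iff] at ha
          subst ha
          exact hZ.2.2
      · intro T' hT' hbound
        exact Set.sInter_subset_of_mem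
          ⟨hT', hbound S (Set.mem_insert _ _), hbound T (Set.mem_insert_of_mem _ rfl)⟩
    · -- meet
      obtain ⟨u, rfl⟩ := hS
      obtain ⟨v, rfl⟩ := hT
      have heq : HSu d s f u ∩ HSu d s f v = HSu d s f (compMeet u v) :=
        HSu_inter_eq (compMeet_le_left u v) (compMeet_le_right u v)
          (fun z hz1 hz2 => le_compMeet hz1 hz2)
      refine ⟨HSu d s f (compMeet u v), ⟨_, rfl⟩, ?_, ?_⟩
      · intro a ha
        rw [← heq]
        rcases ha with rfl | ha
        · exact Set.inter_subset_left
        · rw [Set.mem_singleton_iff] at ha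
          subst ha
          exact Set.inter_subset_right
      · intro T' hT' hbound
        rw [← heq]
        exact Set.subset_inter (hbound _ (Set.mem_insert _ _))
          (hbound _ (Set.mem_insert_of_mem _ rfl))
  · rintro u v m ⟨h1, h2, h3⟩
    have heq : HSu d s f u ∩ HSu d s f v = HSu d s f m := HSu_inter_eq h1 h2 h3
    refine ⟨heq, ⟨m, rfl⟩, ?_, ?_⟩
    · intro a ha
      rw [← heq]
      rcases ha with rfl | ha
      · exact Set.inter_subset_left
      · rw [Set.mem_singleton_iff] at ha
        subst ha
        exact Set.inter_subset_right
    · intro T' hT' hbound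
      rw [← heq]
      exact Set.subset_inter (hbound _ (Set.mem_insert _ _))
        (hbound _ (Set.mem_insert_of_mem _ rfl))
end
end

section
/- Let u be a composition of d with ℓ(u) = l. Then H_s^u(f), identified with a subset of ℝ^{d-s} via the last d-s coefficients, is closed in ℝ^{d-s}, and the map Π_u : V_s^u(f) ∩ K_l → H_s^u(f) is a homeomorphism. -/
noncomputable section

open Polynomial

/-- The identification of `h ∈ H_s(f)` with `(h_{s+1}, …, h_d) ∈ ℝ^{d-s}` :
coordinate `i` is `h_{s+1+i}`, i.e. the coefficient of `t^{d-s-1-i}`. -/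
def coeffVec (d s : ℕ) (h : ℝ[X]) : Fin (d - s) → ℝ :=
  fun i => h.coeff (d - s - 1 - i.val)

/-- The stratum `H_s^u(f)`, identified with a subset of `ℝ^{d-s}`. -/
def strataSet (d s : ℕ) (f : ℝ[X]) (u : Composition d) : Set (Fin (d - s) → ℝ) :=
  coeffVec d s '' HSu d s f u

/-- The `i`-th elementary symmetric polynomial in `d` variables, evaluated at `y`. -/
def esym (d i : ℕ) (y : Fin d → ℝ) : ℝ :=
  ∑ A ∈ Finset.powersetCard i (Finset.univ : Finset (Fin d)), ∏ j ∈ A, y j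

/-- `x_u ∈ ℝ^d` : the point obtained from `x ∈ ℝ^{ℓ(u)}` by repeating each `x i`
exactly `u i` times. -/
def repVec {d : ℕ} (u : Composition d) (x : Fin u.length → ℝ) : Fin d → ℝ :=
  fun j => x (u.index j)

/-- The Vandermonde variety `V_s^u(f) = {x ∈ ℝ^l | e_i(x_u) = (-1)^i f_i ∀ 1 ≤ i ≤ s}`,
where `f_i = coeff (d - i) f`. -/
def Vset (d s : ℕ) (f : ℝ[X]) (u : Composition d) : Set (Fin u.length → ℝ) :=
  {x | ∀ i, 1 ≤ i → i ≤ s → esym d i (repVec u x) = (-1 : ℝ) ^ i * f.coeff (d - i)}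

/-- `K_l = {x ∈ ℝ^l | x₁ ≤ … ≤ x_l}`. -/
def Kset (l : ℕ) : Set (Fin l → ℝ) := {x | Monotone x}

/-- `Π_u(x) = ∏ᵢ (t - xᵢ)^{uᵢ} = t^d - e₁(x_u) t^{d-1} + … + (-1)^d e_d(x_u)`. -/
def PiMap {d : ℕ} (u : Composition d) (x : Fin u.length → ℝ) : ℝ[X] :=
  ∏ i, (X - C (x i)) ^ u.blocksFun i


section AuxLemmas

open Finset in
/-- membership in the set of partial sums -/
lemma mem_sums_iff {d : ℕ} {c : Composition d} {m : ℕ} :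
    m ∈ c.sums ↔ ∃ i < c.length, c.sizeUpTo (i + 1) = m := by
  simp [Composition.sums]

lemma le_index_iff {d : ℕ} (c : Composition d) {i : ℕ} {j : Fin d} :
    i ≤ (c.index j : ℕ) ↔ c.sizeUpTo i ≤ (j : ℕ) := by
  constructor
  · intro h
    exact le_trans (c.monotone_sizeUpTo h) (c.sizeUpTo_index_le j)
  · intro h
    by_contra hlt
    push_neg at hlt
    have : c.sizeUpTo ((c.index j : ℕ) + 1) ≤ c.sizeUpTo i := c.monotone_sizeUpTo hlt
    exact absurd (lt_of_lt_of_le (c.lt_sizeUpTo_index_succ j) this) (not_lt.2 h)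

lemma index_mono {d : ℕ} (c : Composition d) : Monotone c.index := by
  intro j j' h
  have : (c.index j : ℕ) ≤ (c.index j' : ℕ) := by
    rw [le_index_iff]
    exact le_trans (c.sizeUpTo_index_le j) h
  exact this

lemma index_sizeUpTo {d : ℕ} (c : Composition d) (i : Fin c.length) (k : Fin d)
    (hk : (k : ℕ) = c.sizeUpTo i) : c.index k = i := by
  have h1 : (i : ℕ) ≤ (c.index k : ℕ) := by rw [le_index_iff, hk]
  have h2 : (c.index k : ℕ) ≤ (i : ℕ) := by
    by_contra hlt
    push_neg at hlt
    have := (le_index_iff c (i := (i : ℕ) + 1) (j := k)).1 hlt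
    rw [hk] at this
    exact absurd (c.sizeUpTo_strict_mono i.2) (not_lt.2 this)
  exact Fin.ext (le_antisymm h2 h1)

/-- if `w ≤ u` then the `w`-block of a point `j` is the same as the `w`-block of the
start of the `u`-block of `j`. -/
lemma index_blockStart {d : ℕ} {w u : Composition d} (h : CompLe w u) (j k : Fin d)
    (hk : (k : ℕ) = u.sizeUpTo (u.index j)) : w.index k = w.index j := by
  have hkj : (k : ℕ) ≤ (j : ℕ) := hk ▸ u.sizeUpTo_index_le j
  have hle : w.index k ≤ w.index j := index_mono w (by exact hkj)
  rcases eq_or_lt_of_le hle with heq | hlt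
  · exact heq
  · exfalso
    set m := w.sizeUpTo ((w.index k : ℕ) + 1) with hm
    have hmem : m ∈ w.sums := mem_sums_iff.2 ⟨w.index k, (w.index k).2, rfl⟩
    have hmu : m ∈ u.sums := h hmem
    obtain ⟨i', hi', hieq⟩ := mem_sums_iff.1 hmu
    have hkm : (k : ℕ) < m := w.lt_sizeUpTo_index_succ k
    have hmj : m ≤ (j : ℕ) := by
      calc m ≤ w.sizeUpTo (w.index j) := w.monotone_sizeUpTo hlt
        _ ≤ (j : ℕ) := w.sizeUpTo_index_le j
    have h1 : i' + 1 ≤ (u.index j : ℕ) := (le_index_iff u).2 (hieq ▸ hmj)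
    have h2 : u.sizeUpTo (i' + 1) ≤ u.sizeUpTo (u.index j) := u.monotone_sizeUpTo h1
    rw [hieq, ← hk] at h2
    exact absurd hkm (not_lt.2 h2)

lemma filter_index_eq {d : ℕ} (u : Composition d) (i : Fin u.length) :
    Finset.univ.filter (fun j => u.index j = i) = Finset.univ.map (u.embedding i).toEmbedding := by
  ext j
  simp only [Finset.mem_filter, Finset.mem_univ, true_and, Finset.mem_map,
    RelEmbedding.coe_toEmbedding]
  constructor
  · intro hj
    have hmem : j ∈ Set.range (u.embedding i) := u.mem_range_embedding_iff'.mpr hj.symm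
    obtain ⟨k, hk⟩ := hmem
    exact ⟨k, hk⟩
  · rintro ⟨k, hk⟩
    have hmem : j ∈ Set.range (u.embedding i) := ⟨k, hk⟩
    exact (u.mem_range_embedding_iff'.mp hmem).symm

lemma piMap_eq_prod {d : ℕ} (u : Composition d) (x : Fin u.length → ℝ) :
    PiMap u x = ∏ j : Fin d, (X - C (repVec u x j)) := by
  classical
  rw [show (∏ j : Fin d, (X - C (repVec u x j)))
      = ∏ i : Fin u.length, ∏ j ∈ Finset.univ.filter (fun j => u.index j = i),
          (X - C (repVec u x j)) from
    (Finset.prod_fiberwise_of_maps_to (fun j _ => Finset.mem_univ (u.index j)) _).symm]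
  refine Finset.prod_congr rfl fun i _ => ?_
  have : ∀ j ∈ Finset.univ.filter (fun j => u.index j = i),
      (X - C (repVec u x j)) = (X - C (x i)) := by
    intro j hj
    simp only [Finset.mem_filter] at hj
    simp [repVec, hj.2]
  rw [Finset.prod_congr rfl this, Finset.prod_const, filter_index_eq, Finset.card_map,
    Finset.card_univ, Fintype.card_fin]

lemma piMap_eq_multiset {d : ℕ} (u : Composition d) (x : Fin u.length → ℝ) :
    PiMap u x = ((Finset.univ.val.map (repVec u x)).map fun t => X - C t).prod := by
  rw [piMap_eq_prod, Multiset.map_map]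
  rfl

lemma piMap_monic {d : ℕ} (u : Composition d) (x : Fin u.length → ℝ) : (PiMap u x).Monic := by
  rw [piMap_eq_prod]
  exact monic_prod_of_monic _ _ fun i _ => monic_X_sub_C _

lemma piMap_natDegree {d : ℕ} (u : Composition d) (x : Fin u.length → ℝ) :
    (PiMap u x).natDegree = d := by
  rw [piMap_eq_multiset, natDegree_multiset_prod_X_sub_C_eq_card]
  simp

lemma piMap_roots {d : ℕ} (u : Composition d) (x : Fin u.length → ℝ) :
    (PiMap u x).roots = Finset.univ.val.map (repVec u x) := by
  rw [piMap_eq_multiset, roots_multiset_prod_X_sub_C]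

lemma piMap_coeff {d : ℕ} (u : Composition d) (x : Fin u.length → ℝ) {i : ℕ} (hi : i ≤ d) :
    (PiMap u x).coeff (d - i) = (-1 : ℝ) ^ i * esym d i (repVec u x) := by
  rw [piMap_eq_multiset]
  have hcard : Multiset.card (Finset.univ.val.map (repVec u x)) = d := by simp
  have h1 : d - i ≤ Multiset.card (Finset.univ.val.map (repVec u x)) := by
    rw [hcard]; omega
  rw [Multiset.prod_X_sub_C_coeff _ h1, hcard]
  have h2 : d - (d - i) = i := by omega
  rw [h2, Finset.esymm_map_val]
  rfl

lemma esym_eq_coeff {d : ℕ} (u : Composition d) (x : Fin u.length → ℝ) {i : ℕ} (hi : i ≤ d) :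
    esym d i (repVec u x) = (-1 : ℝ) ^ i * (PiMap u x).coeff (d - i) := by
  rw [piMap_coeff u x hi, ← mul_assoc, ← pow_add, ← two_mul, pow_mul]
  norm_num

lemma continuous_esymRep {d : ℕ} (u : Composition d) (k : ℕ) :
    Continuous fun x : Fin u.length → ℝ => esym d k (repVec u x) := by
  unfold esym repVec
  exact continuous_finset_sum _ fun A _ =>
    continuous_finset_prod _ fun j _ => continuous_apply _

/-- telescoping: partial sums of consecutive differences of a strictly sorted list. -/
lemma zipWith_sub_take_sum : ∀ (L : List ℕ) (b : ℕ), L.Pairwise (· < ·) → (∀ a ∈ L, b ≤ a) →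
    ∀ k (hk : k < L.length),
      ((List.zipWith (· - ·) L (b :: L)).take (k + 1)).sum = L.get ⟨k, hk⟩ - b := by
  intro L
  induction L with
  | nil => intro b _ _ k hk; simp at hk
  | cons a L' ih =>
    intro b hsort hb k hk
    have hba : b ≤ a := hb a (by simp)
    have hsort' : L'.Pairwise (· < ·) := hsort.of_cons
    have ha' : ∀ c ∈ L', a ≤ c := fun c hc => le_of_lt (List.rel_of_pairwise_cons hsort hc)
    cases k with
    | zero => simp
    | succ k' =>
      have hk' : k' < L'.length := by simpa using hk
      have ih' := ih a hsort' ha' k' hk'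
      have hz : List.zipWith (· - ·) (a :: L') (b :: a :: L')
          = (a - b) :: List.zipWith (· - ·) L' (a :: L') := rfl
      rw [hz, List.take_succ_cons, List.sum_cons, ih']
      have hg : (a :: L').get ⟨k' + 1, hk⟩ = L'.get ⟨k', hk'⟩ := rfl
      rw [hg]
      have hac : a ≤ L'.get ⟨k', hk'⟩ := ha' _ (L'.get_mem _)
      omega

lemma zipWith_sub_pos : ∀ (L : List ℕ) (b : ℕ), L.Pairwise (· < ·) → (∀ a ∈ L, b < a) →
    ∀ m ∈ List.zipWith (· - ·) L (b :: L), 0 < m := by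
  intro L
  induction L with
  | nil => intro b _ _ m hm; simp at hm
  | cons a L' ih =>
    intro b hsort hb m hm
    simp only [List.zipWith] at hm
    rcases List.mem_cons.1 hm with h | h
    · have : b < a := hb a (by simp)
      omega
    · exact ih a hsort.of_cons (fun c hc => List.rel_of_pairwise_cons hsort hc) m h

/-- the composition of `d` whose partial sums are the elements of `S`. -/
def compOfSums (d : ℕ) (S : Finset ℕ) (h1 : ∀ m ∈ S, 0 < m ∧ m ≤ d) (hd : d ∈ S) :
    Composition d := by
  refine ⟨List.zipWith (· - ·) (S.sort (· ≤ ·)) (0 :: S.sort (· ≤ ·)), ?_, ?_⟩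
  · intro m hm
    exact zipWith_sub_pos _ 0 (S.sortedLT_sort.pairwise)
      (fun a ha => (h1 a (Finset.mem_sort _ |>.1 ha)).1) m hm
  · set L := S.sort (· ≤ ·) with hL
    have hlen : 0 < L.length := by
      rw [hL, Finset.length_sort]
      exact Finset.card_pos.2 ⟨d, hd⟩
    have hlenz : (List.zipWith (· - ·) L (0 :: L)).length = L.length := by
      simp [List.length_zipWith]
    have hmain := zipWith_sub_take_sum L 0 (S.sortedLT_sort.pairwise) (fun a _ => Nat.zero_le a)
      (L.length - 1) (by omega)
    rw [show L.length - 1 + 1 = L.length from by omega,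
      List.take_of_length_le (le_of_eq hlenz)] at hmain
    rw [hmain]
    have hmemd : d ∈ L := (Finset.mem_sort _).2 hd
    obtain ⟨j, hj, hjd⟩ := List.getElem_of_mem hmemd
    have hmono : ∀ p q (hp : p < L.length) (hq : q < L.length), p ≤ q →
        L.get ⟨p, hp⟩ ≤ L.get ⟨q, hq⟩ := by
      intro p q hp hq hpq
      rcases eq_or_lt_of_le hpq with h | h
      · subst h; rfl
      · exact le_of_lt (S.sortedLT_sort.strictMono_get (by exact h))
    have h1' : L.get ⟨j, hj⟩ ≤ L.get ⟨L.length - 1, by omega⟩ := hmono _ _ _ _ (by omega)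
    have h2' : L.get ⟨L.length - 1, by omega⟩ ≤ d :=
      (h1 _ ((Finset.mem_sort (α := ℕ) (· ≤ ·)).1 (L.get_mem ⟨L.length - 1, by omega⟩))).2
    have h3' : L.get ⟨L.length - 1, by omega⟩ = d := by
      have h4' : d ≤ L.get ⟨L.length - 1, by omega⟩ := by
        have hjd' : L.get ⟨j, hj⟩ = d := hjd
        rw [← hjd']; exact h1'
      omega
    omega

lemma compOfSums_length (d : ℕ) (S : Finset ℕ) (h1 : ∀ m ∈ S, 0 < m ∧ m ≤ d) (hd : d ∈ S) :
    (compOfSums d S h1 hd).length = S.card := by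
  simp [compOfSums, Composition.length, List.length_zipWith, Finset.length_sort]

lemma compOfSums_sizeUpTo (d : ℕ) (S : Finset ℕ) (h1 : ∀ m ∈ S, 0 < m ∧ m ≤ d) (hd : d ∈ S)
    (k : ℕ) (hk : k < S.card) :
    (compOfSums d S h1 hd).sizeUpTo (k + 1)
      = (S.sort (· ≤ ·)).get ⟨k, by rwa [Finset.length_sort]⟩ := by
  have hmain := zipWith_sub_take_sum (S.sort (· ≤ ·)) 0 (S.sortedLT_sort.pairwise)
    (fun a _ => Nat.zero_le a) k (by rwa [Finset.length_sort])
  simpa [compOfSums, Composition.sizeUpTo] using hmain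

lemma compOfSums_sums (d : ℕ) (S : Finset ℕ) (h1 : ∀ m ∈ S, 0 < m ∧ m ≤ d) (hd : d ∈ S) :
    (compOfSums d S h1 hd).sums = S := by
  ext m
  rw [mem_sums_iff]
  constructor
  · rintro ⟨i, hi, hieq⟩
    have hi' : i < S.card := by rwa [compOfSums_length] at hi
    rw [compOfSums_sizeUpTo d S h1 hd i hi'] at hieq
    rw [← hieq]
    exact (Finset.mem_sort _).1 (List.get_mem _ _)
  · intro hm
    have hmem : m ∈ S.sort (· ≤ ·) := (Finset.mem_sort _).2 hm
    obtain ⟨i, hi, hieq⟩ := List.getElem_of_mem hmem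
    have hi' : i < S.card := by rwa [Finset.length_sort] at hi
    refine ⟨i, by rwa [compOfSums_length], ?_⟩
    rw [compOfSums_sizeUpTo d S h1 hd i hi']
    exact hieq

/-- Lemma N : from a coarser composition `w ≤ u` and a (monotone) vector `a` for `w`, get a
monotone vector `x` for `u` with the same repeated vector. -/
lemma exists_rep_of_compLe {d : ℕ} {w u : Composition d} (h : CompLe w u)
    (a : Fin w.length → ℝ) (ha : Monotone a) :
    ∃ x : Fin u.length → ℝ, Monotone x ∧ repVec u x = repVec w a := by
  have hlt : ∀ i : Fin u.length, u.sizeUpTo i < d := fun i =>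
    lt_of_lt_of_le (u.sizeUpTo_strict_mono i.2) (u.sizeUpTo_le _)
  refine ⟨fun i => a (w.index ⟨u.sizeUpTo i, hlt i⟩), ?_, ?_⟩
  · intro i i' hii'
    refine ha (index_mono w ?_)
    exact u.monotone_sizeUpTo (by exact_mod_cast hii')
  · funext j
    simp only [repVec]
    congr 1
    exact index_blockStart h j _ rfl

/-- Lemma M : merging blocks of `u` on which a monotone `x` is constant. -/
lemma exists_strict_merge {d : ℕ} (hd : 0 < d) (u : Composition d)
    (x : Fin u.length → ℝ) (hx : Monotone x) :
    ∃ w : Composition d, CompLe w u ∧ ∃ a : Fin w.length → ℝ, StrictMono a ∧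
      repVec w a = repVec u x := by
  classical
  set Y : ℕ → ℝ := fun n => x (u.index ⟨min n (d-1), by omega⟩) with hYdef
  have hYfin : ∀ (n : ℕ) (hn : n < d), Y n = x (u.index ⟨n, hn⟩) := by
    intro n hn
    have hfin : (⟨min n (d-1), by omega⟩ : Fin d) = ⟨n, hn⟩ := by
      apply Fin.ext
      show min n (d-1) = n
      omega
    show x (u.index ⟨min n (d-1), by omega⟩) = x (u.index ⟨n, hn⟩)
    rw [hfin]
  have hYmono : Monotone Y := by
    intro n n' hnn'
    refine hx (index_mono u ?_)
    show (⟨min n (d-1), by omega⟩ : Fin d) ≤ ⟨min n' (d-1), by omega⟩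
    simp only [Fin.mk_le_mk]
    omega
  have hkeepd : ∀ m ∈ u.sums, 0 < m ∧ m ≤ d := by
    intro m hm
    obtain ⟨i, hi, hieq⟩ := mem_sums_iff.1 hm
    constructor
    · have h1 := u.sizeUpTo_succ hi
      have hb := u.one_le_blocks' hi
      omega
    · exact hieq ▸ u.sizeUpTo_le _
  set S : Finset ℕ := u.sums.filter (fun m => m = d ∨ Y (m-1) < Y m) with hSdef
  have hS1 : ∀ m ∈ S, 0 < m ∧ m ≤ d := fun m hm => hkeepd m (Finset.mem_filter.1 hm).1
  have hdsums : d ∈ u.sums := by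
    have hlpos : 0 < u.length := u.length_pos_of_pos hd
    refine mem_sums_iff.2 ⟨u.length - 1, by omega, ?_⟩
    rw [show u.length - 1 + 1 = u.length from by omega, u.sizeUpTo_length]
  have hdS : d ∈ S := Finset.mem_filter.2 ⟨hdsums, Or.inl rfl⟩
  set w := compOfSums d S hS1 hdS with hwdef
  have hwsums : w.sums = S := compOfSums_sums d S hS1 hdS
  -- Y is constant on each w-block
  have hconst : ∀ (j : Fin d) (m : ℕ), w.sizeUpTo (w.index j) ≤ m → m ≤ (j:ℕ) →
      Y (w.sizeUpTo (w.index j)) = Y m := by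
    intro j m
    induction m with
    | zero =>
      intro h1 h2
      have h3 : w.sizeUpTo (w.index j) = 0 := by omega
      rw [h3]
    | succ m ih =>
      intro h1 h2
      rcases eq_or_lt_of_le h1 with he | hlt
      · rw [he]
      · have hm1 : w.sizeUpTo (w.index j) ≤ m := by omega
        have hmj : m ≤ (j:ℕ) := by omega
        rw [ih hm1 hmj]
        have hmd : m + 1 < d := by have := j.2; omega
        by_cases hsum : (m+1) ∈ u.sums
        · have hnotS : (m+1) ∉ S := by
            intro hmem
            rw [← hwsums] at hmem
            obtain ⟨i', hi', hieq⟩ := mem_sums_iff.1 hmem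
            have ha1 : i' + 1 ≤ (w.index j : ℕ) := (le_index_iff w).2 (by rw [hieq]; omega)
            have ha2 := w.monotone_sizeUpTo ha1
            rw [hieq] at ha2
            omega
          have hnk : ¬((m+1) = d ∨ Y (m+1-1) < Y (m+1)) := by
            intro hk
            exact hnotS (Finset.mem_filter.2 ⟨hsum, hk⟩)
          push_neg at hnk
          have hnk2 := hnk.2
          simp only [Nat.add_sub_cancel] at hnk2
          exact le_antisymm (hYmono (Nat.le_succ m)) hnk2
        · have hmd' : m < d := by omega
          have hidx : u.index ⟨m, hmd'⟩ = u.index ⟨m+1, hmd⟩ := by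
            by_contra hne
            have hle : u.index ⟨m, hmd'⟩ ≤ u.index ⟨m+1, hmd⟩ :=
              index_mono u (by simp [Fin.mk_le_mk])
            have hltF : u.index ⟨m, hmd'⟩ < u.index ⟨m+1, hmd⟩ := lt_of_le_of_ne hle hne
            have hlt' : (u.index ⟨m, hmd'⟩ : ℕ) + 1 ≤ (u.index ⟨m+1, hmd⟩ : ℕ) := hltF
            apply hsum
            refine mem_sums_iff.2 ⟨u.index ⟨m, hmd'⟩, (u.index ⟨m, hmd'⟩).2, ?_⟩
            have hub : m < u.sizeUpTo ((u.index ⟨m, hmd'⟩ : ℕ) + 1) :=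
              u.lt_sizeUpTo_index_succ ⟨m, hmd'⟩
            have hlb : u.sizeUpTo ((u.index ⟨m, hmd'⟩ : ℕ) + 1) ≤ m + 1 :=
              le_trans (u.monotone_sizeUpTo hlt') (u.sizeUpTo_index_le ⟨m+1, hmd⟩)
            omega
          rw [hYfin m hmd', hYfin (m+1) hmd, hidx]
  set a : Fin w.length → ℝ := fun i => Y (w.sizeUpTo i) with hadef
  have ha : StrictMono a := by
    intro i i' hii'
    have hii'' : (i:ℕ) + 1 ≤ (i':ℕ) := hii'
    have hmS : w.sizeUpTo ((i:ℕ)+1) ∈ S := by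
      rw [← hwsums]; exact mem_sums_iff.2 ⟨i, i.2, rfl⟩
    have hkeep := (Finset.mem_filter.1 hmS).2
    have hmd : w.sizeUpTo ((i:ℕ)+1) < d := by
      have h1' : w.sizeUpTo ((i:ℕ)+1) ≤ w.sizeUpTo (i':ℕ) := w.monotone_sizeUpTo hii''
      have h2' : w.sizeUpTo (i':ℕ) < w.sizeUpTo ((i':ℕ)+1) := w.sizeUpTo_strict_mono i'.2
      have h3' := w.sizeUpTo_le ((i':ℕ)+1)
      omega
    rcases hkeep with he | hlt
    · omega
    · have hs1 : w.sizeUpTo (i:ℕ) ≤ w.sizeUpTo ((i:ℕ)+1) - 1 := by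
        have := w.sizeUpTo_strict_mono i.2; omega
      calc a i = Y (w.sizeUpTo (i:ℕ)) := rfl
        _ ≤ Y (w.sizeUpTo ((i:ℕ)+1) - 1) := hYmono hs1
        _ < Y (w.sizeUpTo ((i:ℕ)+1)) := hlt
        _ ≤ Y (w.sizeUpTo (i':ℕ)) := hYmono (w.monotone_sizeUpTo hii'')
        _ = a i' := rfl
  refine ⟨w, ?_, a, ha, ?_⟩
  · show w.sums ⊆ u.sums
    rw [hwsums, hSdef]
    exact Finset.filter_subset _ _
  · funext j
    have h1' := w.sizeUpTo_index_le j
    have h2' := hconst j (j:ℕ) h1' le_rfl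
    show a (w.index j) = x (u.index j)
    calc a (w.index j) = Y (w.sizeUpTo (w.index j)) := rfl
      _ = Y (j:ℕ) := h2'
      _ = x (u.index j) := by rw [hYfin (j:ℕ) j.2]

/-- the top coefficients of `PiMap u x` agree with `f` for `x ∈ Vset`. -/
lemma piMap_coeff_agree {d s : ℕ} (hsd : s ≤ d) (f : ℝ[X]) (hmon : f.Monic)
    (hdeg : f.natDegree = d) (u : Composition d) {x : Fin u.length → ℝ}
    (hxV : x ∈ Vset d s f u) : ∀ j, d - s ≤ j → (PiMap u x).coeff j = f.coeff j := by
  intro j hj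
  rcases lt_trichotomy j d with h1 | h1 | h1
  · have hi1 : 1 ≤ d - j := by omega
    have hi2 : d - j ≤ s := by omega
    have hdj : d - (d - j) = j := by omega
    calc (PiMap u x).coeff j = (PiMap u x).coeff (d - (d - j)) := by rw [hdj]
      _ = (-1:ℝ)^(d-j) * esym d (d-j) (repVec u x) := piMap_coeff u x (by omega)
      _ = (-1:ℝ)^(d-j) * ((-1:ℝ)^(d-j) * f.coeff (d - (d-j))) := by rw [hxV (d-j) hi1 hi2]
      _ = f.coeff j := by
          rw [hdj, ← mul_assoc, ← pow_add, ← two_mul, pow_mul]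
          norm_num
  · have ha := (piMap_monic u x).coeff_natDegree
    rw [piMap_natDegree u x] at ha
    have hb := hmon.coeff_natDegree
    rw [hdeg] at hb
    rw [h1, ha, hb]
  · rw [coeff_eq_zero_of_natDegree_lt (by rw [piMap_natDegree]; omega),
      coeff_eq_zero_of_natDegree_lt (by rw [hdeg]; omega)]

/-- Lemma B : the image of `Vset ∩ Kset` under `PiMap` lies in the stratum. -/
lemma piMap_mem_HSu {d s : ℕ} (hd : 1 ≤ d) (hsd : s ≤ d) (f : ℝ[X]) (hmon : f.Monic)
    (hdeg : f.natDegree = d) (u : Composition d) {x : Fin u.length → ℝ}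
    (hxV : x ∈ Vset d s f u) (hxK : x ∈ Kset u.length) : PiMap u x ∈ HSu d s f u := by
  obtain ⟨w, hwle, a, haS, hrep⟩ := exists_strict_merge hd u x hxK
  refine ⟨⟨piMap_monic u x, piMap_natDegree u x, ?_, piMap_coeff_agree hsd f hmon hdeg u hxV⟩,
    w, hwle, a, haS, ?_⟩
  · rw [Hyperbolic, piMap_roots, piMap_natDegree]
    simp
  · show PiMap u x = ∏ i, (X - C (a i)) ^ w.blocksFun i
    rw [show (∏ i, (X - C (a i)) ^ w.blocksFun i) = PiMap w a from rfl,
      piMap_eq_prod, piMap_eq_prod, hrep]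

/-- Lemma C : every element of the stratum is `PiMap u x` for some `x ∈ Vset ∩ Kset`. -/
lemma mem_HSu_exists {d s : ℕ} (hsd : s ≤ d) (f : ℝ[X]) (u : Composition d)
    {h : ℝ[X]} (hh : h ∈ HSu d s f u) :
    ∃ x : Fin u.length → ℝ, (x ∈ Vset d s f u ∧ x ∈ Kset u.length) ∧ PiMap u x = h := by
  obtain ⟨⟨hmonh, hdegh, hhyph, hcoeff⟩, w, hwle, a, haS, heq⟩ := hh
  obtain ⟨x, hxmono, hxrep⟩ := exists_rep_of_compLe hwle a haS.monotone
  have hPi : PiMap u x = h := by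
    rw [heq]
    show PiMap u x = ∏ i, (X - C (a i)) ^ w.blocksFun i
    rw [show (∏ i, (X - C (a i)) ^ w.blocksFun i) = PiMap w a from rfl,
      piMap_eq_prod, piMap_eq_prod, hxrep]
  refine ⟨x, ⟨?_, hxmono⟩, hPi⟩
  intro i hi1 hi2
  have hid : i ≤ d := le_trans hi2 hsd
  rw [esym_eq_coeff u x hid, hPi, hcoeff (d - i) (by omega)]

/-- Lemma D : injectivity. -/
lemma phi_inj {d s : ℕ} (hsd : s ≤ d) (f : ℝ[X]) (hmon : f.Monic) (hdeg : f.natDegree = d)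
    (u : Composition d) {x y : Fin u.length → ℝ}
    (hxV : x ∈ Vset d s f u) (hxK : x ∈ Kset u.length)
    (hyV : y ∈ Vset d s f u) (hyK : y ∈ Kset u.length)
    (hxy : coeffVec d s (PiMap u x) = coeffVec d s (PiMap u y)) : x = y := by
  have hlt : ∀ i : Fin u.length, u.sizeUpTo i < d := fun i =>
    lt_of_lt_of_le (u.sizeUpTo_strict_mono i.2) (u.sizeUpTo_le _)
  have hPeq : PiMap u x = PiMap u y := by
    apply Polynomial.ext
    intro k
    rcases lt_or_ge k (d - s) with hk | hk
    · have hks : d - s - 1 - k < d - s := by omega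
      have hco := congrFun hxy ⟨d - s - 1 - k, hks⟩
      simpa [coeffVec, show d - s - 1 - (d - s - 1 - k) = k from by omega] using hco
    · rw [piMap_coeff_agree hsd f hmon hdeg u hxV k hk,
        piMap_coeff_agree hsd f hmon hdeg u hyV k hk]
  have hroots : Multiset.map (repVec u x) Finset.univ.val
      = Multiset.map (repVec u y) Finset.univ.val := by
    rw [← piMap_roots, ← piMap_roots, hPeq]
  have huniv : (Finset.univ.val : Multiset (Fin d)) = ↑(List.finRange d) := rfl
  have hlx : ((List.ofFn (repVec u x) : List ℝ) : Multiset ℝ)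
      = ((List.ofFn (repVec u y) : List ℝ) : Multiset ℝ) := by
    rw [List.ofFn_eq_map, List.ofFn_eq_map, ← Multiset.map_coe, ← Multiset.map_coe, ← huniv]
    exact hroots
  have hperm := Multiset.coe_eq_coe.1 hlx
  have hsx : (List.ofFn (repVec u x)).SortedLE :=
    List.sortedLE_ofFn_iff.2 (hxK.comp (index_mono u))
  have hsy : (List.ofFn (repVec u y)).SortedLE :=
    List.sortedLE_ofFn_iff.2 (hyK.comp (index_mono u))
  have heqlist := hperm.eq_of_sortedLE hsx hsy
  have hfn : repVec u x = repVec u y := List.ofFn_inj.1 heqlist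
  funext i
  have hgi : u.index ⟨u.sizeUpTo i, hlt i⟩ = i := index_sizeUpTo u i _ rfl
  have hco := congrFun hfn ⟨u.sizeUpTo i, hlt i⟩
  simpa [repVec, hgi] using hco

end AuxLemmas

/-- For a composition `u` of `d` with `ℓ(u) = l`, the stratum `H_s^u(f)` (identified with
a subset of `ℝ^{d-s}` via the last `d-s` coefficients) is closed in `ℝ^{d-s}`, and
`Π_u : V_s^u(f) ∩ K_l → H_s^u(f)` is a homeomorphism. -/
theorem stratum_closed_and_PiMap_homeomorph (d s : ℕ) (hd : 1 ≤ d) (hsd : s ≤ d)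
    (f : ℝ[X]) (hmon : f.Monic) (hdeg : f.natDegree = d) (hhyp : Hyperbolic f)
    (u : Composition d) :
    IsClosed (strataSet d s f u) ∧
    ∃ e : ↥(Vset d s f u ∩ Kset u.length) ≃ₜ ↥(strataSet d s f u),
      ∀ x : ↥(Vset d s f u ∩ Kset u.length),
        (e x : Fin (d - s) → ℝ) = coeffVec d s (PiMap u (x : Fin u.length → ℝ)) := by
  classical
  set Phi : (Fin u.length → ℝ) → (Fin (d - s) → ℝ) := fun x => coeffVec d s (PiMap u x)
    with hPhidef
  have hPhicont : Continuous Phi := by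
    have hrw : Phi = fun x (i : Fin (d-s)) =>
        (-1 : ℝ)^(s+1+(i:ℕ)) * esym d (s+1+(i:ℕ)) (repVec u x) := by
      funext x i
      have hi : s + 1 + (i:ℕ) ≤ d := by have := i.2; omega
      have hsub : d - s - 1 - (i:ℕ) = d - (s + 1 + (i:ℕ)) := by omega
      show (PiMap u x).coeff (d - s - 1 - (i:ℕ)) = _
      rw [hsub, piMap_coeff u x hi]
    rw [hrw]
    exact continuous_pi fun i => continuous_const.mul (continuous_esymRep u _)
  have hVclosed : IsClosed (Vset d s f u) := by
    have hV : Vset d s f u = ⋂ (i : ℕ), {x : Fin u.length → ℝ |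
        1 ≤ i → i ≤ s → esym d i (repVec u x) = (-1:ℝ)^i * f.coeff (d - i)} := by
      ext x
      simp only [Vset, Set.mem_setOf_eq, Set.mem_iInter]
    rw [hV]
    refine isClosed_iInter fun i => ?_
    by_cases h1 : 1 ≤ i ∧ i ≤ s
    · have heq : {x : Fin u.length → ℝ |
          1 ≤ i → i ≤ s → esym d i (repVec u x) = (-1:ℝ)^i * f.coeff (d - i)}
          = {x | esym d i (repVec u x) = (-1:ℝ)^i * f.coeff (d - i)} := by
        ext x
        simp [h1.1, h1.2]
      rw [heq]
      exact isClosed_eq (continuous_esymRep u i) continuous_const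
    · have heq : {x : Fin u.length → ℝ |
          1 ≤ i → i ≤ s → esym d i (repVec u x) = (-1:ℝ)^i * f.coeff (d - i)}
          = Set.univ := by
        ext x
        simp only [Set.mem_setOf_eq, Set.mem_univ, iff_true]
        intro hi1 hi2
        exact absurd ⟨hi1, hi2⟩ h1
      rw [heq]
      exact isClosed_univ
  have hKclosed : IsClosed (Kset u.length) := by
    have hK : Kset u.length = ⋂ (p : Fin u.length × Fin u.length) (_ : p.1 ≤ p.2),
        {x : Fin u.length → ℝ | x p.1 ≤ x p.2} := by
      ext x
      simp only [Kset, Set.mem_setOf_eq, Set.mem_iInter]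
      exact ⟨fun hm p hp => hm hp, fun hm a b hab => hm (a,b) hab⟩
    rw [hK]
    exact isClosed_iInter fun p => isClosed_iInter fun _ =>
      isClosed_le (continuous_apply _) (continuous_apply _)
  have hSSclosed : IsClosed (Vset d s f u ∩ Kset u.length) := hVclosed.inter hKclosed
  set T : ↥(Vset d s f u ∩ Kset u.length) → (Fin (d-s) → ℝ) := fun p => Phi p.val with hTdef
  have hTcont : Continuous T := hPhicont.comp continuous_subtype_val
  have hTinj : Function.Injective T := by
    rintro ⟨x, hx⟩ ⟨y, hy⟩ hxy
    exact Subtype.ext (phi_inj hsd f hmon hdeg u hx.1 hx.2 hy.1 hy.2 hxy)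
  have hrange : Set.range T = strataSet d s f u := by
    ext p
    constructor
    · rintro ⟨⟨x, hx⟩, rfl⟩
      exact ⟨PiMap u x, piMap_mem_HSu hd hsd f hmon hdeg u hx.1 hx.2, rfl⟩
    · rintro ⟨h, hh, rfl⟩
      obtain ⟨x, hxS, hPi⟩ := mem_HSu_exists hsd f u hh
      refine ⟨⟨x, hxS⟩, ?_⟩
      show coeffVec d s (PiMap u x) = coeffVec d s h
      rw [hPi]
  have hbound : ∀ ⦃Q : Set (Fin (d-s) → ℝ)⦄, IsCompact Q → IsCompact (T ⁻¹' Q) := by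
    intro Q hQ
    obtain ⟨R, hR⟩ := hQ.isBounded.subset_closedBall 0
    set Cf : ℝ := ∑ j ∈ Finset.range (d+1), |f.coeff j| with hCf
    have hCf0 : ∀ j ≤ d, |f.coeff j| ≤ Cf := by
      intro j hj
      rw [hCf]
      exact Finset.single_le_sum (f := fun j => |f.coeff j|) (fun _ _ => abs_nonneg _)
        (Finset.mem_range.2 (by omega))
    have hc0 : (0:ℝ) ≤ max (max R Cf) 0 := le_max_right _ _
    have key : ∀ p : ↥(Vset d s f u ∩ Kset u.length), T p ∈ Q →
        ∀ i, |p.val i| ≤ max (max R Cf) 0 + 1 := by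
      rintro ⟨x, hx⟩ hTp i
      have hne : PiMap u x ≠ 0 := (piMap_monic u x).ne_zero
      have hmem : x i ∈ (PiMap u x).roots := by
        rw [piMap_roots]
        have h0i : (0:ℕ) < u.blocksFun i := u.one_le_blocksFun i
        refine Multiset.mem_map.2 ⟨u.embedding i ⟨0, h0i⟩, by simp, ?_⟩
        show x (u.index (u.embedding i ⟨0, h0i⟩)) = x i
        rw [u.index_embedding]
      have hroot : (PiMap u x).IsRoot (x i) := (Polynomial.mem_roots hne).1 hmem
      have hcb := Polynomial.IsRoot.norm_lt_cauchyBound hne hroot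
      unfold Polynomial.cauchyBound at hcb
      rw [(piMap_monic u x).leadingCoeff, piMap_natDegree] at hcb
      simp only [nnnorm_one, div_one] at hcb
      have hsup : ((Finset.range d).sup (fun j => ‖(PiMap u x).coeff j‖₊))
          ≤ Real.toNNReal (max (max R Cf) 0) := by
        apply Finset.sup_le
        intro j hj
        rw [Finset.mem_range] at hj
        have hb : |(PiMap u x).coeff j| ≤ max (max R Cf) 0 := by
          rcases lt_or_ge j (d - s) with hjs | hjs
          · have hdsj : d - s - 1 - j < d - s := by omega
            have hcoord : (PiMap u x).coeff j = T ⟨x, hx⟩ ⟨d - s - 1 - j, hdsj⟩ := by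
              show _ = coeffVec d s (PiMap u x) _
              show _ = (PiMap u x).coeff (d - s - 1 - (d - s - 1 - j))
              congr 1
              omega
            have hQball := hR hTp
            rw [Metric.mem_closedBall, dist_zero_right] at hQball
            have hpn := norm_le_pi_norm (T ⟨x, hx⟩) ⟨d - s - 1 - j, hdsj⟩
            rw [hcoord]
            calc |T ⟨x,hx⟩ ⟨d - s - 1 - j, hdsj⟩| ≤ ‖T ⟨x,hx⟩‖ := by
                  simpa [Real.norm_eq_abs] using hpn
              _ ≤ R := hQball
              _ ≤ max (max R Cf) 0 := le_max_of_le_left (le_max_left _ _)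
          · rw [piMap_coeff_agree hsd f hmon hdeg u hx.1 j hjs]
            exact le_max_of_le_left (le_max_of_le_right (hCf0 j (by omega)))
        rw [← NNReal.coe_le_coe, coe_nnnorm, Real.norm_eq_abs, Real.coe_toNNReal _ hc0]
        exact hb
      have hfin' : ‖x i‖₊ ≤ Real.toNNReal (max (max R Cf) 0) + 1 :=
        le_trans (le_of_lt hcb) (add_le_add_left hsup 1)
      have hfin'' := NNReal.coe_le_coe.2 hfin'
      rw [NNReal.coe_add, Real.coe_toNNReal _ hc0, NNReal.coe_one] at hfin''
      calc |x i| = ‖x i‖ := (Real.norm_eq_abs _).symm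
        _ ≤ max (max R Cf) 0 + 1 := hfin''
    rw [Subtype.isCompact_iff]
    apply Metric.isCompact_iff_isClosed_bounded.2
    constructor
    · have himg : Subtype.val '' (T ⁻¹' Q)
          = (Vset d s f u ∩ Kset u.length) ∩ (Phi ⁻¹' Q) := by
        ext z
        constructor
        · rintro ⟨⟨x,hx⟩, hmem, rfl⟩
          exact ⟨hx, hmem⟩
        · rintro ⟨hz, hq⟩
          exact ⟨⟨z, hz⟩, hq, rfl⟩
      rw [himg]
      exact hSSclosed.inter (hQ.isClosed.preimage hPhicont)
    · apply (Metric.isBounded_closedBall (x := (0 : Fin u.length → ℝ))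
        (r := max (max R Cf) 0 + 1)).subset
      rintro z ⟨⟨x,hx⟩, hmem, rfl⟩
      rw [Metric.mem_closedBall, dist_zero_right]
      refine (pi_norm_le_iff_of_nonneg (by linarith)).2 fun i => ?_
      rw [Real.norm_eq_abs]
      exact key ⟨x,hx⟩ hmem i
  have hproper : IsProperMap T := isProperMap_iff_isCompact_preimage.2 ⟨hTcont, hbound⟩
  have hemb : Topology.IsClosedEmbedding T :=
    Topology.IsClosedEmbedding.of_continuous_injective_isClosedMap hTcont hTinj
      hproper.isClosedMap
  constructor
  · rw [← hrange]
    exact hemb.isClosed_range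
  · exact ⟨hemb.toIsEmbedding.toHomeomorph.trans (Homeomorph.setCongr hrange),
      fun x => rfl⟩
end
end

section
/- If u is a composition of d with ℓ(u) ≤ s, then the stratum H_s^u(f) contains at most one polynomial. -/
noncomputable section

open Polynomial

namespace HypAux

/-- number of elements of `M` that are `≤ t`. -/
def cnt (M : Multiset ℝ) (t : ℝ) : ℕ := (M.filter (· ≤ t)).card

/-- `k`-th power sum (moment) of a multiset. -/
def msum (k : ℕ) (M : Multiset ℝ) : ℝ := (M.map (· ^ k)).sum

lemma cnt_mono (M : Multiset ℝ) : Monotone (cnt M) := by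
  intro x y hxy
  exact Multiset.card_le_card (Multiset.monotone_filter_right M
    (fun r (hr : r ≤ x) => le_trans hr hxy))

lemma cnt_congr {M : Multiset ℝ} {t t' : ℝ} (h : t ≤ t')
    (hw : ∀ r ∈ M, ¬(t < r ∧ r ≤ t')) : cnt M t' = cnt M t := by
  unfold cnt
  congr 1
  apply Multiset.filter_congr
  intro r hr
  constructor
  · intro hrt'
    by_contra hrt
    exact hw r hr ⟨lt_of_not_ge hrt, hrt'⟩
  · intro hrt; exact le_trans hrt h

lemma cnt_eq_card {M : Multiset ℝ} {t : ℝ} (h : ∀ r ∈ M, r ≤ t) :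
    cnt M t = Multiset.card M := by
  unfold cnt
  rw [Multiset.filter_eq_self.mpr h]

lemma cnt_eq_zero {M : Multiset ℝ} {t : ℝ} (h : ∀ r ∈ M, ¬ r ≤ t) :
    cnt M t = 0 := by
  unfold cnt
  rw [Multiset.filter_eq_nil.mpr h, Multiset.card_zero]

lemma ext_of_cnt {M₁ M₂ : Multiset ℝ} (h : ∀ t, cnt M₁ t = cnt M₂ t) : M₁ = M₂ := by
  classical
  have key : ∀ M : Multiset ℝ, ∀ a : ℝ,
      M.count a + (M.filter (· < a)).card = cnt M a := by
    intro M a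
    unfold cnt
    rw [Multiset.count_eq_card_filter_eq]
    have h1 : (M.filter (a = ·)) + (M.filter (· < a)) =
        M.filter (fun r => a = r ∨ r < a) := by
      rw [Multiset.filter_add_filter]
      have h2 : M.filter (fun r => a = r ∧ r < a) = 0 := by
        apply Multiset.filter_eq_nil.mpr
        rintro r _ ⟨rfl, hr2⟩
        exact lt_irrefl _ hr2
      rw [h2, add_zero]
    rw [← Multiset.card_add, h1]
    congr 1
    apply Multiset.filter_congr
    intro r _
    constructor
    · rintro (rfl | hlt)
      · exact le_rfl
      · exact le_of_lt hlt
    · intro hle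
      rcases eq_or_lt_of_le hle with rfl | hlt
      · exact Or.inl rfl
      · exact Or.inr hlt
  have hlt : ∀ a : ℝ, (M₁.filter (· < a)).card = (M₂.filter (· < a)).card := by
    intro a
    set F := (M₁ + M₂).toFinset.filter (· < a) with hF
    by_cases hFne : F.Nonempty
    · set b := F.max' hFne with hb
      have hbF : b ∈ F := F.max'_mem hFne
      have hba : b < a := (Finset.mem_filter.mp hbF).2
      have heq : ∀ M : Multiset ℝ, (M ≤ M₁ + M₂ → (M.filter (· < a)) = (M.filter (· ≤ b))) := by
        intro M hM
        apply Multiset.filter_congr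
        intro r hr
        constructor
        · intro hra
          apply Finset.le_max'
          rw [hF, Finset.mem_filter, Multiset.mem_toFinset]
          exact ⟨Multiset.mem_of_le hM hr, hra⟩
        · intro hrb; exact lt_of_le_of_lt hrb hba
      rw [heq M₁ (Multiset.le_add_right _ _), heq M₂ (Multiset.le_add_left _ _)]
      exact h b
    · have hnone : ∀ M : Multiset ℝ, M ≤ M₁ + M₂ → M.filter (· < a) = 0 := by
        intro M hM
        apply Multiset.filter_eq_nil.mpr
        intro r hr hra
        apply hFne
        refine ⟨r, ?_⟩
        rw [hF, Finset.mem_filter, Multiset.mem_toFinset]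
        exact ⟨Multiset.mem_of_le hM hr, hra⟩
      rw [hnone M₁ (Multiset.le_add_right _ _), hnone M₂ (Multiset.le_add_left _ _)]
  ext a
  have k1 := key M₁ a
  have k2 := key M₂ a
  have := h a
  have := hlt a
  omega

lemma msum_zero (M : Multiset ℝ) : msum 0 M = (Multiset.card M : ℝ) := by
  simp [msum]

lemma newton_rec (M : Multiset ℝ) (k : ℕ) (hk : 0 < k) :
    msum k M = (-1) ^ (k + 1) * k * M.esymm k -
      ∑ a ∈ (Finset.HasAntidiagonal.antidiagonal k).filter (fun a => a.1 ∈ Set.Ioo 0 k),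
        (-1) ^ a.1 * M.esymm a.1 * msum a.2 M := by
  classical
  obtain ⟨l, rfl⟩ : ∃ l : List ℝ, (l : Multiset ℝ) = M := ⟨M.toList, M.coe_toList⟩
  have huniv : (Multiset.map (fun i : Fin l.length => l.get i) Finset.univ.val)
      = (l : Multiset ℝ) := by
    rw [Fin.univ_val_map, List.ofFn_get]
  have hps : ∀ j : ℕ, (MvPolynomial.aeval (fun i : Fin l.length => l.get i))
      (MvPolynomial.psum (Fin l.length) ℝ j) = msum j (l : Multiset ℝ) := by
    intro j
    rw [MvPolynomial.psum, map_sum]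
    simp only [map_pow, MvPolynomial.aeval_X]
    rw [msum, ← huniv, Fin.univ_val_map, Multiset.map_coe, Multiset.sum_coe,
      List.map_ofFn, ← List.sum_ofFn (f := fun i => l.get i ^ j)]
    rfl
  have hes : ∀ j : ℕ, (MvPolynomial.aeval (fun i : Fin l.length => l.get i))
      (MvPolynomial.esymm (Fin l.length) ℝ j) = (l : Multiset ℝ).esymm j := by
    intro j
    rw [MvPolynomial.aeval_esymm_eq_multiset_esymm, huniv]
  have key := congrArg (MvPolynomial.aeval (fun i : Fin l.length => l.get i))
    (MvPolynomial.psum_eq_mul_esymm_sub_sum (Fin l.length) ℝ k hk)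
  rw [map_sub, map_mul, map_mul, map_pow, map_neg, map_one, map_natCast, map_sum] at key
  rw [hps, hes] at key
  rw [key]
  congr 1
  apply Finset.sum_congr rfl
  intro a _
  rw [map_mul, map_mul, map_pow, map_neg, map_one, hps, hes]

lemma msum_eq_of_esymm_eq (M₁ M₂ : Multiset ℝ) (s : ℕ)
    (hes : ∀ j, 1 ≤ j → j ≤ s → M₁.esymm j = M₂.esymm j)
    (hcard : Multiset.card M₁ = Multiset.card M₂) :
    ∀ k, k ≤ s → msum k M₁ = msum k M₂ := by
  intro k
  induction k using Nat.strong_induction_on with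
  | _ k ih =>
    intro hks
    rcases Nat.eq_zero_or_pos k with rfl | hpos
    · rw [msum_zero, msum_zero, hcard]
    · rw [newton_rec _ _ hpos, newton_rec _ _ hpos, hes k hpos hks]
      congr 1
      apply Finset.sum_congr rfl
      intro a ha
      simp only [Finset.mem_filter, Finset.HasAntidiagonal.mem_antidiagonal, Set.mem_Ioo] at ha
      rw [hes a.1 ha.2.1 (by omega), ih a.2 (by omega) (by omega)]
/-- value of the step function described by a descending list of (point, value) pairs. -/
def Glist : List (ℝ × ℤ) → ℝ → ℤ
  | [], _ => 0
  | (z, v) :: l, t => if z ≤ t then v else Glist l t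

/-- the list of sign flips: triples (root, constraint point, value). -/
def build : ℤ → ℝ → List (ℝ × ℤ) → List (ℝ × ℝ × ℤ)
  | _, _, [] => []
  | s, pz, (z, v) :: l => if s * v < 0 then (pz, z, v) :: build (-s) z l else build s z l

/-- sign of the first nonzero value in the list. -/
def firstSign : List (ℝ × ℤ) → ℤ
  | [] => 1
  | (_, v) :: l => if v = 0 then firstSign l else if 0 < v then 1 else -1

lemma firstSign_pm (l : List (ℝ × ℤ)) : firstSign l = 1 ∨ firstSign l = -1 := by
  induction l with
  | nil => exact Or.inl rfl
  | cons hd tl ih =>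
    obtain ⟨z, v⟩ := hd
    by_cases hv : v = 0
    · simpa [firstSign, hv] using ih
    · by_cases hv' : 0 < v
      · exact Or.inl (by simp [firstSign, hv, hv'])
      · exact Or.inr (by simp [firstSign, hv, hv'])

lemma build_mem_le : ∀ (l : List (ℝ × ℤ)) (s : ℤ) (pz : ℝ),
    List.Pairwise (fun a b => b.1 < a.1) l → (∀ p ∈ l, p.1 < pz) →
    ∀ x ∈ build s pz l, x.1 ≤ pz := by
  intro l
  induction l with
  | nil => intro s pz _ _ x hx; simp [build] at hx
  | cons hd tl ih =>
    obtain ⟨z, v⟩ := hd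
    intro s pz hpw hlt x hx
    have hz : z < pz := hlt _ (List.mem_cons_self)
    have htl : ∀ p ∈ tl, p.1 < z := fun p hp => (List.pairwise_cons.mp hpw).1 p hp
    have hpwtl := (List.pairwise_cons.mp hpw).2
    simp only [build] at hx
    by_cases hsv : s * v < 0
    · rw [if_pos hsv] at hx
      rcases List.mem_cons.mp hx with rfl | h
      · exact le_rfl
      · exact le_trans (ih (-s) z hpwtl htl x h) hz.le
    · rw [if_neg hsv] at hx
      exact le_trans (ih s z hpwtl htl x hx) hz.le

lemma eval_prod_pos : ∀ (L : List (ℝ × ℝ × ℤ)) (t : ℝ), (∀ x ∈ L, x.1 < t) →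
    0 < Polynomial.eval t ((L.map (fun p => X - C p.1)).prod) := by
  intro L
  induction L with
  | nil => intro t _; simp
  | cons hd tl ih =>
    intro t h
    simp only [List.map_cons, List.prod_cons, eval_mul, eval_sub, eval_X, eval_C]
    have h1 : 0 < t - hd.1 := sub_pos.mpr (h hd (List.mem_cons_self))
    exact mul_pos h1 (ih t (fun x hx => h x (List.mem_cons_of_mem _ hx)))

lemma build_sign : ∀ (l : List (ℝ × ℤ)) (s : ℤ) (pz : ℝ),
    (s = 1 ∨ s = -1) → List.Pairwise (fun a b => b.1 < a.1) l → (∀ p ∈ l, p.1 < pz) →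
    ∀ t : ℝ, t < pz → (∀ p ∈ l, t ≠ p.1) → Glist l t ≠ 0 →
    0 < ((Glist l t : ℝ)) * (s : ℝ) *
      Polynomial.eval t (((build s pz l).map (fun p => X - C p.1)).prod) := by
  intro l
  induction l with
  | nil => intro s pz _ _ _ t _ _ hG; simp [Glist] at hG
  | cons hd tl ih =>
    obtain ⟨z, v⟩ := hd
    intro s pz hs hpw hlt t htpz htne hG
    have hz : z < pz := hlt _ (List.mem_cons_self)
    have htl : ∀ p ∈ tl, p.1 < z := fun p hp => (List.pairwise_cons.mp hpw).1 p hp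
    have hpwtl := (List.pairwise_cons.mp hpw).2
    have hsne : s ≠ 0 := by
      rcases hs with rfl | rfl
      · decide
      · decide
    by_cases hzt : z ≤ t
    · have htz : z < t :=
        lt_of_le_of_ne hzt (fun h => htne (z, v) (List.mem_cons_self) h.symm)
      have hGv : Glist ((z, v) :: tl) t = v := by simp [Glist, hzt]
      rw [hGv] at hG ⊢
      by_cases hsv : s * v < 0
      · simp only [build, if_pos hsv, List.map_cons, List.prod_cons, eval_mul,
          eval_sub, eval_X, eval_C]
        have hroots : ∀ x ∈ build (-s) z tl, x.1 ≤ z := build_mem_le tl (-s) z hpwtl htl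
        set E := Polynomial.eval t (((build (-s) z tl).map (fun p => X - C p.1)).prod) with hE
        have hpos : 0 < E :=
          eval_prod_pos _ t (fun x hx => lt_of_le_of_lt (hroots x hx) htz)
        have h1 : ((v : ℝ)) * (s : ℝ) < 0 := by
          have h1' : ((v * s : ℤ) : ℝ) < 0 := by exact_mod_cast (mul_comm s v ▸ hsv)
          push_cast at h1'
          exact h1'
        have h2 : t - pz < 0 := sub_neg.mpr htpz
        have h3 : (0:ℝ) < ((v : ℝ) * (s:ℝ) * (t - pz)) * E :=
          mul_pos (mul_pos_of_neg_of_neg h1 h2) hpos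
        have heq : ((v : ℝ) * (s:ℝ) * (t - pz)) * E = (v : ℝ) * (s:ℝ) * ((t - pz) * E) := by
          ring
        rw [heq] at h3
        exact h3
      · simp only [build, if_neg hsv]
        have hsvpos : 0 < v * s := by
          rcases hs with rfl | rfl
          · simp only [one_mul] at hsv
            simp only [mul_one]
            omega
          · simp only [neg_mul, one_mul] at hsv
            simp only [mul_neg, mul_one]
            omega
        have hroots : ∀ x ∈ build s z tl, x.1 ≤ z := build_mem_le tl s z hpwtl htl
        have hpos : 0 < Polynomial.eval t (((build s z tl).map (fun p => X - C p.1)).prod) :=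
          eval_prod_pos _ t (fun x hx => lt_of_le_of_lt (hroots x hx) htz)
        have h1 : 0 < ((v : ℝ)) * (s : ℝ) := by
          have h1' : (0 : ℝ) < ((v * s : ℤ) : ℝ) := by exact_mod_cast hsvpos
          push_cast at h1'
          exact h1'
        exact mul_pos h1 hpos
    · have hGt : Glist ((z, v) :: tl) t = Glist tl t := by simp [Glist, hzt]
      rw [hGt] at hG ⊢
      have htz : t < z := lt_of_not_ge hzt
      have htne' : ∀ p ∈ tl, t ≠ p.1 := fun p hp => htne p (List.mem_cons_of_mem _ hp)
      by_cases hsv : s * v < 0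
      · simp only [build, if_pos hsv, List.map_cons, List.prod_cons, eval_mul,
          eval_sub, eval_X, eval_C]
        have hns : (-s) = 1 ∨ (-s) = -1 := by
          rcases hs with rfl | rfl
          · exact Or.inr rfl
          · exact Or.inl (by norm_num)
        have hih := ih (-s) z hns hpwtl htl t htz htne' hG
        set E := Polynomial.eval t (((build (-s) z tl).map (fun p => X - C p.1)).prod) with hE
        have h4 : (0:ℝ) < (-(t - pz)) * (((Glist tl t : ℝ)) * (((-s : ℤ) : ℝ)) * E) :=
          mul_pos (by linarith) hih
        have heq : (-(t - pz)) * (((Glist tl t : ℝ)) * (((-s : ℤ) : ℝ)) * E)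
            = ((Glist tl t : ℝ)) * ((s : ℤ) : ℝ) * ((t - pz) * E) := by
          push_cast
          ring
        rw [heq] at h4
        exact h4
      · simp only [build, if_neg hsv]
        exact ih s z hs hpwtl htl t htz htne' hG

lemma build_count (p q : ℝ → ℕ) (hp : Monotone p) (hq : Monotone q) :
    ∀ (l : List (ℝ × ℤ)) (s : ℤ) (pz : ℝ) (w : ℝ),
    List.Pairwise (fun a b => b.1 < a.1) l →
    (∀ x ∈ l, x.1 ≤ w) →
    (∀ x ∈ l, (0 < x.2 ↔ q x.1 < p x.1) ∧ (x.2 < 0 ↔ p x.1 < q x.1)) →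
    ((0 < s → q w < p w) ∧ (s < 0 → p w < q w)) → (s = 1 ∨ s = -1) →
    2 * (build s pz l).length + 1 ≤ p w + q w := by
  intro l
  induction l with
  | nil =>
    intro s pz w _ _ _ hanch hs
    simp only [build, List.length_nil]
    rcases hs with rfl | rfl
    · have := hanch.1 (by norm_num)
      omega
    · have := hanch.2 (by norm_num)
      omega
  | cons hd tl ih =>
    obtain ⟨z, v⟩ := hd
    intro s pz w hpw hw hlink hanch hs
    have hzw : z ≤ w := hw _ (List.mem_cons_self)
    have htlw : ∀ x ∈ tl, x.1 ≤ z := fun x hx => ((List.pairwise_cons.mp hpw).1 x hx).le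
    have hpwtl := (List.pairwise_cons.mp hpw).2
    have hlinkz := hlink (z, v) (List.mem_cons_self)
    have hlinktl : ∀ x ∈ tl, (0 < x.2 ↔ q x.1 < p x.1) ∧ (x.2 < 0 ↔ p x.1 < q x.1) :=
      fun x hx => hlink x (List.mem_cons_of_mem _ hx)
    by_cases hsv : s * v < 0
    · simp only [build, if_pos hsv, List.length_cons]
      have hanchz : (0 < (-s) → q z < p z) ∧ ((-s) < 0 → p z < q z) := by
        constructor
        · intro hns
          have hs1 : s = -1 := by
            rcases hs with rfl | rfl
            · omega
            · rfl
          have hv : 0 < v := by rw [hs1] at hsv; omega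
          exact hlinkz.1.mp hv
        · intro hns
          have hs1 : s = 1 := by
            rcases hs with rfl | rfl
            · rfl
            · omega
          have hv : v < 0 := by rw [hs1] at hsv; omega
          exact hlinkz.2.mp hv
      have hns : (-s) = 1 ∨ (-s) = -1 := by
        rcases hs with rfl | rfl
        · exact Or.inr rfl
        · exact Or.inl (by norm_num)
      have hih := ih (-s) z z hpwtl htlw hlinktl hanchz hns
      have hpm : p z ≤ p w := hp hzw
      have hqm : q z ≤ q w := hq hzw
      rcases hs with rfl | rfl
      · have h1 : q w < p w := hanch.1 (by norm_num)
        have hv : v < 0 := by omega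
        have h2 : p z < q z := hlinkz.2.mp hv
        omega
      · have h1 : p w < q w := hanch.2 (by norm_num)
        have hv : 0 < v := by omega
        have h2 : q z < p z := hlinkz.1.mp hv
        omega
    · simp only [build, if_neg hsv]
      exact ih s z w hpwtl (fun x hx => le_trans (htlw x hx) hzw) hlinktl hanch hs

lemma build_top (p q : ℝ → ℕ) (hp : Monotone p) (hq : Monotone q) (n : ℕ) (hn : 1 ≤ n)
    (hpn : ∀ t, p t ≤ n) :
    ∀ (l : List (ℝ × ℤ)) (pz : ℝ) (T : ℝ),
    List.Pairwise (fun a b => b.1 < a.1) l →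
    (∀ x ∈ l, x.1 ≤ T) →
    (∀ x ∈ l, (0 < x.2 ↔ q x.1 < p x.1) ∧ (x.2 < 0 ↔ p x.1 < q x.1)) →
    p T = q T →
    (build (firstSign l) pz l).length + 1 ≤ n := by
  intro l
  induction l with
  | nil =>
    intro pz T _ _ _ _
    simp only [build, List.length_nil]
    omega
  | cons hd tl ih =>
    obtain ⟨z, v⟩ := hd
    intro pz T hpw hT hlink hpqT
    have hzT : z ≤ T := hT _ (List.mem_cons_self)
    have htlz : ∀ x ∈ tl, x.1 ≤ z := fun x hx => ((List.pairwise_cons.mp hpw).1 x hx).le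
    have htlT : ∀ x ∈ tl, x.1 ≤ T := fun x hx => le_trans (htlz x hx) hzT
    have hpwtl := (List.pairwise_cons.mp hpw).2
    have hlinkz := hlink (z, v) (List.mem_cons_self)
    have hlinktl : ∀ x ∈ tl, (0 < x.2 ↔ q x.1 < p x.1) ∧ (x.2 < 0 ↔ p x.1 < q x.1) :=
      fun x hx => hlink x (List.mem_cons_of_mem _ hx)
    by_cases hv : v = 0
    · have hfs : firstSign ((z, v) :: tl) = firstSign tl := by simp [firstSign, hv]
      have hnoflip : ¬ (firstSign tl * v < 0) := by rw [hv]; simp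
      rw [hfs]
      simp only [build, if_neg hnoflip]
      exact ih z T hpwtl htlT hlinktl hpqT
    · set s : ℤ := if 0 < v then 1 else -1 with hsdef
      have hfs : firstSign ((z, v) :: tl) = s := by simp [firstSign, hv]; rfl
      have hspm : s = 1 ∨ s = -1 := by
        by_cases h : 0 < v
        · exact Or.inl (by simp [hsdef, h])
        · exact Or.inr (by simp [hsdef, h])
      have hnoflip : ¬ (s * v < 0) := by
        by_cases h : 0 < v
        · simp only [hsdef, if_pos h]
          omega
        · simp only [hsdef, if_neg h]
          omega
      rw [hfs]
      simp only [build, if_neg hnoflip]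
      have hanch : (0 < s → q z < p z) ∧ (s < 0 → p z < q z) := by
        constructor
        · intro h0
          have hv' : 0 < v := by
            by_contra h
            simp only [hsdef, if_neg h] at h0
            omega
          exact hlinkz.1.mp hv'
        · intro h0
          have hnv : ¬ 0 < v := by
            by_contra h
            simp only [hsdef, if_pos h] at h0
            omega
          have hv' : v < 0 := by omega
          exact hlinkz.2.mp hv'
      have hcnt := build_count p q hp hq tl s z z hpwtl htlz hlinktl hanch hspm
      have hpm : p z ≤ p T := hp hzT
      have hqm : q z ≤ q T := hq hzT
      have hne : p z ≠ q z := by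
        rcases hspm with h1 | h1
        · have := hanch.1 (by rw [h1]; norm_num)
          omega
        · have := hanch.2 (by rw [h1]; norm_num)
          omega
      have hTn := hpn T
      omega
lemma Glist_eq (M₁ M₂ : Multiset ℝ) :
    ∀ (ds : List ℝ) (t : ℝ), List.Pairwise (fun a b => b < a) ds →
    (∀ r ∈ M₁ + M₂, r ≤ t → r ∈ ds) →
    Glist (ds.map (fun z => (z, (cnt M₁ z : ℤ) - cnt M₂ z))) t
      = (cnt M₁ t : ℤ) - cnt M₂ t := by
  intro ds
  induction ds with
  | nil =>
    intro t _ hcov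
    have h1 : cnt M₁ t = 0 := cnt_eq_zero (fun r hr hle =>
      List.not_mem_nil (hcov r (Multiset.mem_add.mpr (Or.inl hr)) hle))
    have h2 : cnt M₂ t = 0 := cnt_eq_zero (fun r hr hle =>
      List.not_mem_nil (hcov r (Multiset.mem_add.mpr (Or.inr hr)) hle))
    simp [Glist, h1, h2]
  | cons z ds' ih =>
    intro t hpw hcov
    have htl : ∀ r ∈ ds', r < z := fun r hr => (List.pairwise_cons.mp hpw).1 r hr
    by_cases hzt : z ≤ t
    · have : Glist ((z :: ds').map (fun z => (z, (cnt M₁ z : ℤ) - cnt M₂ z))) t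
          = (cnt M₁ z : ℤ) - cnt M₂ z := by simp [Glist, hzt]
      rw [this]
      have hnw : ∀ M : Multiset ℝ, M ≤ M₁ + M₂ → cnt M t = cnt M z := by
        intro M hM
        apply cnt_congr hzt
        intro r hr ⟨hzr, hrt⟩
        rcases List.mem_cons.mp (hcov r (Multiset.mem_of_le hM hr) hrt) with rfl | hmem
        · exact lt_irrefl _ hzr
        · exact absurd (htl r hmem) (not_lt.mpr hzr.le)
      rw [hnw M₁ (Multiset.le_add_right _ _), hnw M₂ (Multiset.le_add_left _ _)]
    · have : Glist ((z :: ds').map (fun z => (z, (cnt M₁ z : ℤ) - cnt M₂ z))) t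
          = Glist (ds'.map (fun z => (z, (cnt M₁ z : ℤ) - cnt M₂ z))) t := by
        simp [Glist, hzt]
      rw [this]
      apply ih t (List.pairwise_cons.mp hpw).2
      intro r hr hrt
      rcases List.mem_cons.mp (hcov r hr hrt) with rfl | hmem
      · exact absurd hrt hzt
      · exact hmem

lemma Glist_zero : ∀ (l : List (ℝ × ℤ)), (∀ p ∈ l, p.2 = 0) → ∀ t, Glist l t = 0 := by
  intro l
  induction l with
  | nil => intro _ t; simp [Glist]
  | cons hd tl ih =>
    obtain ⟨z, v⟩ := hd
    intro h t
    have hv : v = 0 := h (z, v) (List.mem_cons_self)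
    by_cases hzt : z ≤ t
    · simp [Glist, hzt, hv]
    · simp only [Glist, if_neg hzt]
      exact ih (fun p hp => h p (List.mem_cons_of_mem _ hp)) t

lemma chain'_zip {α : Type*} {P : α → α → Prop} :
    ∀ (l : List α), List.Chain' P l → ∀ p ∈ l.zip l.tail, P p.1 p.2 := by
  intro l
  induction l with
  | nil => simp
  | cons x tl ih =>
    cases tl with
    | nil => simp
    | cons y tl' =>
      intro hc p hp
      rw [List.tail_cons, List.zip_cons_cons] at hp
      rcases List.mem_cons.mp hp with rfl | hmem
      · exact (List.isChain_cons_cons.mp hc).1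
      · exact ih (List.isChain_cons_cons.mp hc).2 p hmem

lemma list_sum_eq_zero : ∀ (l : List ℝ), (∀ x ∈ l, 0 ≤ x) → l.sum = 0 → ∀ x ∈ l, x = 0 := by
  intro l
  induction l with
  | nil => simp
  | cons a tl ih =>
    intro hpos hsum x hx
    have hts : 0 ≤ tl.sum := List.sum_nonneg (fun y hy => hpos y (List.mem_cons_of_mem _ hy))
    have ha : 0 ≤ a := hpos a (List.mem_cons_self)
    rw [List.sum_cons] at hsum
    have ha0 : a = 0 := by linarith
    have hts0 : tl.sum = 0 := by linarith
    rcases List.mem_cons.mp hx with rfl | hmem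
    · exact ha0
    · exact ih (fun y hy => hpos y (List.mem_cons_of_mem _ hy)) hts0 x hmem

lemma le_getLast : ∀ (l : List ℝ), List.Pairwise (· < ·) l → ∀ (h : l ≠ []) (z : ℝ),
    z ∈ l → z ≤ l.getLast h := by
  intro l
  induction l with
  | nil => intro _ h; exact absurd rfl h
  | cons x tl ih =>
    intro hpw h z hz
    cases tl with
    | nil =>
      rcases List.mem_singleton.mp hz with rfl
      simp [List.getLast]
    | cons y tl' =>
      have hne : (y :: tl') ≠ [] := List.cons_ne_nil _ _
      rw [List.getLast_cons hne]
      have hlast : (y :: tl').getLast hne ∈ (y :: tl') := List.getLast_mem hne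
      rcases List.mem_cons.mp hz with rfl | hmem
      · exact le_of_lt ((List.pairwise_cons.mp hpw).1 _ hlast)
      · exact ih (List.pairwise_cons.mp hpw).2 hne z hmem

lemma tele2 (Q : ℝ → ℝ) : ∀ (l : List ℝ) (h : l ≠ []),
    ((l.zip l.tail).map (fun p => Q p.2 - Q p.1)).sum
      = Q (l.getLast h) - Q (l.head h) := by
  intro l
  induction l with
  | nil => intro h; exact absurd rfl h
  | cons x tl ih =>
    intro h
    cases tl with
    | nil => simp
    | cons y tl' =>
      have hne : (y :: tl') ≠ [] := List.cons_ne_nil _ _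
      rw [List.tail_cons, List.zip_cons_cons, List.map_cons, List.sum_cons]
      have ih' := ih hne
      rw [List.tail_cons] at ih'
      rw [ih', List.getLast_cons hne]
      simp only [List.head_cons]
      ring

lemma lsum_add {α : Type*} (l : List α) (f g : α → ℝ) :
    (l.map (fun x => f x + g x)).sum = (l.map f).sum + (l.map g).sum := by
  induction l with
  | nil => simp
  | cons a tl ih => simp only [List.map_cons, List.sum_cons, ih]; ring

lemma lsum_mul_left {α : Type*} (l : List α) (c : ℝ) (f : α → ℝ) :
    (l.map (fun x => c * f x)).sum = c * (l.map f).sum := by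
  induction l with
  | nil => simp
  | cons a tl ih => simp only [List.map_cons, List.sum_cons, ih]; ring

lemma msub (M : Multiset ℝ) (A : ℝ) (Q : ℝ → ℝ) :
    (M.map (fun r => A - Q r)).sum = (Multiset.card M : ℝ) * A - (M.map Q).sum := by
  induction M using Multiset.induction with
  | empty => simp
  | cons a M ih => simp only [Multiset.map_cons, Multiset.sum_cons, ih, Multiset.card_cons]
                   push_cast; ring

lemma cnt_add (M₁ M₂ : Multiset ℝ) (t : ℝ) : cnt (M₁ + M₂) t = cnt M₁ t + cnt M₂ t := by
  unfold cnt
  rw [Multiset.filter_add, Multiset.card_add]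

lemma tele (Q : ℝ → ℝ) : ∀ (l : List ℝ), List.Pairwise (· < ·) l → ∀ (hne : l ≠ [])
    (M : Multiset ℝ), (∀ r ∈ M, r ∈ l) →
    (M.map (fun r => Q (l.getLast hne) - Q r)).sum
      = ((l.zip l.tail).map (fun p => (cnt M p.1 : ℝ) * (Q p.2 - Q p.1))).sum := by
  intro l
  induction l with
  | nil => intro _ hne; exact absurd rfl hne
  | cons x tl ih =>
    intro hpw hne M hM
    cases tl with
    | nil =>
      simp only [List.tail_cons, List.zip_nil_right, List.map_nil, List.sum_nil]
      apply Multiset.sum_eq_zero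
      intro b hb
      obtain ⟨r, hr, rfl⟩ := Multiset.mem_map.mp hb
      rcases List.mem_singleton.mp (hM r hr) with rfl
      simp [List.getLast]
    | cons y tl' =>
      have hne' : (y :: tl') ≠ [] := List.cons_ne_nil _ _
      have hpwtl : List.Pairwise (· < ·) (y :: tl') := (List.pairwise_cons.mp hpw).2
      have hxlt : ∀ r ∈ y :: tl', x < r := (List.pairwise_cons.mp hpw).1
      classical
      set Mx := M.filter (· = x) with hMxdef
      set M' := M.filter (fun r => ¬ r = x) with hM'def
      have hsplit : Mx + M' = M := Multiset.filter_add_not _ M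
      have hMxmem : ∀ r ∈ Mx, r = x := fun r hr => (Multiset.mem_filter.mp hr).2
      have hM'mem : ∀ r ∈ M', r ∈ (y :: tl') := by
        intro r hr
        rcases List.mem_cons.mp (hM r (Multiset.mem_filter.mp hr).1) with h | h
        · exact absurd h (Multiset.mem_filter.mp hr).2
        · exact h
      set A : ℝ := (Multiset.card Mx : ℝ) with hA
      set L' : ℝ := Q ((y :: tl').getLast hne') with hL'
      have hlast : (x :: y :: tl').getLast hne = (y :: tl').getLast hne' := List.getLast_cons hne'
      have hcntM : ∀ z ∈ (y :: tl'), (cnt M z : ℝ) = A + (cnt M' z : ℝ) := by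
        intro z hz
        have h1 := cnt_add Mx M' z
        rw [hsplit] at h1
        have h2 : cnt Mx z = Multiset.card Mx := by
          apply cnt_eq_card
          intro r hr
          rw [hMxmem r hr]
          exact (hxlt z hz).le
        rw [h1, h2, hA]
        push_cast
        ring
      have hcntx : (cnt M x : ℝ) = A := by
        have h1 := cnt_add Mx M' x
        rw [hsplit] at h1
        have h2 : cnt Mx x = Multiset.card Mx := by
          apply cnt_eq_card
          intro r hr
          rw [hMxmem r hr]
        have h3 : cnt M' x = 0 :=
          cnt_eq_zero (fun r hr hle => absurd hle (not_le.mpr (hxlt r (hM'mem r hr))))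
        rw [hA, h1, h2, h3]
        push_cast
        ring
      have hmapMx : (Mx.map (fun r => Q ((x :: y :: tl').getLast hne) - Q r)).sum
          = A * (L' - Q x) := by
        have hcg : Mx.map (fun r => Q ((x :: y :: tl').getLast hne) - Q r)
            = Mx.map (fun _ => L' - Q x) := by
          apply Multiset.map_congr rfl
          intro r hr
          rw [hMxmem r hr, hlast]
        rw [hcg, Multiset.map_const', Multiset.sum_replicate, hA, nsmul_eq_mul]
      have hLHS : (M.map (fun r => Q ((x :: y :: tl').getLast hne) - Q r)).sum
          = A * (L' - Q x) + (M'.map (fun r => L' - Q r)).sum := by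
        conv_lhs => rw [← hsplit]
        rw [Multiset.map_add, Multiset.sum_add, hmapMx]
        have hcg2 : (M'.map (fun r => Q ((x :: y :: tl').getLast hne) - Q r))
            = (M'.map (fun r => L' - Q r)) := by
          apply Multiset.map_congr rfl
          intro r _
          rw [hlast]
        rw [hcg2]
      have hIH := ih hpwtl hne' M' hM'mem
      rw [List.tail_cons] at hIH
      have htele2 := tele2 Q (y :: tl') hne'
      rw [List.tail_cons] at htele2
      rw [List.tail_cons, List.zip_cons_cons, List.map_cons, List.sum_cons]
      have hS2 : (((y :: tl').zip tl').map (fun p => (cnt M p.1 : ℝ) * (Q p.2 - Q p.1))).sum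
          = A * (L' - Q y)
            + (((y :: tl').zip tl').map (fun p => (cnt M' p.1 : ℝ) * (Q p.2 - Q p.1))).sum := by
        have hcongr : (((y :: tl').zip tl').map (fun p => (cnt M p.1 : ℝ) * (Q p.2 - Q p.1)))
            = (((y :: tl').zip tl').map
                (fun p => A * (Q p.2 - Q p.1) + (cnt M' p.1 : ℝ) * (Q p.2 - Q p.1))) := by
          apply List.map_congr_left
          intro p hp
          rw [hcntM p.1 (List.of_mem_zip hp).1]
          ring
        rw [hcongr, lsum_add, lsum_mul_left, htele2]
        simp only [List.head_cons]
        rw [hL']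
      rw [hLHS, hS2, hcntx, ← hIH]
      ring

lemma exists_antideriv (R : ℝ[X]) : ∃ Q : ℝ[X], Q.natDegree ≤ R.natDegree + 1 ∧
    Polynomial.derivative Q = R := by
  classical
  refine ⟨∑ k ∈ Finset.range (R.natDegree + 1), (R.coeff k / (k + 1)) • (X ^ (k + 1) : ℝ[X]),
    ?_, ?_⟩
  · apply Polynomial.natDegree_sum_le_of_forall_le
    intro k hk
    refine le_trans (Polynomial.natDegree_smul_le _ _) ?_
    rw [Polynomial.natDegree_X_pow]
    exact Nat.succ_le_succ (Nat.lt_succ_iff.mp (Finset.mem_range.mp hk))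
  · rw [derivative_sum]
    have hterm : ∀ k ∈ Finset.range (R.natDegree + 1),
        Polynomial.derivative ((R.coeff k / (k + 1)) • (X ^ (k + 1) : ℝ[X]))
          = C (R.coeff k) * X ^ k := by
      intro k _
      rw [derivative_smul, derivative_X_pow, Nat.add_sub_cancel]
      rw [Polynomial.smul_eq_C_mul, ← mul_assoc, ← Polynomial.C_mul]
      congr 1
      push_cast
      rw [div_mul_cancel₀]
      positivity
    rw [Finset.sum_congr rfl hterm]
    conv_rhs => rw [Polynomial.as_sum_range' R (R.natDegree + 1) (Nat.lt_succ_self _)]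
    apply Finset.sum_congr rfl
    intro k _
    rw [Polynomial.C_mul_X_pow_eq_monomial]

lemma natDegree_prod_le (L : List (ℝ × ℝ × ℤ)) :
    ((L.map (fun p : ℝ × ℝ × ℤ => X - C p.1)).prod).natDegree ≤ L.length := by
  induction L with
  | nil => simp
  | cons hd tl ih =>
    rw [List.map_cons, List.prod_cons]
    refine le_trans (Polynomial.natDegree_mul_le) ?_
    rw [List.length_cons]
    have h1 : (X - C hd.1).natDegree = 1 := Polynomial.natDegree_X_sub_C hd.1
    omega

lemma sum_map_eval (M : Multiset ℝ) (Q : ℝ[X]) (n : ℕ) (hdeg : Q.natDegree < n + 1) :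
    (M.map (fun r => Q.eval r)).sum = ∑ k ∈ Finset.range (n + 1), Q.coeff k * msum k M := by
  induction M using Multiset.induction with
  | empty => simp [msum]
  | cons a M ih =>
    rw [Multiset.map_cons, Multiset.sum_cons, ih]
    have ha : Q.eval a = ∑ k ∈ Finset.range (n + 1), Q.coeff k * a ^ k :=
      Polynomial.eval_eq_sum_range' hdeg a
    have hm : ∀ k, msum k (a ::ₘ M) = a ^ k + msum k M := by
      intro k
      rw [msum, Multiset.map_cons, Multiset.sum_cons]
      rfl
    rw [ha, ← Finset.sum_add_distrib]
    apply Finset.sum_congr rfl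
    intro k _
    rw [hm k, ← mul_add]
lemma lsum_congr {α : Type*} (l : List α) (f g : α → ℝ) (h : ∀ x ∈ l, f x = g x) :
    (l.map f).sum = (l.map g).sum := by
  rw [List.map_congr_left h]

lemma lsum_sub {α : Type*} (l : List α) (f g : α → ℝ) :
    (l.map (fun x => f x - g x)).sum = (l.map f).sum - (l.map g).sum := by
  induction l with
  | nil => simp
  | cons a tl ih =>
    simp only [List.map_cons, List.sum_cons, ih]
    ring

lemma mem_dropLast_zip {α : Type*} : ∀ (l : List α) (z : α), z ∈ l.dropLast →
    ∃ y, (z, y) ∈ l.zip l.tail := by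
  intro l
  induction l with
  | nil => simp
  | cons x tl ih =>
    cases tl with
    | nil => simp
    | cons y tl' =>
      intro z hz
      rw [List.dropLast_cons₂] at hz
      rcases List.mem_cons.mp hz with rfl | h
      · exact ⟨y, by rw [List.tail_cons, List.zip_cons_cons]; exact List.mem_cons_self⟩
      · obtain ⟨y', hy'⟩ := ih z h
        refine ⟨y', ?_⟩
        rw [List.tail_cons, List.zip_cons_cons]
        rw [List.tail_cons] at hy'
        exact List.mem_cons_of_mem _ hy'

set_option maxHeartbeats 2000000 in
lemma core (n : ℕ) (hn : 1 ≤ n) (S : Finset ℕ) (hScard : S.card ≤ n + 1)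
    (M₁ M₂ : Multiset ℝ)
    (hin₁ : ∀ t, cnt M₁ t ∈ S) (hin₂ : ∀ t, cnt M₂ t ∈ S)
    (hmom : ∀ k, k ≤ n → msum k M₁ = msum k M₂) : M₁ = M₂ := by
  classical
  have hcard : Multiset.card M₁ = Multiset.card M₂ := by
    have h := hmom 0 (by omega)
    rw [msum_zero, msum_zero] at h
    exact_mod_cast h
  set Z := (M₁ + M₂).toFinset with hZ
  by_cases hZe : Z = ∅
  · have h0 : M₁ + M₂ = 0 := Multiset.toFinset_eq_empty.mp hZe
    have h1 := congrArg Multiset.card h0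
    rw [Multiset.card_add, Multiset.card_zero] at h1
    have h2 : M₁ = 0 := Multiset.card_eq_zero.mp (by omega)
    have h3 : M₂ = 0 := Multiset.card_eq_zero.mp (by omega)
    rw [h2, h3]
  · set zs := Z.sort (· ≤ ·) with hzs
    have hpwzs : List.Pairwise (· < ·) zs := Z.sortedLT_sort.pairwise
    have hmemZ : ∀ r, r ∈ M₁ + M₂ → r ∈ zs := by
      intro r hr
      rw [hzs, Finset.mem_sort, hZ, Multiset.mem_toFinset]
      exact hr
    have hne : zs ≠ [] := by
      intro h
      apply hZe
      apply Finset.card_eq_zero.mp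
      rw [← Finset.length_sort (· ≤ ·), ← hzs, h]
      rfl
    set zmax := zs.getLast hne with hzmax
    have hlemax : ∀ z ∈ zs, z ≤ zmax := le_getLast zs hpwzs hne
    set G : ℝ → ℤ := fun t => (cnt M₁ t : ℤ) - (cnt M₂ t : ℤ) with hGdef
    have hGmax : G zmax = 0 := by
      have h1 : cnt M₁ zmax = Multiset.card M₁ := cnt_eq_card (fun r hr =>
        hlemax r (hmemZ r (Multiset.mem_add.mpr (Or.inl hr))))
      have h2 : cnt M₂ zmax = Multiset.card M₂ := cnt_eq_card (fun r hr =>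
        hlemax r (hmemZ r (Multiset.mem_add.mpr (Or.inr hr))))
      simp only [hGdef, h1, h2, hcard, sub_self]
    set ι : ℕ → ℕ := fun c => (S.filter (· < c)).card with hι
    have hιmono : ∀ {c₁ c₂ : ℕ}, c₁ ≤ c₂ → ι c₁ ≤ ι c₂ := by
      intro c₁ c₂ h
      apply Finset.card_le_card
      intro x hx
      rw [Finset.mem_filter] at hx ⊢
      exact ⟨hx.1, lt_of_lt_of_le hx.2 h⟩
    have hιstrict : ∀ {c₁ c₂ : ℕ}, c₁ ∈ S → c₁ < c₂ → ι c₁ < ι c₂ := by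
      intro c₁ c₂ h₁ h
      apply Finset.card_lt_card
      rw [Finset.ssubset_def]
      constructor
      · intro x hx
        rw [Finset.mem_filter] at hx ⊢
        exact ⟨hx.1, lt_trans hx.2 h⟩
      · intro hsub
        have hc : c₁ ∈ S.filter (· < c₂) := Finset.mem_filter.mpr ⟨h₁, h⟩
        have := hsub hc
        rw [Finset.mem_filter] at this
        exact lt_irrefl c₁ this.2
    set p : ℝ → ℕ := fun t => ι (cnt M₁ t) with hp
    set q : ℝ → ℕ := fun t => ι (cnt M₂ t) with hq
    have hpmono : Monotone p := fun a b hab => hιmono (cnt_mono M₁ hab)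
    have hqmono : Monotone q := fun a b hab => hιmono (cnt_mono M₂ hab)
    have hpn : ∀ t, p t ≤ n := by
      intro t
      have hsub : S.filter (· < cnt M₁ t) ⊆ S.erase (cnt M₁ t) := by
        intro x hx
        rw [Finset.mem_filter] at hx
        exact Finset.mem_erase.mpr ⟨Nat.ne_of_lt hx.2, hx.1⟩
      have h1 := Finset.card_le_card hsub
      have h2 : (S.erase (cnt M₁ t)).card = S.card - 1 := Finset.card_erase_of_mem (hin₁ t)
      have h3 : 1 ≤ S.card := Finset.card_pos.mpr ⟨_, hin₁ t⟩
      simp only [hp, hι]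
      omega
    have hlink : ∀ z : ℝ, (0 < G z ↔ q z < p z) ∧ (G z < 0 ↔ p z < q z) := by
      intro z
      have hiff : ∀ {c₁ c₂ : ℕ}, c₁ ∈ S → c₂ ∈ S → (c₁ < c₂ ↔ ι c₁ < ι c₂) := by
        intro c₁ c₂ h₁ h₂
        constructor
        · exact hιstrict h₁
        · intro h
          by_contra hc
          push_neg at hc
          have := hιmono hc
          omega
      constructor
      · simp only [hGdef, hp, hq]
        constructor
        · intro h0
          exact (hiff (hin₂ z) (hin₁ z)).mp (by omega)
        · intro h0
          have := (hiff (hin₂ z) (hin₁ z)).mpr h0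
          omega
      · simp only [hGdef, hp, hq]
        constructor
        · intro h0
          exact (hiff (hin₁ z) (hin₂ z)).mp (by omega)
        · intro h0
          have := (hiff (hin₁ z) (hin₂ z)).mpr h0
          omega
    set lDesc := zs.reverse.map (fun z => (z, G z)) with hlDesc
    have hpwd : List.Pairwise (fun a b : ℝ × ℤ => b.1 < a.1) lDesc := by
      rw [hlDesc, List.pairwise_map, List.pairwise_reverse]
      exact hpwzs
    have hmemd : ∀ x ∈ lDesc, x.1 ∈ zs ∧ x.2 = G x.1 := by
      intro x hx
      rw [hlDesc] at hx
      obtain ⟨z, hz, rfl⟩ := List.mem_map.mp hx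
      exact ⟨List.mem_reverse.mp hz, rfl⟩
    set pz := zmax + 1 with hpz
    have hpzlt : ∀ x ∈ lDesc, x.1 < pz := by
      intro x hx
      have := hlemax _ (hmemd x hx).1
      rw [hpz]
      linarith
    set σ := firstSign lDesc with hσ
    set bd := build σ pz lDesc with hbd
    have hlinkd : ∀ x ∈ lDesc, (0 < x.2 ↔ q x.1 < p x.1) ∧ (x.2 < 0 ↔ p x.1 < q x.1) := by
      intro x hx
      rw [(hmemd x hx).2]
      exact hlink x.1
    have hpqT : p zmax = q zmax := by
      have h1 : cnt M₁ zmax = cnt M₂ zmax := by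
        have := hGmax
        simp only [hGdef] at this
        omega
      simp only [hp, hq, h1]
    have hlen : bd.length + 1 ≤ n := build_top p q hpmono hqmono n hn hpn lDesc pz zmax hpwd
      (fun x hx => hlemax _ (hmemd x hx).1) hlinkd hpqT
    set R : ℝ[X] := C ((σ : ℤ) : ℝ) * ((bd.map (fun pp => X - C pp.1)).prod) with hR
    have hRdeg : R.natDegree ≤ n - 1 := by
      refine le_trans (Polynomial.natDegree_C_mul_le _ _) (le_trans (natDegree_prod_le bd) ?_)
      omega
    obtain ⟨Q, hQdeg, hQder⟩ := exists_antideriv R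
    have hQn : Q.natDegree < n + 1 := by omega
    have hQsum : (M₁.map (fun r => Q.eval r)).sum = (M₂.map (fun r => Q.eval r)).sum := by
      rw [sum_map_eval M₁ Q n hQn, sum_map_eval M₂ Q n hQn]
      apply Finset.sum_congr rfl
      intro k hk
      rw [hmom k (Nat.lt_succ_iff.mp (Finset.mem_range.mp hk))]
    have hGlist : ∀ t, Glist lDesc t = G t := by
      intro t
      rw [hlDesc]
      simp only [hGdef]
      apply Glist_eq M₁ M₂ zs.reverse t
      · rw [List.pairwise_reverse]
        exact hpwzs
      · intro r hr _
        rw [List.mem_reverse]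
        exact hmemZ r hr
    have hadj : List.Chain' (fun a b : ℝ => a < b ∧ ∀ z ∈ zs, z ≤ a ∨ b ≤ z) zs := by
      unfold List.Chain'
      rw [List.isChain_iff_getElem]
      intro i hi
      have hgm : StrictMono zs.get := hpwzs.sortedLT.strictMono_get
      constructor
      · exact hgm (by rw [Fin.mk_lt_mk]; omega)
      · intro z hz
        obtain ⟨j, rfl⟩ := List.mem_iff_get.mp hz
        by_cases hji : (j : ℕ) ≤ i
        · left
          apply hgm.monotone
          rw [Fin.le_def]
          exact hji
        · right
          apply hgm.monotone
          rw [Fin.le_def]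
          show i + 1 ≤ (j : ℕ)
          omega
    set pairsL := zs.zip zs.tail with hpairs
    set TermF : ℝ × ℝ → ℝ := fun pp => ((G pp.1 : ℝ)) * (Q.eval pp.2 - Q.eval pp.1) with hTermF
    have hmono_pair : ∀ pp ∈ pairsL, (0 < G pp.1 → Q.eval pp.1 < Q.eval pp.2)
        ∧ (G pp.1 < 0 → Q.eval pp.2 < Q.eval pp.1) := by
      intro pp hpp
      obtain ⟨hlt, hgap⟩ := chain'_zip zs hadj pp hpp
      have hmem2 : pp.2 ∈ zs := List.mem_of_mem_tail (List.of_mem_zip hpp).2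
      have hRsign : ∀ t ∈ Set.Ioo pp.1 pp.2,
          (0 < G pp.1 → 0 < Polynomial.eval t R) ∧ (G pp.1 < 0 → Polynomial.eval t R < 0) := by
        intro t ht
        have htnotz : ∀ z ∈ zs, t ≠ z := by
          intro z hz he
          rcases hgap z hz with h | h
          · rw [he] at ht
            exact absurd ht.1 (not_lt.mpr h)
          · rw [he] at ht
            exact absurd ht.2 (not_lt.mpr h)
        have hGt : G t = G pp.1 := by
          have hcg : ∀ M : Multiset ℝ, M ≤ M₁ + M₂ → cnt M t = cnt M pp.1 := by
            intro M hM
            apply cnt_congr ht.1.le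
            rintro r hr ⟨h1, h2⟩
            have hrz : r ∈ zs := hmemZ r (Multiset.mem_of_le hM hr)
            rcases hgap r hrz with h | h
            · exact absurd h1 (not_lt.mpr h)
            · exact absurd (lt_of_le_of_lt h2 ht.2) (not_lt.mpr h)
          simp only [hGdef, hcg M₁ (Multiset.le_add_right _ _), hcg M₂ (Multiset.le_add_left _ _)]
        have htpz : t < pz := by
          have := hlemax pp.2 hmem2
          rw [hpz]
          have := ht.2
          linarith
        have htne : ∀ x ∈ lDesc, t ≠ x.1 := fun x hx => htnotz x.1 (hmemd x hx).1
        have hRt : Polynomial.eval t R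
            = ((σ : ℤ) : ℝ) * Polynomial.eval t ((bd.map (fun pp => X - C pp.1)).prod) := by
          rw [hR, eval_mul, eval_C]
        constructor
        · intro hpos
          have hGt0 : Glist lDesc t ≠ 0 := by
            rw [hGlist, hGt]
            omega
          have hbs := build_sign lDesc σ pz (firstSign_pm lDesc) hpwd hpzlt t htpz htne hGt0
          rw [hGlist, hGt, ← hbd] at hbs
          have hGr : (0:ℝ) < ((G pp.1 : ℤ) : ℝ) := by exact_mod_cast hpos
          rw [hRt]
          by_contra hcon
          push_neg at hcon
          nlinarith
        · intro hneg
          have hGt0 : Glist lDesc t ≠ 0 := by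
            rw [hGlist, hGt]
            omega
          have hbs := build_sign lDesc σ pz (firstSign_pm lDesc) hpwd hpzlt t htpz htne hGt0
          rw [hGlist, hGt, ← hbd] at hbs
          have hGr : ((G pp.1 : ℤ) : ℝ) < 0 := by exact_mod_cast hneg
          rw [hRt]
          by_contra hcon
          push_neg at hcon
          nlinarith
      constructor
      · intro hpos
        have hstrict : StrictMonoOn (fun t => Polynomial.eval t Q) (Set.Icc pp.1 pp.2) := by
          apply strictMonoOn_of_deriv_pos (convex_Icc _ _)
          · exact (Polynomial.continuous Q).continuousOn
          · intro t ht
            rw [interior_Icc] at ht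
            rw [Polynomial.deriv, hQder]
            exact (hRsign t ht).1 hpos
        exact hstrict (Set.mem_Icc.mpr ⟨le_refl _, hlt.le⟩)
          (Set.mem_Icc.mpr ⟨hlt.le, le_refl _⟩) hlt
      · intro hneg
        have hstrict : StrictAntiOn (fun t => Polynomial.eval t Q) (Set.Icc pp.1 pp.2) := by
          apply strictAntiOn_of_deriv_neg (convex_Icc _ _)
          · exact (Polynomial.continuous Q).continuousOn
          · intro t ht
            rw [interior_Icc] at ht
            rw [Polynomial.deriv, hQder]
            exact (hRsign t ht).2 hneg
        exact hstrict (Set.mem_Icc.mpr ⟨le_refl _, hlt.le⟩)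
          (Set.mem_Icc.mpr ⟨hlt.le, le_refl _⟩) hlt
    have htl1 := tele (fun t => Polynomial.eval t Q) zs hpwzs hne M₁
      (fun r hr => hmemZ r (Multiset.mem_add.mpr (Or.inl hr)))
    have htl2 := tele (fun t => Polynomial.eval t Q) zs hpwzs hne M₂
      (fun r hr => hmemZ r (Multiset.mem_add.mpr (Or.inr hr)))
    have hsum0 : (pairsL.map TermF).sum = 0 := by
      have hT : ∀ pp ∈ pairsL, TermF pp
          = (cnt M₁ pp.1 : ℝ) * (Polynomial.eval pp.2 Q - Polynomial.eval pp.1 Q)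
            - (cnt M₂ pp.1 : ℝ) * (Polynomial.eval pp.2 Q - Polynomial.eval pp.1 Q) := by
        intro pp _
        simp only [hTermF, hGdef]
        push_cast
        ring
      rw [lsum_congr pairsL TermF _ hT, lsum_sub, ← htl1, ← htl2, msub, msub]
      have hc : (Multiset.card M₁ : ℝ) = (Multiset.card M₂ : ℝ) := by exact_mod_cast hcard
      rw [hc, hQsum]
      ring
    have hterms := list_sum_eq_zero (pairsL.map TermF) (by
      intro x hx
      obtain ⟨pp, hpp, rfl⟩ := List.mem_map.mp hx
      rcases lt_trichotomy (G pp.1) 0 with h | h | h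
      · have hd : Polynomial.eval pp.2 Q < Polynomial.eval pp.1 Q := (hmono_pair pp hpp).2 h
        have hGr : ((G pp.1 : ℤ) : ℝ) < 0 := by exact_mod_cast h
        simp only [hTermF]
        nlinarith
      · simp [hTermF, h]
      · have hd : Polynomial.eval pp.1 Q < Polynomial.eval pp.2 Q := (hmono_pair pp hpp).1 h
        have hGr : (0:ℝ) < ((G pp.1 : ℤ) : ℝ) := by exact_mod_cast h
        simp only [hTermF]
        nlinarith) hsum0
    have hGz : ∀ z ∈ zs, G z = 0 := by
      intro z hz
      have hdecomp : z ∈ zs.dropLast ∨ z = zmax := by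
        have hsplit := List.dropLast_append_getLast hne
        rw [← hsplit] at hz
        rcases List.mem_append.mp hz with h | h
        · exact Or.inl h
        · exact Or.inr (List.mem_singleton.mp h)
      rcases hdecomp with h | rfl
      · obtain ⟨y, hy⟩ := mem_dropLast_zip zs z h
        have hT0 : TermF (z, y) = 0 := hterms _ (List.mem_map_of_mem (f := TermF) hy)
        by_contra hGne
        rcases lt_trichotomy (G z) 0 with hcase | hcase | hcase
        · have hd : Polynomial.eval y Q < Polynomial.eval z Q := (hmono_pair (z, y) hy).2 hcase
          have hGr : ((G z : ℤ) : ℝ) < 0 := by exact_mod_cast hcase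
          simp only [hTermF] at hT0
          nlinarith
        · exact hGne hcase
        · have hd : Polynomial.eval z Q < Polynomial.eval y Q := (hmono_pair (z, y) hy).1 hcase
          have hGr : (0:ℝ) < ((G z : ℤ) : ℝ) := by exact_mod_cast hcase
          simp only [hTermF] at hT0
          nlinarith
      · exact hGmax
    have hGall : ∀ t, G t = 0 := by
      intro t
      rw [← hGlist t]
      exact Glist_zero lDesc
        (fun x hx => by rw [(hmemd x hx).2]; exact hGz x.1 (hmemd x hx).1) t
    apply ext_of_cnt
    intro t
    have h := hGall t
    simp only [hGdef] at h
    omega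
lemma cnt_replicate (n : ℕ) (x t : ℝ) :
    cnt (Multiset.replicate n x) t = if x ≤ t then n else 0 := by
  unfold cnt
  by_cases h : x ≤ t
  · rw [if_pos h, Multiset.filter_eq_self.mpr, Multiset.card_replicate]
    intro r hr
    rw [Multiset.eq_of_mem_replicate hr]
    exact h
  · rw [if_neg h, Multiset.filter_eq_nil.mpr, Multiset.card_zero]
    intro r hr
    rw [Multiset.eq_of_mem_replicate hr]
    exact h

lemma sumtake {d : ℕ} (w : Composition d) : ∀ k, k ≤ w.length →
    (∑ i ∈ Finset.univ.filter (fun i : Fin w.length => (i : ℕ) < k), w.blocksFun i)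
      = w.sizeUpTo k := by
  intro k
  induction k with
  | zero =>
    intro _
    rw [Composition.sizeUpTo_zero]
    apply Finset.sum_eq_zero
    intro i hi
    simp at hi
  | succ k ih =>
    intro hk
    have hk' : k < w.length := hk
    have hins : Finset.univ.filter (fun i : Fin w.length => (i : ℕ) < k + 1)
        = insert (⟨k, hk'⟩ : Fin w.length)
            (Finset.univ.filter (fun i : Fin w.length => (i : ℕ) < k)) := by
      ext i
      simp only [Finset.mem_filter, Finset.mem_insert, Finset.mem_univ, true_and]
      constructor
      · intro h
        rcases Nat.lt_succ_iff_lt_or_eq.mp h with h | h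
        · exact Or.inr h
        · exact Or.inl (Fin.ext h)
      · intro h
        rcases h with rfl | h
        · simp
        · omega
    rw [hins, Finset.sum_insert (by simp [Finset.mem_filter])]
    rw [ih (le_of_lt hk'), w.sizeUpTo_succ hk', add_comm]
    rfl

lemma comp_data {d : ℕ} (u w : Composition d) (hle : CompLe w u)
    (h : ℝ[X]) (a : Fin w.length → ℝ) (ha : StrictMono a)
    (hprod : h = ∏ i, (X - C (a i)) ^ w.blocksFun i) :
    ∃ M : Multiset ℝ,
      h = ((M.map (fun r => X - C r)).prod) ∧
      Multiset.card M = d ∧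
      (∀ t, cnt M t ∈ insert 0 u.sums) := by
  classical
  set M : Multiset ℝ := ∑ i : Fin w.length, Multiset.replicate (w.blocksFun i) (a i) with hM
  have hgen : ∀ (t : Finset (Fin w.length)),
      (((∑ i ∈ t, Multiset.replicate (w.blocksFun i) (a i))).map (fun r => X - C r)).prod
        = ∏ i ∈ t, (X - C (a i)) ^ w.blocksFun i := by
    intro t
    induction t using Finset.induction_on with
    | empty => simp
    | @insert x t hx ih =>
      rw [Finset.sum_insert hx, Multiset.map_add, Multiset.prod_add, ih,
        Finset.prod_insert hx, Multiset.map_replicate, Multiset.prod_replicate]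
  have hprod' : ((M.map (fun r => X - C r)).prod) = ∏ i, (X - C (a i)) ^ w.blocksFun i :=
    hgen Finset.univ
  have hcardM : Multiset.card M = d := by
    have hgen2 : ∀ (t : Finset (Fin w.length)),
        Multiset.card (∑ i ∈ t, Multiset.replicate (w.blocksFun i) (a i))
          = ∑ i ∈ t, w.blocksFun i := by
      intro t
      induction t using Finset.induction_on with
      | empty => simp
      | @insert x t hx ih =>
        rw [Finset.sum_insert hx, Multiset.card_add, ih, Finset.sum_insert hx,
          Multiset.card_replicate]
    rw [hM, hgen2 Finset.univ, Composition.sum_blocksFun]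
  have hcnt : ∀ t, cnt M t ∈ insert 0 u.sums := by
    intro t
    have hcnt_gen : ∀ (tt : Finset (Fin w.length)),
        cnt (∑ i ∈ tt, Multiset.replicate (w.blocksFun i) (a i)) t
          = ∑ i ∈ tt, (if a i ≤ t then w.blocksFun i else 0) := by
      intro tt
      induction tt using Finset.induction_on with
      | empty => simp [cnt]
      | @insert x tt hx ih =>
        rw [Finset.sum_insert hx, cnt_add, ih, Finset.sum_insert hx, cnt_replicate]
    have hcnt_eq : cnt M t
        = ∑ i ∈ Finset.univ.filter (fun i : Fin w.length => a i ≤ t), w.blocksFun i := by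
      rw [hM, hcnt_gen Finset.univ, Finset.sum_filter]
    set kt := (Finset.univ.filter (fun i : Fin w.length => a i ≤ t)).card with hkt
    have hchar : ∀ i : Fin w.length, a i ≤ t ↔ (i : ℕ) < kt := by
      intro i
      constructor
      · intro hi
        have hsub : Finset.Iic i ⊆ Finset.univ.filter (fun j : Fin w.length => a j ≤ t) := by
          intro j hj
          rw [Finset.mem_Iic] at hj
          rw [Finset.mem_filter]
          exact ⟨Finset.mem_univ _, le_trans (ha.monotone hj) hi⟩
        have hcc := Finset.card_le_card hsub
        rw [Fin.card_Iic] at hcc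
        omega
      · intro hi
        by_contra hc
        have hsub : Finset.univ.filter (fun j : Fin w.length => a j ≤ t) ⊆ Finset.Iio i := by
          intro j hj
          rw [Finset.mem_filter] at hj
          rw [Finset.mem_Iio]
          by_contra hc2
          push_neg at hc2
          exact hc (le_trans (ha.monotone hc2) hj.2)
        have hcc := Finset.card_le_card hsub
        rw [Fin.card_Iio] at hcc
        omega
    have hktle : kt ≤ w.length := by
      rw [hkt]
      refine le_trans (Finset.card_filter_le _ _) ?_
      simp
    have heq2 : cnt M t = w.sizeUpTo kt := by
      rw [hcnt_eq, ← sumtake w kt hktle]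
      apply Finset.sum_congr
      · ext i
        simp only [Finset.mem_filter, Finset.mem_univ, true_and]
        exact hchar i
      · intros
        rfl
    rw [heq2]
    rcases Nat.eq_zero_or_pos kt with h0 | hpos
    · rw [h0, Composition.sizeUpTo_zero]
      exact Finset.mem_insert_self 0 _
    · apply Finset.mem_insert_of_mem
      apply hle
      apply Finset.mem_image.mpr
      refine ⟨kt - 1, Finset.mem_range.mpr (by omega), ?_⟩
      congr 1
      omega
  exact ⟨M, by rw [hprod, ← hprod'], hcardM, hcnt⟩

lemma esymm_from_coeff {d : ℕ} (M : Multiset ℝ) (hcard : Multiset.card M = d)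
    (k : ℕ) (hk : k ≤ d) :
    ((M.map (fun r => X - C r)).prod).coeff (d - k) = (-1) ^ k * M.esymm k := by
  have h := Multiset.prod_X_sub_C_coeff M (k := d - k) (by rw [hcard]; omega)
  rw [hcard, Nat.sub_sub_self hk] at h
  exact h

end HypAux

/-- If `u` is a composition of `d` with `ℓ(u) ≤ s`, then the stratum `H_s^u(f)` contains
at most one polynomial. -/
theorem stratum_subsingleton_of_length_le (d s : ℕ) (hd : 1 ≤ d) (hsd : s ≤ d)
    (f : ℝ[X]) (hmon : f.Monic) (hdeg : f.natDegree = d) (hhyp : Hyperbolic f)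
    (u : Composition d) (hu : u.length ≤ s) :
    (HSu d s f u).Subsingleton := by
  intro h₁ hm₁ h₂ hm₂
  simp only [HSu, Hset, Set.mem_setOf_eq, HasComposition] at hm₁ hm₂
  obtain ⟨⟨hmon1, hdeg1, hhyp1, hco1⟩, w₁, hle1, a₁, ha₁, hp₁⟩ := hm₁
  obtain ⟨⟨hmon2, hdeg2, hhyp2, hco2⟩, w₂, hle2, a₂, ha₂, hp₂⟩ := hm₂
  obtain ⟨M₁, hprod1, hcard1, hcnt1⟩ := HypAux.comp_data u w₁ hle1 h₁ a₁ ha₁ hp₁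
  obtain ⟨M₂, hprod2, hcard2, hcnt2⟩ := HypAux.comp_data u w₂ hle2 h₂ a₂ ha₂ hp₂
  have hn : 1 ≤ u.length := u.length_pos_of_pos (by omega)
  have hcoeff : ∀ j, d - s ≤ j → h₁.coeff j = h₂.coeff j := fun j hj =>
    (hco1 j hj).trans (hco2 j hj).symm
  have hesymm : ∀ k, 1 ≤ k → k ≤ s → M₁.esymm k = M₂.esymm k := by
    intro k hk1 hks
    have hkd : k ≤ d := le_trans hks hsd
    have h1 := HypAux.esymm_from_coeff M₁ hcard1 k hkd
    have h2 := HypAux.esymm_from_coeff M₂ hcard2 k hkd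
    have hco := hcoeff (d - k) (by omega)
    rw [hprod1, hprod2, h1, h2] at hco
    have hne : ((-1 : ℝ)) ^ k ≠ 0 := pow_ne_zero _ (by norm_num)
    exact mul_left_cancel₀ hne hco
  have hcardeq : Multiset.card M₁ = Multiset.card M₂ := by rw [hcard1, hcard2]
  have hmom : ∀ k, k ≤ u.length → HypAux.msum k M₁ = HypAux.msum k M₂ := fun k hk =>
    HypAux.msum_eq_of_esymm_eq M₁ M₂ s hesymm hcardeq k (le_trans hk hu)
  have hScard : (insert 0 u.sums).card ≤ u.length + 1 := by
    refine le_trans (Finset.card_insert_le _ _) ?_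
    have hle := Finset.card_image_le (s := Finset.range u.length)
      (f := fun i => u.sizeUpTo (i + 1))
    rw [Finset.card_range] at hle
    have : u.sums.card ≤ u.length := hle
    omega
  have hMeq : M₁ = M₂ :=
    HypAux.core u.length hn (insert 0 u.sums) hScard M₁ M₂ hcnt1 hcnt2 hmom
  rw [hprod1, hprod2, hMeq]
end
end

section
/- If u is a composition of d with l = ℓ(u) > s, then the projection P^{d-l} : H_s^u(f) → ℝ^{l-s} that records the coefficients h_{s+1}, ..., h_l (forgetting the last d-l coefficients) is a homeomorphism onto its image, and the image P^{d-l}(H_s^u(f)) is closed in ℝ^{l-s}. -/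
noncomputable section

open Polynomial

/-- The projection `P^{d-l} : ℝ^{d-s} → ℝ^{l-s}` recording the coefficients
`(h_{s+1}, …, h_l)` and forgetting the last `d - l` coefficients `(h_{l+1}, …, h_d)`,
where `l = ℓ(u)`.  (In the identification `coeffVec`, coordinate `i` is `h_{s+1+i}`, so
this keeps the first `l - s` coordinates.) -/
def projLow (d s : ℕ) (u : Composition d) (y : Fin (d - s) → ℝ) :
    Fin (u.length - s) → ℝ :=
  fun i => y ⟨i.val, by have h1 := u.length_le; have h2 := i.isLt; omega⟩

open Finset

/-- The polynomial with roots `a i` of multiplicities `u.blocksFun i`. -/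
def Ppoly {d : ℕ} (u : Composition d) (a : Fin u.length → ℝ) : ℝ[X] :=
  ∏ i, (X - C (a i)) ^ u.blocksFun i

namespace Aux

variable {d : ℕ} (u : Composition d)

theorem comp_index_prod {M : Type*} [CommMonoid M] (G : Fin u.length → M) :
    ∏ j : Fin d, G (u.index j) = ∏ i, G i ^ u.blocksFun i := by
  rw [← Equiv.prod_comp u.blocksFinEquiv (fun j => G (u.index j))]
  rw [← Finset.univ_sigma_univ, Finset.prod_sigma]
  refine Finset.prod_congr rfl fun i _ => ?_
  have : ∀ j : Fin (u.blocksFun i),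
      G (u.index (u.blocksFinEquiv ⟨i, j⟩)) = G i := by
    intro j
    have : u.blocksFinEquiv ⟨i, j⟩ = u.embedding i j := rfl
    rw [this, Composition.index_embedding]
  rw [Finset.prod_congr rfl fun j _ => this j, Finset.prod_const, Finset.card_univ,
    Fintype.card_fin]

theorem comp_index_sum (G : Fin u.length → ℝ) :
    ∑ j : Fin d, G (u.index j) = ∑ i, (u.blocksFun i : ℝ) * G i := by
  rw [← Equiv.sum_comp u.blocksFinEquiv (fun j => G (u.index j))]
  rw [← Finset.univ_sigma_univ, Finset.sum_sigma]
  refine Finset.sum_congr rfl fun i _ => ?_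
  have : ∀ j : Fin (u.blocksFun i),
      G (u.index (u.blocksFinEquiv ⟨i, j⟩)) = G i := by
    intro j
    have : u.blocksFinEquiv ⟨i, j⟩ = u.embedding i j := rfl
    rw [this, Composition.index_embedding]
  rw [Finset.sum_congr rfl fun j _ => this j, Finset.sum_const, Finset.card_univ,
    Fintype.card_fin, nsmul_eq_mul]

theorem Ppoly_eq_prod (a : Fin u.length → ℝ) :
    Ppoly u a = ∏ j : Fin d, (X - C (a (u.index j))) := by
  rw [comp_index_prod u (fun i => X - C (a i))]; rfl

theorem Ppoly_monic (a : Fin u.length → ℝ) : (Ppoly u a).Monic := by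
  rw [Ppoly_eq_prod]
  exact monic_prod_of_monic _ _ fun j _ => monic_X_sub_C _

theorem Ppoly_natDegree (a : Fin u.length → ℝ) : (Ppoly u a).natDegree = d := by
  rw [Ppoly_eq_prod, Polynomial.natDegree_prod _ _ fun j _ => X_sub_C_ne_zero _]
  simp [natDegree_X_sub_C]

theorem Ppoly_roots_card (a : Fin u.length → ℝ) :
    (Ppoly u a).roots.card = d := by
  rw [Ppoly_eq_prod, Polynomial.roots_prod _ _ (by
    exact (monic_prod_of_monic _ _ fun j _ => monic_X_sub_C _).ne_zero)]
  simp [roots_X_sub_C]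

/-- The negated root vector, listed with multiplicity. -/
def N (a : Fin u.length → ℝ) : Fin d → ℝ := fun j => -(a (u.index j))

theorem Ppoly_eq_prod_add (a : Fin u.length → ℝ) :
    Ppoly u a = ∏ j : Fin d, (X + C (N u a j)) := by
  rw [Ppoly_eq_prod]
  refine Finset.prod_congr rfl fun j _ => ?_
  rw [N, map_neg, sub_eq_add_neg]

theorem eval_esymm (A : Fin d → ℝ) (k : ℕ) :
    MvPolynomial.eval A (MvPolynomial.esymm (Fin d) ℝ k)
      = ∑ t ∈ powersetCard k univ, ∏ i ∈ t, A i := by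
  simp [MvPolynomial.esymm, map_sum, map_prod]

theorem eval_psum (A : Fin d → ℝ) (k : ℕ) :
    MvPolynomial.eval A (MvPolynomial.psum (Fin d) ℝ k) = ∑ j, A j ^ k := by
  simp [MvPolynomial.psum]

/-- Vieta: the coefficients of `Ppoly u a` are the elementary symmetric functions of the
negated roots. -/
theorem coeff_Ppoly (a : Fin u.length → ℝ) {k : ℕ} (hk : k ≤ d) :
    (Ppoly u a).coeff (d - k) = MvPolynomial.eval (N u a) (MvPolynomial.esymm (Fin d) ℝ k) := by
  rw [Ppoly_eq_prod_add, eval_esymm]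
  have h : d - k ≤ #(univ : Finset (Fin d)) := by simpa using Nat.sub_le d k
  rw [Finset.prod_X_add_C_coeff _ _ h]
  have h2 : #(univ : Finset (Fin d)) - (d - k) = k := by
    simp only [Finset.card_univ, Fintype.card_fin]; omega
  rw [h2]

/-- Newton's identities: the power sums are determined by the elementary symmetric
functions up to the same degree. -/
theorem psum_eq_of_esymm_eq {n : ℕ} (A B : Fin n → ℝ) (l : ℕ)
    (h : ∀ k, k ≤ l → MvPolynomial.eval A (MvPolynomial.esymm (Fin n) ℝ k)
      = MvPolynomial.eval B (MvPolynomial.esymm (Fin n) ℝ k)) :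
    ∀ k, k ≤ l → MvPolynomial.eval A (MvPolynomial.psum (Fin n) ℝ k)
      = MvPolynomial.eval B (MvPolynomial.psum (Fin n) ℝ k) := by
  intro k
  induction k using Nat.strong_induction_on with
  | _ k ih =>
    intro hk
    rcases Nat.eq_zero_or_pos k with h0 | hpos
    · subst h0; simp [MvPolynomial.psum_zero]
    have hnewton := MvPolynomial.psum_eq_mul_esymm_sub_sum (Fin n) ℝ k hpos
    have hA := congrArg (MvPolynomial.eval A) hnewton
    have hB := congrArg (MvPolynomial.eval B) hnewton
    simp only [map_sub, map_mul, map_pow, map_neg, map_one, map_natCast, map_sum] at hA hB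
    rw [hA, hB, h k hk]
    congr 1
    refine Finset.sum_congr rfl fun p hp => ?_
    simp only [Finset.mem_filter, Finset.HasAntidiagonal.mem_antidiagonal, Set.mem_Ioo] at hp
    rw [h p.1 (by omega), ih p.2 (by omega) (by omega)]



theorem exists_antideriv (Q : ℝ[X]) :
    ∃ R : ℝ[X], derivative R = Q ∧ R.natDegree ≤ Q.natDegree + 1 := by
  refine ⟨Q.sum fun n c => C (c / (n + 1)) * X ^ (n + 1), ?_, ?_⟩
  · rw [Polynomial.sum, map_sum]
    have : ∀ n ∈ Q.support,
        derivative (C (Q.coeff n / (n + 1)) * X ^ (n + 1)) = C (Q.coeff n) * X ^ n := by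
      intro n _
      rw [derivative_C_mul_X_pow]
      have h1 : n + 1 - 1 = n := by omega
      have h2 : Q.coeff n / (↑(n + 1)) * (↑(n + 1) : ℝ) = Q.coeff n :=
        div_mul_cancel₀ _ (Nat.cast_ne_zero.2 (Nat.succ_ne_zero n))
      rw [h1]
      congr 2
      push_cast
      exact div_mul_cancel₀ _ (by positivity)
    rw [Finset.sum_congr rfl this]
    exact Q.sum_C_mul_X_pow_eq
  · refine Polynomial.natDegree_sum_le_of_forall_le _ _ fun n hn => ?_
    refine le_trans (natDegree_mul_le) ?_
    simp only [natDegree_C, natDegree_pow, natDegree_X, mul_one, zero_add]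
    have := Polynomial.le_natDegree_of_mem_supp n hn
    omega

/-- The key injectivity lemma: a weighted family of points on the real line, weakly
increasing, is determined by its first `l` power sums. -/
theorem inj_core {l : ℕ} (w : Fin l → ℝ) (hw : ∀ i, 0 < w i)
    (a b : Fin l → ℝ) (ha : Monotone a) (hb : Monotone b)
    (hp : ∀ k, 1 ≤ k → k ≤ l → ∑ i, w i * a i ^ k = ∑ i, w i * b i ^ k) :
    a = b := by
  classical
  by_contra hne
  -- the set of indices where a and b differ
  have hKne : (Finset.univ.filter (fun i => a i ≠ b i)).Nonempty := by
    by_contra hc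
    rw [Finset.not_nonempty_iff_eq_empty, Finset.filter_eq_empty_iff] at hc
    exact hne (funext fun i => not_not.1 (hc (Finset.mem_univ i)))
  set K : Finset (Fin l) := Finset.univ.filter (fun i => a i ≠ b i) with hKdef
  have hKmem : ∀ i, i ∈ K ↔ a i ≠ b i := by
    intro i; simp [hKdef]
  set lo : Fin l → ℝ := fun i => min (a i) (b i) with hlo
  set hi : Fin l → ℝ := fun i => max (a i) (b i) with hhi
  have hlomono : Monotone lo := ha.min hb
  have hhimono : Monotone hi := ha.max hb
  set σ : Fin l → ℝ := fun i => if a i < b i then 1 else -1 with hσ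
  have hσval : ∀ i, σ i = 1 ∨ σ i = -1 := by
    intro i; by_cases h : a i < b i <;> simp [hσ, h]
  -- basic separation: intervals with opposite signs are separated
  have hsep : ∀ i j, i ≤ j → i ∈ K → j ∈ K → σ i ≠ σ j → hi i ≤ lo j := by
    intro i j hij hiK hjK hσij
    rw [hKmem] at hiK hjK
    by_cases h1 : a i < b i
    · have h2 : ¬ (a j < b j) := fun h => hσij (by simp [hσ, h1, h])
      have h3 : b j < a j := lt_of_le_of_ne (not_lt.1 h2) (Ne.symm hjK)
      have : hi i = b i := max_eq_right h1.le
      have h4 : lo j = b j := min_eq_right h3.le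
      rw [this, h4]; exact hb hij
    · have h1' : b i < a i := lt_of_le_of_ne (not_lt.1 h1) (Ne.symm hiK)
      have h2 : a j < b j := by
        rcases lt_trichotomy (a j) (b j) with h | h | h
        · exact h
        · exact absurd h hjK
        · exact absurd (by simp [hσ, h1, not_lt.2 h.le]) hσij
      have h3 : hi i = a i := max_eq_left h1'.le
      have h4 : lo j = a j := min_eq_left h2.le
      rw [h3, h4]; exact ha hij
  -- the set of sign changes
  set Ch : Finset (Fin l) := K.filter (fun i => ∃ h : (K.filter (· < i)).Nonempty,
      σ ((K.filter (· < i)).max' h) ≠ σ i) with hChdef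
  have hChK : Ch ⊆ K := Finset.filter_subset _ _
  set jmax := K.max' hKne with hjmax
  have hjmaxK : jmax ∈ K := K.max'_mem hKne
  set ε : ℝ := σ jmax with hε
  set cnt : Fin l → ℕ := fun j => #(Ch.filter (j < ·)) with hcnt
  -- constancy of j ↦ σ j * (-1)^(cnt j) on K
  have key : ∀ n : ℕ, ∀ j ∈ K, #(K.filter (j < ·)) ≤ n → σ j * (-1) ^ (cnt j) = ε := by
    intro n
    induction n with
    | zero =>
      intro j hj hcard
      have hemp : K.filter (j < ·) = ∅ := Finset.card_eq_zero.1 (Nat.le_zero.1 hcard)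
      have hjm : j = jmax := by
        refine le_antisymm (K.le_max' j hj) (K.max'_le hKne j ?_)
        intro y hy
        by_contra hyy
        have : y ∈ K.filter (j < ·) := Finset.mem_filter.2 ⟨hy, not_le.1 hyy⟩
        simp [hemp] at this
      have hemp2 : Ch.filter (j < ·) = ∅ := by
        rw [Finset.eq_empty_iff_forall_notMem]
        intro y hy
        rw [Finset.mem_filter] at hy
        have : y ∈ K.filter (j < ·) := Finset.mem_filter.2 ⟨hChK hy.1, hy.2⟩
        simp [hemp] at this
      rw [hcnt]
      simp only [hemp2, Finset.card_empty, pow_zero, mul_one]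
      rw [hjm]
    | succ n ih =>
      intro j hj hcard
      by_cases hemp : (K.filter (j < ·)) = ∅
      · exact ih j hj (by simp [hemp])
      have hne2 : (K.filter (j < ·)).Nonempty := Finset.nonempty_of_ne_empty hemp
      set j' := (K.filter (j < ·)).min' hne2 with hj'def
      have hj'mem : j' ∈ K.filter (j < ·) := Finset.min'_mem _ _
      have hj'K : j' ∈ K := (Finset.mem_filter.1 hj'mem).1
      have hjj' : j < j' := (Finset.mem_filter.1 hj'mem).2
      have hj'min : ∀ k ∈ K, j < k → j' ≤ k := by
        intro k hk hjk
        exact Finset.min'_le _ _ (Finset.mem_filter.2 ⟨hk, hjk⟩)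
      -- the filter for j' is the erase of the filter for j
      have hfilter : K.filter (j' < ·) = (K.filter (j < ·)).erase j' := by
        ext k
        simp only [Finset.mem_filter, Finset.mem_erase]
        constructor
        · rintro ⟨hk, hlt⟩
          exact ⟨ne_of_gt hlt, hk, lt_trans hjj' hlt⟩
        · rintro ⟨hne', hk, hlt⟩
          exact ⟨hk, lt_of_le_of_ne (hj'min k hk hlt) (Ne.symm hne')⟩
      have hcard' : #(K.filter (j' < ·)) ≤ n := by
        rw [hfilter, Finset.card_erase_of_mem hj'mem]
        omega
      have ihj' := ih j' hj'K hcard'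
      -- the predecessor-in-K of j' is j
      have hjmem' : j ∈ K.filter (· < j') := Finset.mem_filter.2 ⟨hj, hjj'⟩
      have hprevne : (K.filter (· < j')).Nonempty := ⟨j, hjmem'⟩
      have hprev : (K.filter (· < j')).max' hprevne = j := by
        refine le_antisymm (Finset.max'_le _ hprevne _ ?_) (Finset.le_max' _ j hjmem')
        intro y hy
        rw [Finset.mem_filter] at hy
        by_contra hyy
        exact absurd hy.2 (not_lt.2 (hj'min y hy.1 (not_le.1 hyy)))
      -- membership of j' in Ch
      have hChmem : j' ∈ Ch ↔ σ j ≠ σ j' := by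
        rw [hChdef, Finset.mem_filter]
        constructor
        · rintro ⟨_, h, hne'⟩
          rwa [hprev] at hne'
        · intro hne'
          exact ⟨hj'K, hprevne, by rwa [hprev]⟩
      -- counting
      have hcntsplit : Ch.filter (j < ·) =
          if j' ∈ Ch then insert j' (Ch.filter (j' < ·)) else Ch.filter (j' < ·) := by
        split_ifs with hjch
        · ext k
          simp only [Finset.mem_filter, Finset.mem_insert]
          constructor
          · rintro ⟨hk, hlt⟩
            rcases eq_or_lt_of_le (hj'min k (hChK hk) hlt) with h | h
            · exact Or.inl h.symm
            · exact Or.inr ⟨hk, h⟩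
          · rintro (rfl | ⟨hk, hlt⟩)
            · exact ⟨hjch, hjj'⟩
            · exact ⟨hk, lt_trans hjj' hlt⟩
        · ext k
          simp only [Finset.mem_filter]
          constructor
          · rintro ⟨hk, hlt⟩
            rcases eq_or_lt_of_le (hj'min k (hChK hk) hlt) with h | h
            · exact absurd (h ▸ hk) hjch
            · exact ⟨hk, h⟩
          · rintro ⟨hk, hlt⟩
            exact ⟨hk, lt_trans hjj' hlt⟩
      by_cases hss : σ j = σ j'
      · have : j' ∉ Ch := fun h => (hChmem.1 h) hss
        have hc : cnt j = cnt j' := by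
          rw [hcnt]; simp only []
          rw [hcntsplit, if_neg this]
        rw [hc, hss, ihj']
      · have hch : j' ∈ Ch := hChmem.2 hss
        have hnotmem : j' ∉ Ch.filter (j' < ·) := by
          simp [Finset.mem_filter]
        have hc : cnt j = cnt j' + 1 := by
          rw [hcnt]; simp only []
          rw [hcntsplit, if_pos hch, Finset.card_insert_of_notMem hnotmem]
        have hσj : σ j = - σ j' := by
          rcases hσval j with h1 | h1 <;> rcases hσval j' with h2 | h2 <;>
            simp [h1, h2] at hss ⊢
        rw [hc, hσj, pow_succ]
        linear_combination ihj'
  have hconst : ∀ j ∈ K, σ j * (-1) ^ (cnt j) = ε := fun j hj =>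
    key _ j hj le_rfl
  -- the polynomial Q with roots at the sign changes
  have hl1 : 1 ≤ l := (K.min' hKne).pos
  set Q : ℝ[X] := C ε * ∏ i ∈ Ch, (X - C (lo i)) with hQdef
  have hεval : ε = 1 ∨ ε = -1 := hσval jmax
  have hεne : ε ≠ 0 := by rcases hεval with h | h <;> rw [h] <;> norm_num
  have hprodmonic : (∏ i ∈ Ch, (X - C (lo i))).Monic :=
    monic_prod_of_monic _ _ fun i _ => monic_X_sub_C _
  have hQne : Q ≠ 0 := mul_ne_zero (by simpa using hεne) hprodmonic.ne_zero
  have hChcard : #Ch ≤ l - 1 := by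
    have hsub : Ch ⊆ K.erase (K.min' hKne) := by
      intro i hi'
      rw [hChdef, Finset.mem_filter] at hi'
      obtain ⟨hiK, pne, -⟩ := hi'
      refine Finset.mem_erase.2 ⟨?_, hiK⟩
      intro heq
      obtain ⟨y, hy⟩ := pne
      rw [Finset.mem_filter] at hy
      exact absurd hy.2 (not_lt.2 (heq ▸ K.min'_le y hy.1))
    calc #Ch ≤ #(K.erase (K.min' hKne)) := Finset.card_le_card hsub
      _ = #K - 1 := Finset.card_erase_of_mem (K.min'_mem hKne)
      _ ≤ l - 1 := by
          have : #K ≤ l := by simpa using Finset.card_le_univ K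
          omega
  have hQdeg : Q.natDegree ≤ l - 1 := by
    refine le_trans natDegree_mul_le ?_
    rw [natDegree_C, zero_add]
    refine le_trans (Polynomial.natDegree_prod_le _ _) ?_
    refine le_trans (Finset.sum_le_card_nsmul _ _ 1 fun i _ => by
      simp [natDegree_X_sub_C]) ?_
    simpa using hChcard
  -- the sign of Q on each interval
  have hsign : ∀ j ∈ K, ∀ t ∈ Set.Ioo (lo j) (hi j), 0 < σ j * Q.eval t := by
    intro j hj t ht
    obtain ⟨ht1, ht2⟩ := ht
    have heval : Q.eval t = ε * ∏ i ∈ Ch, (t - lo i) := by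
      rw [hQdef]; simp [eval_prod]
    have hfilteq : Ch.filter (fun i => ¬ i ≤ j) = Ch.filter (j < ·) :=
      Finset.filter_congr (fun i _ => by simp [not_le])
    have hsplit : ∏ i ∈ Ch, (t - lo i) =
        (∏ i ∈ Ch.filter (· ≤ j), (t - lo i)) * ∏ i ∈ Ch.filter (j < ·), (t - lo i) := by
      rw [← Finset.prod_filter_mul_prod_filter_not Ch (· ≤ j), hfilteq]
    have hpos1 : 0 < ∏ i ∈ Ch.filter (· ≤ j), (t - lo i) := by
      refine Finset.prod_pos fun i hi' => ?_
      rw [Finset.mem_filter] at hi'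
      have : lo i ≤ lo j := hlomono hi'.2
      linarith
    have hneg : ∀ i ∈ Ch.filter (j < ·), t - lo i < 0 := by
      intro i hi'
      rw [Finset.mem_filter] at hi'
      obtain ⟨hiCh, hji⟩ := hi'
      have hiK : i ∈ K := hChK hiCh
      have hsepji : hi j ≤ lo i := by
        rw [hChdef, Finset.mem_filter] at hiCh
        obtain ⟨-, pne, hsp⟩ := hiCh
        set p := (K.filter (· < i)).max' pne with hpdef
        have hpK : p ∈ K := (Finset.mem_filter.1 ((K.filter (· < i)).max'_mem pne)).1
        have hpi : p < i := (Finset.mem_filter.1 ((K.filter (· < i)).max'_mem pne)).2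
        have hjp : j ≤ p := by
          rw [hpdef]
          exact Finset.le_max' (K.filter (· < i)) j (Finset.mem_filter.2 ⟨hj, hji⟩)
        by_cases hsj : σ j = σ i
        · have h1 : σ j ≠ σ p := fun h => hsp (by rw [← h, hsj])
          calc hi j ≤ lo p := hsep j p hjp hj hpK h1
            _ ≤ lo i := hlomono hpi.le
        · exact hsep j i hji.le hj hiK hsj
      linarith
    have hprodneg : ∏ i ∈ Ch.filter (j < ·), (t - lo i)
        = (-1 : ℝ) ^ (cnt j) * ∏ i ∈ Ch.filter (j < ·), (lo i - t) := by
      rw [Finset.prod_congr rfl (fun i _ => show t - lo i = (-1) * (lo i - t) by ring),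
        Finset.prod_mul_distrib, Finset.prod_const]
    have hpos2 : 0 < ∏ i ∈ Ch.filter (j < ·), (lo i - t) := by
      refine Finset.prod_pos fun i hi' => ?_
      have := hneg i hi'
      linarith
    have hσsq : σ j * σ j = 1 := by rcases hσval j with h | h <;> rw [h] <;> norm_num
    have hsq2 : ((-1 : ℝ) ^ (cnt j)) * ((-1) ^ (cnt j)) = 1 := by
      rw [← mul_pow]; norm_num
    have e1 : σ j * Q.eval t = ((σ j * ε) * ((-1 : ℝ) ^ (cnt j))) *
        ((∏ i ∈ Ch.filter (· ≤ j), (t - lo i)) * ∏ i ∈ Ch.filter (j < ·), (lo i - t)) := by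
      rw [heval, hsplit, hprodneg]
      ring
    have e2 : (σ j * ε) * ((-1 : ℝ) ^ (cnt j)) = 1 := by
      have expand : (σ j * ε) * ((-1 : ℝ) ^ (cnt j))
          = (σ j * σ j) * ((-1 : ℝ) ^ (cnt j) * (-1) ^ (cnt j)) := by
        rw [← hconst j hj]
        ring
      rw [expand, hσsq, hsq2, one_mul]
    rw [e1, e2, one_mul]
    exact mul_pos hpos1 hpos2
  -- the antiderivative R
  obtain ⟨R, hRd, hRdeg'⟩ := exists_antideriv Q
  have hRdeg : R.natDegree ≤ l := by omega
  have hRc : Continuous fun x => R.eval x := Polynomial.continuous R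
  have hRdiff : Differentiable ℝ fun x => R.eval x := Polynomial.differentiable R
  have hderivR : ∀ x : ℝ, deriv (fun y => R.eval y) x = Q.eval x := by
    intro x
    rw [Polynomial.deriv, hRd]
  have hmono : ∀ j ∈ K, σ j = 1 → MonotoneOn (fun x => R.eval x) (Set.Icc (lo j) (hi j)) := by
    intro j hj hsj
    refine monotoneOn_of_deriv_nonneg (convex_Icc _ _) hRc.continuousOn
      (hRdiff.differentiableOn) ?_
    intro x hx
    rw [interior_Icc] at hx
    rw [hderivR]
    have := hsign j hj x hx
    rw [hsj, one_mul] at this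
    linarith
  have hanti : ∀ j ∈ K, σ j = -1 → AntitoneOn (fun x => R.eval x) (Set.Icc (lo j) (hi j)) := by
    intro j hj hsj
    refine antitoneOn_of_deriv_nonpos (convex_Icc _ _) hRc.continuousOn
      (hRdiff.differentiableOn) ?_
    intro x hx
    rw [interior_Icc] at hx
    rw [hderivR]
    have := hsign j hj x hx
    rw [hsj] at this
    linarith
  -- the sum identity
  have hev : ∀ x : ℝ, R.eval x = ∑ k ∈ range (l + 1), R.coeff k * x ^ k := fun x =>
    eval_eq_sum_range' (lt_of_le_of_lt hRdeg (Nat.lt_succ_self l)) x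
  have hS : ∑ i, w i * (R.eval (b i) - R.eval (a i)) = 0 := by
    have step1 : ∑ i, w i * (R.eval (b i) - R.eval (a i))
        = ∑ i, ∑ k ∈ range (l + 1), (R.coeff k * (w i * b i ^ k) - R.coeff k * (w i * a i ^ k)) := by
      refine Finset.sum_congr rfl fun i _ => ?_
      rw [hev (b i), hev (a i), ← Finset.sum_sub_distrib, Finset.mul_sum]
      exact Finset.sum_congr rfl fun k _ => by ring
    rw [step1, Finset.sum_comm]
    refine Finset.sum_eq_zero fun k hk => ?_
    rw [Finset.sum_sub_distrib, ← Finset.mul_sum, ← Finset.mul_sum]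
    rcases Nat.eq_zero_or_pos k with h0 | hposk
    · subst h0; simp
    · rw [Finset.mem_range] at hk
      rw [hp k hposk (by omega)]
      ring
  have hall : ∀ i, w i * (R.eval (b i) - R.eval (a i)) = 0 := by
    have := (Finset.sum_eq_zero_iff_of_nonneg (fun i (_ : i ∈ Finset.univ) => ?_)).1 hS
    · intro i; exact this i (Finset.mem_univ i)
    -- nonnegativity of each term
    by_cases hiK : i ∈ K
    · rcases hσval i with hsi | hsi
      · have hab : a i < b i := by
          by_contra hc
          simp only [hσ] at hsi
          rw [if_neg hc] at hsi
          norm_num at hsi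
        have h1 : R.eval (a i) ≤ R.eval (b i) := by
          have hloi : lo i = a i := min_eq_left hab.le
          have hhii : hi i = b i := max_eq_right hab.le
          exact hmono i hiK hsi
            (by rw [hloi, hhii]; exact Set.mem_Icc.2 ⟨le_refl _, hab.le⟩)
            (by rw [hloi, hhii]; exact Set.mem_Icc.2 ⟨hab.le, le_refl _⟩) hab.le
        have := (hw i).le
        nlinarith
      · have hab : b i < a i := by
          have hne' : a i ≠ b i := (hKmem i).1 hiK
          rcases lt_trichotomy (a i) (b i) with h | h | h
          · simp only [hσ] at hsi; rw [if_pos h] at hsi; norm_num at hsi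
          · exact absurd h hne'
          · exact h
        have h1 : R.eval (a i) ≤ R.eval (b i) := by
          have hloi : lo i = b i := min_eq_right hab.le
          have hhii : hi i = a i := max_eq_left hab.le
          exact hanti i hiK hsi
            (by rw [hloi, hhii]; exact Set.mem_Icc.2 ⟨le_refl _, hab.le⟩)
            (by rw [hloi, hhii]; exact Set.mem_Icc.2 ⟨hab.le, le_refl _⟩) hab.le
        have := (hw i).le
        nlinarith
    · have : a i = b i := not_not.1 fun h => hiK ((hKmem i).2 h)
      rw [this]
      simp
  -- conclude : R is constant on a nondegenerate interval
  obtain ⟨j₀, hj₀⟩ := hKne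
  have hj₀ne : a j₀ ≠ b j₀ := (hKmem j₀).1 hj₀
  have hlthi : lo j₀ < hi j₀ := min_lt_max.2 hj₀ne
  have heq0 : R.eval (a j₀) = R.eval (b j₀) := by
    have h0 := hall j₀
    have := (hw j₀).ne'
    have : R.eval (b j₀) - R.eval (a j₀) = 0 := by
      rcases mul_eq_zero.1 h0 with h | h
      · exact absurd h this
      · exact h
    linarith
  have hconst2 : ∀ x ∈ Set.Icc (lo j₀) (hi j₀), R.eval x = R.eval (lo j₀) := by
    intro x hx
    have hmemlo : lo j₀ ∈ Set.Icc (lo j₀) (hi j₀) := Set.mem_Icc.2 ⟨le_refl _, hlthi.le⟩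
    have hmemhi : hi j₀ ∈ Set.Icc (lo j₀) (hi j₀) := Set.mem_Icc.2 ⟨hlthi.le, le_refl _⟩
    have hevlohi : R.eval (lo j₀) = R.eval (hi j₀) := by
      rcases le_or_gt (a j₀) (b j₀) with h | h
      · have e1 : lo j₀ = a j₀ := min_eq_left h
        have e2 : hi j₀ = b j₀ := max_eq_right h
        rw [e1, e2]; exact heq0
      · have e1 : lo j₀ = b j₀ := min_eq_right h.le
        have e2 : hi j₀ = a j₀ := max_eq_left h.le
        rw [e1, e2]; exact heq0.symm
    rcases hσval j₀ with hsj | hsj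
    · have hm := hmono j₀ hj₀ hsj
      have h1 : R.eval (lo j₀) ≤ R.eval x := hm hmemlo hx hx.1
      have h2 : R.eval x ≤ R.eval (hi j₀) := hm hx hmemhi hx.2
      linarith [hevlohi]
    · have hm := hanti j₀ hj₀ hsj
      have h1 : R.eval x ≤ R.eval (lo j₀) := hm hmemlo hx hx.1
      have h2 : R.eval (hi j₀) ≤ R.eval x := hm hx hmemhi hx.2
      linarith [hevlohi]
  have hRzero : R - C (R.eval (lo j₀)) = 0 := by
    refine Polynomial.eq_zero_of_infinite_isRoot _ ?_
    refine Set.Infinite.mono ?_ (Set.Icc_infinite hlthi)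
    intro x hx
    simp only [Set.mem_setOf_eq, IsRoot.def, eval_sub, eval_C]
    rw [hconst2 x hx]
    ring
  have hQzero : Q = 0 := by
    have := congrArg derivative hRzero
    rwa [derivative_sub, derivative_C, sub_zero, hRd, derivative_zero] at this
  exact hQne hQzero




theorem index_eq {n : ℕ} (c : Composition n) (j : Fin n) (i : Fin c.length)
    (h1 : c.sizeUpTo i ≤ j) (h2 : (j : ℕ) < c.sizeUpTo (i + 1)) : c.index j = i := by
  rcases lt_trichotomy (c.index j) i with h | h | h
  · exfalso
    have h3 : (c.index j : ℕ) + 1 ≤ i := h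
    have h5 := c.lt_sizeUpTo_index_succ j
    rw [Fin.val_succ] at h5
    have h4 : c.sizeUpTo ((c.index j : ℕ) + 1) ≤ c.sizeUpTo i := c.monotone_sizeUpTo h3
    omega
  · exact h
  · exfalso
    have h3 : (i : ℕ) + 1 ≤ c.index j := h
    have := c.sizeUpTo_index_le j
    have h4 : c.sizeUpTo ((i : ℕ) + 1) ≤ c.sizeUpTo (c.index j) := c.monotone_sizeUpTo h3
    omega

theorem index_mono {n : ℕ} (c : Composition n) {j j' : Fin n} (h : j ≤ j') :
    c.index j ≤ c.index j' := by
  by_contra hc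
  have h1 : (c.index j' : ℕ) + 1 ≤ c.index j := not_le.1 hc
  have h2 := c.lt_sizeUpTo_index_succ j'
  rw [Fin.val_succ] at h2
  have h3 := c.sizeUpTo_index_le j
  have h4 : c.sizeUpTo ((c.index j' : ℕ) + 1) ≤ c.sizeUpTo (c.index j) :=
    c.monotone_sizeUpTo h1
  have h5 : (j : ℕ) ≤ j' := h
  omega

theorem sizeUpTo_pos {n : ℕ} (c : Composition n) {i : ℕ} (hi : i < c.length) :
    0 < c.sizeUpTo (i + 1) := by
  have := c.sizeUpTo_strict_mono hi
  omega

/-- Pull back a parametrization along `CompLe`. -/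
theorem le_pullback {d : ℕ} (u w : Composition d) (hle : CompLe w u)
    (b : Fin w.length → ℝ) (hb : Monotone b) :
    ∃ a : Fin u.length → ℝ, Monotone a ∧ Ppoly u a = Ppoly w b := by
  have hpos : ∀ i : Fin u.length, u.sizeUpTo ((i : ℕ) + 1) - 1 < d := by
    intro i
    have h1 := u.sizeUpTo_le ((i : ℕ) + 1)
    have h2 := sizeUpTo_pos u i.isLt
    omega
  set pos : Fin u.length → Fin d := fun i => ⟨u.sizeUpTo ((i : ℕ) + 1) - 1, hpos i⟩ with hposdef
  refine ⟨fun i => b (w.index (pos i)), ?_, ?_⟩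
  · intro i i' hii'
    refine hb (index_mono w ?_)
    have : u.sizeUpTo ((i : ℕ) + 1) ≤ u.sizeUpTo ((i' : ℕ) + 1) :=
      u.monotone_sizeUpTo (by exact Nat.add_le_add_right hii' 1)
    simp only [hposdef, Fin.mk_le_mk]
    omega
  · have key : ∀ j : Fin d, w.index (pos (u.index j)) = w.index j := by
      intro j
      set i := u.index j with hidef
      have hj1 : u.sizeUpTo i ≤ j := u.sizeUpTo_index_le j
      have hj2 : (j : ℕ) < u.sizeUpTo ((i : ℕ) + 1) := by
        have := u.lt_sizeUpTo_index_succ j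
        rwa [Fin.val_succ] at this
      set p := pos i with hpdef
      have hpval : (p : ℕ) = u.sizeUpTo ((i : ℕ) + 1) - 1 := rfl
      set t := w.index p with htdef
      have ht1 : w.sizeUpTo t ≤ p := w.sizeUpTo_index_le p
      have ht2 : (p : ℕ) < w.sizeUpTo ((t : ℕ) + 1) := by
        have := w.lt_sizeUpTo_index_succ p
        rwa [Fin.val_succ] at this
      have hclaim : w.sizeUpTo t ≤ j := by
        by_contra hcon
        push_neg at hcon
        rcases Nat.eq_zero_or_pos (t : ℕ) with ht0 | htpos
        · rw [ht0, Composition.sizeUpTo_zero] at hcon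
          omega
        · obtain ⟨r, hr⟩ : ∃ r, (t : ℕ) = r + 1 := ⟨(t : ℕ) - 1, by omega⟩
          have hrlen : r < w.length := by
            have := t.isLt
            omega
          have hmem : w.sizeUpTo (r + 1) ∈ w.sums :=
            Finset.mem_image.2 ⟨r, Finset.mem_range.2 hrlen, rfl⟩
          have hmem2 := hle hmem
          obtain ⟨q, hq, hqeq⟩ := Finset.mem_image.1 hmem2
          rw [Finset.mem_range] at hq
          -- u.sizeUpTo (q+1) = w.sizeUpTo t > j ≥ u.sizeUpTo i
          have h5 : u.sizeUpTo (q + 1) = w.sizeUpTo (t : ℕ) := by rw [hqeq, hr]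
          have h6 : (i : ℕ) < q + 1 := by
            by_contra hc
            have : u.sizeUpTo (q + 1) ≤ u.sizeUpTo i := u.monotone_sizeUpTo (not_lt.1 hc)
            omega
          have h7 : u.sizeUpTo ((i : ℕ) + 1) ≤ u.sizeUpTo (q + 1) :=
            u.monotone_sizeUpTo h6
          have h8 := sizeUpTo_pos u i.isLt
          omega
      have hjp : (j : ℕ) ≤ (p : ℕ) := by
        rw [hpval]
        have := sizeUpTo_pos u i.isLt
        omega
      have : w.index j = t := index_eq w j t hclaim (by omega)
      exact this.symm
    rw [Ppoly_eq_prod, Ppoly_eq_prod]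
    refine Finset.prod_congr rfl fun j _ => ?_
    rw [key j]

/-- Merging two adjacent blocks of a composition. -/
theorem exists_merge {d : ℕ} (u : Composition d) (k : ℕ) (hk : k + 1 < u.length) :
    ∃ u' : Composition d, u'.length = u.length - 1 ∧
      (∀ m : ℕ, u'.sizeUpTo m = if m ≤ k then u.sizeUpTo m else u.sizeUpTo (m + 1)) := by
  have hlen : u.blocks.length = u.length := u.blocks_length
  have hkb : k < u.blocks.length := by omega
  have hk1b : k + 1 < u.blocks.length := by omega
  set A := u.blocks.take k with hA
  set D := u.blocks.drop (k + 2) with hD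
  have hAlen : A.length = k := by
    rw [hA, List.length_take]
    omega
  have hdecomp : u.blocks = A ++ u.blocks[k] :: u.blocks[k + 1] :: D := by
    conv_lhs => rw [← List.take_append_drop k u.blocks]
    rw [List.drop_eq_getElem_cons hkb, List.drop_eq_getElem_cons hk1b]
  set B : List ℕ := A ++ (u.blocks[k] + u.blocks[k + 1]) :: D with hB
  have hBsum : B.sum = d := by
    have h1 : u.blocks.sum = d := u.blocks_sum
    rw [hdecomp, List.sum_append, List.sum_cons, List.sum_cons] at h1
    rw [hB, List.sum_append, List.sum_cons]
    omega
  have hBpos : ∀ {i : ℕ}, i ∈ B → 0 < i := by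
    intro i hi
    rw [hB] at hi
    rcases List.mem_append.1 hi with h | h
    · exact u.blocks_pos (List.take_subset _ _ h)
    · rcases List.mem_cons.1 h with h' | h'
      · subst h'
        have := u.blocks_pos (u.blocks.getElem_mem hkb)
        omega
      · exact u.blocks_pos (List.drop_subset _ _ h')
  set u' : Composition d := ⟨B, fun hi => hBpos hi, hBsum⟩ with hu'
  have hu'len : u'.length = u.length - 1 := by
    show B.length = u.length - 1
    rw [hB, List.length_append, List.length_cons, hAlen, hD, List.length_drop]
    omega
  refine ⟨u', hu'len, ?_⟩
  intro m
  show (B.take m).sum = _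
  by_cases hm : m ≤ k
  · rw [if_pos hm]
    rw [hB, List.take_append]
    have h0 : m - A.length = 0 := by omega
    rw [h0, List.take_zero, List.append_nil, hA, List.take_take]
    have : min m k = m := by omega
    rw [this]
    rfl
  · rw [if_neg hm]
    obtain ⟨r, hr⟩ : ∃ r, m - k = r + 1 := ⟨m - k - 1, by omega⟩
    have hAtake : A.take m = A := List.take_of_length_le (by omega)
    rw [hB, List.take_append, hAtake, hAlen, hr, List.take_succ_cons]
    have hrhs : u.sizeUpTo (m + 1) = (u.blocks.take (m + 1)).sum := rfl
    rw [hrhs]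
    conv_rhs => rw [hdecomp]
    rw [List.take_append (l₁ := A)]
    rw [List.take_of_length_le (show A.length ≤ m + 1 by omega), hAlen]
    have h2 : m + 1 - k = r + 2 := by omega
    rw [h2, List.take_succ_cons, List.take_succ_cons]
    rw [List.sum_append, List.sum_append, List.sum_cons, List.sum_cons, List.sum_cons]
    omega

theorem exists_w_aux {d : ℕ} : ∀ (n : ℕ) (u : Composition d) (a : Fin u.length → ℝ),
    u.length ≤ n → Monotone a →
    ∃ w : Composition d, CompLe w u ∧ HasComposition (Ppoly u a) w := by
  intro n
  induction n with
  | zero =>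
    intro u a hlen _
    have hstrict : StrictMono a := fun p q hpq => absurd p.isLt (by omega)
    exact ⟨u, fun x hx => hx, a, hstrict, rfl⟩
  | succ n ih =>
    intro u a hlen hmono
    by_cases hstrict : StrictMono a
    · exact ⟨u, fun x hx => hx, a, hstrict, rfl⟩
    -- find an adjacent tie
    have hex : ∃ (p q : Fin u.length), p < q ∧ a p = a q := by
      by_contra hc
      push_neg at hc
      exact hstrict fun p q hpq => lt_of_le_of_ne (hmono hpq.le) (hc p q hpq)
    obtain ⟨i, j, hij, heq⟩ := hex
    have hi1lt : (i : ℕ) + 1 < u.length := by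
      have h1 : (i : ℕ) < (j : ℕ) := hij
      have := j.isLt
      omega
    have hle1 : a i ≤ a ⟨(i : ℕ) + 1, hi1lt⟩ := hmono (by simp [Fin.le_def])
    have hle2 : a ⟨(i : ℕ) + 1, hi1lt⟩ ≤ a j := by
      refine hmono ?_
      rw [Fin.le_def]
      have h1 : (i : ℕ) < (j : ℕ) := hij
      simpa using h1
    have htie : a i = a ⟨(i : ℕ) + 1, hi1lt⟩ := le_antisymm hle1 (heq ▸ hle2)
    obtain ⟨u', hu'len, hu'size⟩ := exists_merge u i hi1lt
    have hlen1 : ∀ m : Fin u'.length, (m : ℕ) < u.length := by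
      intro m
      have h := lt_of_lt_of_eq m.isLt hu'len
      omega
    have hlen2 : ∀ m : Fin u'.length, (m : ℕ) + 1 < u.length := by
      intro m
      have h := lt_of_lt_of_eq m.isLt hu'len
      omega
    set a' : Fin u'.length → ℝ := fun m =>
      if (m : ℕ) ≤ (i : ℕ) then a ⟨m, hlen1 m⟩ else a ⟨(m : ℕ) + 1, hlen2 m⟩ with ha'def
    have ha'mono : Monotone a' := by
      intro m m' hmm'
      have hmm : (m : ℕ) ≤ (m' : ℕ) := hmm'
      simp only [ha'def]
      split_ifs with h1 h2 h2
      · exact hmono (by rw [Fin.le_def]; simpa using hmm)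
      · exact hmono (by rw [Fin.le_def]; simp; omega)
      · exact absurd (le_trans hmm h2) h1
      · exact hmono (by rw [Fin.le_def]; simp; omega)
    have hCompLe' : CompLe u' u := by
      intro x hx
      obtain ⟨m, hm, rfl⟩ := Finset.mem_image.1 hx
      rw [Finset.mem_range] at hm
      rw [hu'size (m + 1)]
      by_cases hmk : m + 1 ≤ (i : ℕ)
      · rw [if_pos hmk]
        exact Finset.mem_image.2 ⟨m, Finset.mem_range.2 (by omega), rfl⟩
      · rw [if_neg hmk]
        refine Finset.mem_image.2 ⟨m + 1, Finset.mem_range.2 ?_, rfl⟩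
        rw [hu'len] at hm
        omega
    have hkey : ∀ jd : Fin d, a (u.index jd) = a' (u'.index jd) := by
      intro jd
      set i0 := u.index jd with hi0def
      have h1 : u.sizeUpTo i0 ≤ jd := u.sizeUpTo_index_le jd
      have h2 : (jd : ℕ) < u.sizeUpTo ((i0 : ℕ) + 1) := by
        have := u.lt_sizeUpTo_index_succ jd
        rwa [Fin.val_succ] at this
      by_cases hik : (i0 : ℕ) ≤ (i : ℕ)
      · have hm0lt : (i0 : ℕ) < u'.length := by rw [hu'len]; omega
        have heqidx : u'.index jd = ⟨i0, hm0lt⟩ := by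
          refine index_eq u' jd ⟨i0, hm0lt⟩ ?_ ?_
          · show u'.sizeUpTo (i0 : ℕ) ≤ _
            rw [hu'size (i0 : ℕ), if_pos hik]
            exact h1
          · show (jd : ℕ) < u'.sizeUpTo ((i0 : ℕ) + 1)
            rw [hu'size ((i0 : ℕ) + 1)]
            split_ifs with h3
            · exact h2
            · have := u.monotone_sizeUpTo (show (i0 : ℕ) + 1 ≤ (i0 : ℕ) + 1 + 1 by omega)
              omega
        rw [heqidx]
        simp only [ha'def]
        rw [if_pos hik]
      · by_cases hik1 : (i0 : ℕ) = (i : ℕ) + 1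
        · have hm0lt : (i : ℕ) < u'.length := by rw [hu'len]; omega
          have heqidx : u'.index jd = ⟨i, hm0lt⟩ := by
            refine index_eq u' jd ⟨i, hm0lt⟩ ?_ ?_
            · show u'.sizeUpTo (i : ℕ) ≤ _
              rw [hu'size (i : ℕ), if_pos le_rfl]
              have : u.sizeUpTo (i : ℕ) ≤ u.sizeUpTo (i0 : ℕ) :=
                u.monotone_sizeUpTo (by omega)
              omega
            · show (jd : ℕ) < u'.sizeUpTo ((i : ℕ) + 1)
              rw [hu'size ((i : ℕ) + 1), if_neg (by omega)]
              have : (i : ℕ) + 1 + 1 = (i0 : ℕ) + 1 := by omega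
              rw [this]
              exact h2
          rw [heqidx]
          simp only [ha'def]
          rw [if_pos le_rfl]
          have e1 : a i0 = a ⟨(i : ℕ) + 1, hi1lt⟩ := congrArg a (Fin.ext hik1)
          have e2 : a (⟨(i : ℕ), hlen1 ⟨i, hm0lt⟩⟩ : Fin u.length) = a i :=
            congrArg a (Fin.ext rfl)
          rw [e1, e2, ← htie]
        · have hge : (i : ℕ) + 2 ≤ (i0 : ℕ) := by omega
          have hm0lt : (i0 : ℕ) - 1 < u'.length := by
            rw [hu'len]; have := i0.isLt; omega
          have heqidx : u'.index jd = ⟨(i0 : ℕ) - 1, hm0lt⟩ := by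
            refine index_eq u' jd ⟨(i0 : ℕ) - 1, hm0lt⟩ ?_ ?_
            · show u'.sizeUpTo ((i0 : ℕ) - 1) ≤ _
              rw [hu'size ((i0 : ℕ) - 1), if_neg (by omega)]
              have : (i0 : ℕ) - 1 + 1 = (i0 : ℕ) := by omega
              rw [this]
              exact h1
            · show (jd : ℕ) < u'.sizeUpTo ((i0 : ℕ) - 1 + 1)
              have h4 : (i0 : ℕ) - 1 + 1 = (i0 : ℕ) := by omega
              rw [h4, hu'size (i0 : ℕ), if_neg (by omega)]
              exact h2
          rw [heqidx]
          simp only [ha'def]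
          rw [if_neg (by simp; omega)]
          exact congrArg a (Fin.ext (by simp; omega))
    have hprod : Ppoly u a = Ppoly u' a' := by
      rw [Ppoly_eq_prod, Ppoly_eq_prod]
      exact Finset.prod_congr rfl fun jd _ => by rw [hkey jd]
    obtain ⟨wc, hwle, hwcomp⟩ := ih u' a' (by rw [hu'len]; omega) ha'mono
    exact ⟨wc, Finset.Subset.trans hwle hCompLe', hprod ▸ hwcomp⟩

theorem exists_w {d : ℕ} (u : Composition d) (a : Fin u.length → ℝ) (hmono : Monotone a) :
    ∃ w : Composition d, CompLe w u ∧ HasComposition (Ppoly u a) w :=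
  exists_w_aux u.length u a le_rfl hmono

/-- The main parametrization equivalence. -/
theorem hasComp_iff {d : ℕ} (u : Composition d) (h : ℝ[X]) :
    (∃ w : Composition d, CompLe w u ∧ HasComposition h w) ↔
      ∃ a : Fin u.length → ℝ, Monotone a ∧ h = Ppoly u a := by
  constructor
  · rintro ⟨w, hle, b, hbstrict, rfl⟩
    obtain ⟨a, hamono, haeq⟩ := le_pullback u w hle b hbstrict.monotone
    exact ⟨a, hamono, haeq.symm⟩
  · rintro ⟨a, hamono, rfl⟩
    exact exists_w u a hamono



theorem continuous_coeff_Ppoly (u : Composition d) (k : ℕ) :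
    Continuous fun a : Fin u.length → ℝ => (Ppoly u a).coeff k := by
  rcases le_or_gt k d with hk | hk
  · have hrw : ∀ a : Fin u.length → ℝ, (Ppoly u a).coeff k
        = ∑ t ∈ powersetCard (d - k) univ, ∏ j ∈ t, (-(a (u.index j))) := by
      intro a
      rw [Ppoly_eq_prod_add]
      have h : k ≤ #(univ : Finset (Fin d)) := by simpa using hk
      rw [Finset.prod_X_add_C_coeff _ _ h]
      have h2 : #(univ : Finset (Fin d)) - k = d - k := by simp
      rw [h2]
      rfl
    simp only [hrw]
    refine continuous_finset_sum _ fun t _ => continuous_finset_prod _ fun j _ => ?_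
    exact (continuous_apply (u.index j)).neg
  · have hrw : ∀ a : Fin u.length → ℝ, (Ppoly u a).coeff k = 0 := fun a =>
      coeff_eq_zero_of_natDegree_lt (by rw [Ppoly_natDegree]; exact hk)
    simp only [hrw]
    exact continuous_const

/-- A continuous map with a norm bound on preimages maps closed sets to closed sets. -/
theorem closed_image_of_bound {l m : ℕ} {G : Set (Fin l → ℝ)} (hG : IsClosed G)
    {F : (Fin l → ℝ) → (Fin m → ℝ)} (hF : Continuous F)
    (hb : ∀ M : ℝ, ∃ N : ℝ, ∀ a ∈ G, ‖F a‖ ≤ M → ‖a‖ ≤ N) :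
    IsClosed (F '' G) := by
  rw [← isSeqClosed_iff_isClosed]
  intro x y hx hxy
  choose a haG haF using hx
  have h1 : Filter.Tendsto (fun n => ‖x n‖) Filter.atTop (nhds ‖y‖) := hxy.norm
  obtain ⟨C, hC⟩ := h1.bddAbove_range
  obtain ⟨N, hN⟩ := hb C
  have han : ∀ n, ‖a n‖ ≤ N := by
    intro n
    refine hN (a n) (haG n) ?_
    rw [haF n]
    exact hC (Set.mem_range_self n)
  have hmem : ∀ n, a n ∈ Metric.closedBall (0 : Fin l → ℝ) N := by
    intro n
    rw [Metric.mem_closedBall, dist_zero_right]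
    exact han n
  obtain ⟨z, _, φ, hφ, hconv⟩ := (isCompact_closedBall (0 : Fin l → ℝ) N).tendsto_subseq hmem
  have hzG : z ∈ G := hG.isSeqClosed (fun n => haG (φ n)) hconv
  have hFz : Filter.Tendsto (fun n => F (a (φ n))) Filter.atTop (nhds (F z)) :=
    ((hF.tendsto z).comp hconv)
  have hxφ : Filter.Tendsto (fun n => x (φ n)) Filter.atTop (nhds y) :=
    hxy.comp hφ.tendsto_atTop
  have heq : (fun n => F (a (φ n))) = fun n => x (φ n) := funext fun n => haF (φ n)
  rw [heq] at hFz
  exact ⟨z, hzG, tendsto_nhds_unique hFz hxφ⟩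

section Main

variable (d s : ℕ) (f : ℝ[X]) (u : Composition d)

/-- The parameter domain. -/
def Aset : Set (Fin u.length → ℝ) :=
  {a | Monotone a ∧ ∀ k : ℕ, 1 ≤ k → k ≤ s → (Ppoly u a).coeff (d - k) = f.coeff (d - k)}

theorem Aset_closed : IsClosed (Aset d s f u) := by
  have h1 : IsClosed {a : Fin u.length → ℝ | Monotone a} := by
    have he : {a : Fin u.length → ℝ | Monotone a}
        = ⋂ (p : Fin u.length) (q : Fin u.length) (_ : p ≤ q), {a | a p ≤ a q} := by
      ext a
      simp only [Set.mem_setOf_eq, Set.mem_iInter]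
      exact ⟨fun h p q hpq => h hpq, fun h p q hpq => h p q hpq⟩
    rw [he]
    exact isClosed_iInter fun p => isClosed_iInter fun q => isClosed_iInter fun _ =>
      isClosed_le (continuous_apply p) (continuous_apply q)
  have h2 : IsClosed {a : Fin u.length → ℝ |
      ∀ k : ℕ, 1 ≤ k → k ≤ s → (Ppoly u a).coeff (d - k) = f.coeff (d - k)} := by
    have he : {a : Fin u.length → ℝ |
        ∀ k : ℕ, 1 ≤ k → k ≤ s → (Ppoly u a).coeff (d - k) = f.coeff (d - k)}
        = ⋂ (k : ℕ) (_ : 1 ≤ k) (_ : k ≤ s), {a | (Ppoly u a).coeff (d - k) = f.coeff (d - k)} := by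
      ext a
      simp only [Set.mem_setOf_eq, Set.mem_iInter]
    rw [he]
    exact isClosed_iInter fun k => isClosed_iInter fun _ => isClosed_iInter fun _ =>
      isClosed_eq (continuous_coeff_Ppoly u (d - k)) continuous_const
  exact h1.inter h2

variable {d s f u}

theorem HSu_eq (hsd : s ≤ d) (hmon : f.Monic) (hdeg : f.natDegree = d) :
    HSu d s f u = Ppoly u '' Aset d s f u := by
  ext h
  constructor
  · rintro ⟨⟨hm, hnd, hhyp, hcoeff⟩, hw⟩
    obtain ⟨a, hamono, rfl⟩ := (hasComp_iff u h).1 hw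
    refine ⟨a, ⟨hamono, fun k hk1 hks => ?_⟩, rfl⟩
    exact hcoeff (d - k) (by omega)
  · rintro ⟨a, ⟨hamono, hacoeff⟩, rfl⟩
    refine ⟨⟨Ppoly_monic u a, Ppoly_natDegree u a, ?_, ?_⟩, (hasComp_iff u _).2 ⟨a, hamono, rfl⟩⟩
    · show (Ppoly u a).roots.card = (Ppoly u a).natDegree
      rw [Ppoly_roots_card, Ppoly_natDegree]
    · intro j hj
      rcases lt_trichotomy j d with hjd | hjd | hjd
      · have hk1 : 1 ≤ d - j := by omega
        have hk2 : d - j ≤ s := by omega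
        have := hacoeff (d - j) hk1 hk2
        have hrw : d - (d - j) = j := by omega
        rwa [hrw] at this
      · subst hjd
        have h1 : (Ppoly u a).coeff j = 1 := by
          have := (Ppoly_monic u a).coeff_natDegree
          rwa [Ppoly_natDegree u a] at this
        have h2 : f.coeff j = 1 := by
          have := hmon.coeff_natDegree
          rwa [hdeg] at this
        rw [h1, h2]
      · rw [coeff_eq_zero_of_natDegree_lt (by rw [Ppoly_natDegree]; exact hjd),
          coeff_eq_zero_of_natDegree_lt (by rw [hdeg]; exact hjd)]

/-- The coefficient-vector map on parameters. -/
def Psi : (Fin u.length → ℝ) → (Fin (d - s) → ℝ) := fun a => coeffVec d s (Ppoly u a)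

/-- The truncated coefficient map. -/
def Phi : (Fin u.length → ℝ) → (Fin (u.length - s) → ℝ) := fun a => projLow d s u (Psi a)

variable (d s f u)

theorem Psi_continuous : Continuous (Psi (d := d) (s := s) (u := u)) :=
  continuous_pi fun i => continuous_coeff_Ppoly u _

theorem Phi_continuous : Continuous (Phi (d := d) (s := s) (u := u)) := by
  refine continuous_pi fun i => ?_
  show Continuous fun a => Psi a ⟨i.val, _⟩
  exact (continuous_apply _).comp (Psi_continuous d s u)

theorem Phi_injOn (hsd : s ≤ d) :
    ∀ a ∈ Aset d s f u, ∀ b ∈ Aset d s f u,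
      Phi (d := d) (s := s) (u := u) a = Phi b → a = b := by
  intro a ha b hb hPhi
  have hl : u.length ≤ d := u.length_le
  have hcoeffs : ∀ k, 1 ≤ k → k ≤ u.length →
      (Ppoly u a).coeff (d - k) = (Ppoly u b).coeff (d - k) := by
    intro k hk1 hkl
    rcases le_or_gt k s with hks | hks
    · rw [ha.2 k hk1 hks, hb.2 k hk1 hks]
    · have hi : k - s - 1 < u.length - s := by omega
      have hcong := congrFun hPhi ⟨k - s - 1, hi⟩
      have harith : d - s - 1 - (k - s - 1) = d - k := by omega
      simpa [Phi, Psi, projLow, coeffVec, harith] using hcong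
  have hesymm : ∀ k, k ≤ u.length →
      MvPolynomial.eval (N u a) (MvPolynomial.esymm (Fin d) ℝ k)
        = MvPolynomial.eval (N u b) (MvPolynomial.esymm (Fin d) ℝ k) := by
    intro k hk
    rcases Nat.eq_zero_or_pos k with rfl | hkpos
    · simp [MvPolynomial.esymm_zero]
    · rw [← coeff_Ppoly u a (by omega), ← coeff_Ppoly u b (by omega)]
      exact hcoeffs k hkpos hk
  have hpsum := psum_eq_of_esymm_eq (N u a) (N u b) u.length hesymm
  have hps : ∀ k, 1 ≤ k → k ≤ u.length →
      ∑ i, (u.blocksFun i : ℝ) * a i ^ k = ∑ i, (u.blocksFun i : ℝ) * b i ^ k := by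
    intro k hk1 hkl
    have h1 := hpsum k hkl
    rw [eval_psum, eval_psum] at h1
    have h2a : ∑ j, (N u a j) ^ k = ∑ i, (u.blocksFun i : ℝ) * (-(a i)) ^ k :=
      comp_index_sum u (fun i => (-(a i)) ^ k)
    have h2b : ∑ j, (N u b j) ^ k = ∑ i, (u.blocksFun i : ℝ) * (-(b i)) ^ k :=
      comp_index_sum u (fun i => (-(b i)) ^ k)
    rw [h2a, h2b] at h1
    have hsq : ((-1 : ℝ) ^ k) * ((-1 : ℝ) ^ k) = 1 := by rw [← mul_pow]; norm_num
    have h3 : ∀ c : Fin u.length → ℝ, ∑ i, (u.blocksFun i : ℝ) * c i ^ k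
        = (-1 : ℝ) ^ k * ∑ i, (u.blocksFun i : ℝ) * (-(c i)) ^ k := by
      intro c
      rw [Finset.mul_sum]
      refine Finset.sum_congr rfl fun i _ => ?_
      calc (u.blocksFun i : ℝ) * c i ^ k
          = ((-1 : ℝ) ^ k * (-1 : ℝ) ^ k) * ((u.blocksFun i : ℝ) * c i ^ k) := by
            rw [hsq, one_mul]
        _ = (-1 : ℝ) ^ k * ((u.blocksFun i : ℝ) * (-(c i)) ^ k) := by
            rw [neg_pow]
            ring
    rw [h3 a, h3 b, h1]
  refine inj_core (fun i => (u.blocksFun i : ℝ)) (fun i => ?_) a b ha.1 hb.1 hps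
  show (0 : ℝ) < (u.blocksFun i : ℝ)
  have h0 : 0 < u.blocksFun i := Nat.lt_of_lt_of_le Nat.zero_lt_one (u.one_le_blocksFun i)
  exact_mod_cast h0

theorem Phi_bound (hd : 1 ≤ d) (hsd : s ≤ d) (hlu : s < u.length) :
    ∀ M : ℝ, ∃ N : ℝ, ∀ a ∈ Aset d s f u,
      ‖Phi (d := d) (s := s) (u := u) a‖ ≤ M → ‖a‖ ≤ N := by
  intro M
  set M₁ : ℝ := |M| + |f.coeff (d - 1)| + |f.coeff (d - 2)| with hM₁
  have hM₁0 : 0 ≤ M₁ := by positivity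
  refine ⟨1 + (M₁ ^ 2 + 2 * M₁), ?_⟩
  intro a ha hnorm
  have hl : u.length ≤ d := u.length_le
  have hcb : ∀ k, 1 ≤ k → k ≤ u.length → k ≤ 2 → |(Ppoly u a).coeff (d - k)| ≤ M₁ := by
    intro k hk1 hkl hk2
    rcases le_or_gt k s with hks | hks
    · rw [ha.2 k hk1 hks]
      interval_cases k
      · rw [hM₁]
        have h1 := abs_nonneg M
        have h2 := abs_nonneg (f.coeff (d - 2))
        linarith [le_refl |f.coeff (d - 1)|]
      · rw [hM₁]
        have h1 := abs_nonneg M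
        have h2 := abs_nonneg (f.coeff (d - 1))
        linarith [le_refl |f.coeff (d - 2)|]
    · have hi : k - s - 1 < u.length - s := by omega
      have harith : d - s - 1 - (k - s - 1) = d - k := by omega
      have h1 : (Ppoly u a).coeff (d - k) = Phi (d := d) (s := s) (u := u) a ⟨k - s - 1, hi⟩ := by
        simp [Phi, Psi, projLow, coeffVec, harith]
      rw [h1]
      have h2 := norm_le_pi_norm (Phi (d := d) (s := s) (u := u) a) ⟨k - s - 1, hi⟩
      rw [Real.norm_eq_abs] at h2
      have h3 := le_abs_self M
      have h4 := abs_nonneg (f.coeff (d - 1))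
      have h5 := abs_nonneg (f.coeff (d - 2))
      rw [hM₁]
      linarith
  have habs : ∀ i, |a i| ≤ 1 + (M₁ ^ 2 + 2 * M₁) := by
    intro i
    rcases lt_or_ge u.length 2 with hl2 | hl2
    · -- u.length = 1, s = 0 : use the first power sum
      have hc1 : (Ppoly u a).coeff (d - 1)
          = MvPolynomial.eval (N u a) (MvPolynomial.esymm (Fin d) ℝ 1) :=
        coeff_Ppoly u a (by omega)
      have he1 : MvPolynomial.eval (N u a) (MvPolynomial.esymm (Fin d) ℝ 1)
          = MvPolynomial.eval (N u a) (MvPolynomial.psum (Fin d) ℝ 1) := by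
        rw [MvPolynomial.esymm_one, MvPolynomial.psum_one]
      have hp1 : MvPolynomial.eval (N u a) (MvPolynomial.psum (Fin d) ℝ 1)
          = ∑ i', (u.blocksFun i' : ℝ) * (-(a i')) := by
        rw [eval_psum]
        have h := comp_index_sum u (fun i' => -(a i'))
        have h' : ∀ j : Fin d, (N u a j) ^ 1 = N u a j := fun j => pow_one _
        rw [Finset.sum_congr rfl fun j _ => h' j]
        exact h
      have hsingle : ∑ i', (u.blocksFun i' : ℝ) * (-(a i'))
          = (u.blocksFun i : ℝ) * (-(a i)) := by
        refine Finset.sum_eq_single_of_mem i (Finset.mem_univ i) ?_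
        intro b' _ hb'
        exfalso
        refine hb' (Fin.ext ?_)
        have h1 := b'.isLt
        have h2 := i.isLt
        omega
      have hb1 := hcb 1 le_rfl (by omega) (by omega)
      rw [hc1, he1, hp1, hsingle] at hb1
      have hui : (1 : ℝ) ≤ (u.blocksFun i : ℝ) := by exact_mod_cast u.one_le_blocksFun i
      rw [abs_mul, abs_neg] at hb1
      rw [abs_of_nonneg (by linarith : (0 : ℝ) ≤ (u.blocksFun i : ℝ))] at hb1
      have habs' : |a i| ≤ M₁ := by nlinarith [abs_nonneg (a i)]
      nlinarith [abs_nonneg (a i)]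
    · -- u.length ≥ 2 : use the second power sum
      have hid : MvPolynomial.psum (Fin d) ℝ 2
          = MvPolynomial.esymm (Fin d) ℝ 1 * MvPolynomial.esymm (Fin d) ℝ 1
            - 2 * MvPolynomial.esymm (Fin d) ℝ 2 := by
        have h := MvPolynomial.psum_eq_mul_esymm_sub_sum (Fin d) ℝ 2 (by norm_num)
        have hfil : (Finset.HasAntidiagonal.antidiagonal 2).filter (fun p => p.1 ∈ Set.Ioo 0 2)
            = {(1, 1)} := by
          ext p
          simp only [Finset.mem_filter, Finset.HasAntidiagonal.mem_antidiagonal, Set.mem_Ioo,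
            Finset.mem_singleton, Prod.ext_iff]
          omega
        rw [h, hfil]
        rw [Finset.sum_singleton]
        rw [MvPolynomial.psum_one, ← MvPolynomial.esymm_one (Fin d) ℝ]
        ring
      have e1 : MvPolynomial.eval (N u a) (MvPolynomial.psum (Fin d) ℝ 2)
          = ∑ i', (u.blocksFun i' : ℝ) * (a i') ^ 2 := by
        rw [eval_psum]
        have h' : ∀ j : Fin d, (N u a j) ^ 2 = (a (u.index j)) ^ 2 := fun j => by
          show (-(a (u.index j))) ^ 2 = _
          ring
        rw [Finset.sum_congr rfl fun j _ => h' j]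
        exact comp_index_sum u (fun i' => (a i') ^ 2)
      have hsum2 : ∑ i', (u.blocksFun i' : ℝ) * (a i') ^ 2
          = ((Ppoly u a).coeff (d - 1)) ^ 2 - 2 * (Ppoly u a).coeff (d - 2) := by
        have e2 := congrArg (MvPolynomial.eval (N u a)) hid
        rw [map_sub, map_mul, map_mul, map_ofNat] at e2
        rw [← e1, e2, coeff_Ppoly u a (show 1 ≤ d by omega),
          coeff_Ppoly u a (show 2 ≤ d by omega)]
        ring
      have hb1 := hcb 1 (by omega) (by omega) (by omega)
      have hb2 := hcb 2 (by omega) hl2 (by omega)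
      have hsumb : ∑ i', (u.blocksFun i' : ℝ) * (a i') ^ 2 ≤ M₁ ^ 2 + 2 * M₁ := by
        rw [hsum2]
        have h1 := abs_le.1 hb1
        have h2 := abs_le.1 hb2
        nlinarith [sq_abs ((Ppoly u a).coeff (d - 1))]
      have hterm : (a i) ^ 2 ≤ ∑ i', (u.blocksFun i' : ℝ) * (a i') ^ 2 := by
        have hui : (1 : ℝ) ≤ (u.blocksFun i : ℝ) := by exact_mod_cast u.one_le_blocksFun i
        have h1 : (a i) ^ 2 ≤ (u.blocksFun i : ℝ) * (a i) ^ 2 := by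
          nlinarith [sq_nonneg (a i)]
        refine le_trans h1 (Finset.single_le_sum
          (f := fun i' => (u.blocksFun i' : ℝ) * (a i') ^ 2) ?_ (Finset.mem_univ i))
        intro i' _
        show (0 : ℝ) ≤ (u.blocksFun i' : ℝ) * (a i') ^ 2
        positivity
      rcases le_or_gt (|a i|) 1 with hx | hx
      · nlinarith
      · have h1 : |a i| ≤ |a i| * |a i| := by nlinarith
        have h2 : |a i| * |a i| = (a i) ^ 2 := by rw [← sq_abs]; ring
        nlinarith
  rw [pi_norm_le_iff_of_nonneg (by nlinarith [sq_nonneg M₁])]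
  intro i
  rw [Real.norm_eq_abs]
  exact habs i

end Main

end Aux

open Aux in
/-- If `u` is a composition of `d` with `l = ℓ(u) > s`, then the projection
`P^{d-l} : H_s^u(f) → ℝ^{l-s}` recording the coefficients `h_{s+1}, …, h_l` is a
homeomorphism onto its image, and the image `P^{d-l}(H_s^u(f))` is closed in `ℝ^{l-s}`. -/
theorem projection_homeomorph_and_closed (d s : ℕ) (hd : 1 ≤ d) (hsd : s ≤ d)
    (f : ℝ[X]) (hmon : f.Monic) (hdeg : f.natDegree = d) (hhyp : Hyperbolic f)
    (u : Composition d) (hlu : s < u.length) :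
    (∃ e : ↥(strataSet d s f u) ≃ₜ ↥(projLow d s u '' strataSet d s f u),
      ∀ x : ↥(strataSet d s f u),
        (e x : Fin (u.length - s) → ℝ) = projLow d s u (x : Fin (d - s) → ℝ)) ∧
    IsClosed (projLow d s u '' strataSet d s f u) := by
  have hG : IsClosed (Aset d s f u) := Aset_closed d s f u
  have hPsic := Psi_continuous d s u
  have hPhic := Phi_continuous d s u
  have hinj := Phi_injOn (d := d) (s := s) (f := f) (u := u) hsd
  have hbPhi := Phi_bound (d := d) (s := s) (f := f) (u := u) hd hsd hlu
  have hPhilePsi : ∀ a : Fin u.length → ℝ,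
      ‖Phi (d := d) (s := s) (u := u) a‖ ≤ ‖Psi (d := d) (s := s) (u := u) a‖ := by
    intro a
    rw [pi_norm_le_iff_of_nonneg (norm_nonneg _)]
    intro i
    exact norm_le_pi_norm (Psi a) _
  have hbPsi : ∀ M : ℝ, ∃ N : ℝ, ∀ a ∈ Aset d s f u,
      ‖Psi (d := d) (s := s) (u := u) a‖ ≤ M → ‖a‖ ≤ N := by
    intro M
    obtain ⟨N, hN⟩ := hbPhi M
    exact ⟨N, fun a ha h => hN a ha (le_trans (hPhilePsi a) h)⟩
  let FPsi : ↥(Aset d s f u) → (Fin (d - s) → ℝ) := fun p => Psi p.1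
  let FPhi : ↥(Aset d s f u) → (Fin (u.length - s) → ℝ) := fun p => Phi p.1
  have hmapPsi : IsClosedMap FPsi := by
    intro C hC
    obtain ⟨C', hC', hpre⟩ := isClosed_induced_iff.1 hC
    have him : FPsi '' C = Psi '' (Aset d s f u ∩ C') := by
      ext y
      constructor
      · rintro ⟨p, hpC, rfl⟩
        refine ⟨p.1, ⟨p.2, ?_⟩, rfl⟩
        rw [← hpre] at hpC
        exact hpC
      · rintro ⟨x, ⟨hxA, hxC⟩, rfl⟩
        refine ⟨⟨x, hxA⟩, ?_, rfl⟩
        rw [← hpre]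
        exact hxC
    rw [him]
    refine closed_image_of_bound (hG.inter hC') hPsic ?_
    intro M
    obtain ⟨N, hN⟩ := hbPsi M
    exact ⟨N, fun a ha h => hN a ha.1 h⟩
  have hmapPhi : IsClosedMap FPhi := by
    intro C hC
    obtain ⟨C', hC', hpre⟩ := isClosed_induced_iff.1 hC
    have him : FPhi '' C = Phi '' (Aset d s f u ∩ C') := by
      ext y
      constructor
      · rintro ⟨p, hpC, rfl⟩
        refine ⟨p.1, ⟨p.2, ?_⟩, rfl⟩
        rw [← hpre] at hpC
        exact hpC
      · rintro ⟨x, ⟨hxA, hxC⟩, rfl⟩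
        refine ⟨⟨x, hxA⟩, ?_, rfl⟩
        rw [← hpre]
        exact hxC
    rw [him]
    refine closed_image_of_bound (hG.inter hC') hPhic ?_
    intro M
    obtain ⟨N, hN⟩ := hbPhi M
    exact ⟨N, fun a ha h => hN a ha.1 h⟩
  have hinjPhi : Function.Injective FPhi := by
    intro p q hpq
    exact Subtype.ext (hinj p.1 p.2 q.1 q.2 hpq)
  have hinjPsi : Function.Injective FPsi := by
    intro p q hpq
    refine Subtype.ext (hinj p.1 p.2 q.1 q.2 ?_)
    show projLow d s u (Psi p.1) = projLow d s u (Psi q.1)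
    rw [show Psi p.1 = Psi q.1 from hpq]
  have hembPsi : Topology.IsClosedEmbedding FPsi :=
    Topology.IsClosedEmbedding.of_continuous_injective_isClosedMap
      (hPsic.comp continuous_subtype_val) hinjPsi hmapPsi
  have hembPhi : Topology.IsClosedEmbedding FPhi :=
    Topology.IsClosedEmbedding.of_continuous_injective_isClosedMap
      (hPhic.comp continuous_subtype_val) hinjPhi hmapPhi
  let e₁ : ↥(Aset d s f u) ≃ₜ ↥(Set.range FPsi) :=
    hembPsi.toIsEmbedding.toHomeomorph
  let e₂ : ↥(Aset d s f u) ≃ₜ ↥(Set.range FPhi) :=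
    hembPhi.toIsEmbedding.toHomeomorph
  have hrangePsi : Set.range FPsi = strataSet d s f u := by
    rw [strataSet, HSu_eq hsd hmon hdeg, Set.image_image]
    ext y
    constructor
    · rintro ⟨p, rfl⟩
      exact ⟨p.1, p.2, rfl⟩
    · rintro ⟨x, hx, rfl⟩
      exact ⟨⟨x, hx⟩, rfl⟩
  have hrangePhi : Set.range FPhi = projLow d s u '' strataSet d s f u := by
    rw [← hrangePsi]
    ext y
    constructor
    · rintro ⟨p, rfl⟩
      exact ⟨FPsi p, ⟨p, rfl⟩, rfl⟩
    · rintro ⟨z, ⟨p, rfl⟩, rfl⟩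
      exact ⟨p, rfl⟩
  constructor
  · refine ⟨(Homeomorph.setCongr hrangePsi).symm.trans
      (e₁.symm.trans (e₂.trans (Homeomorph.setCongr hrangePhi))), ?_⟩
    intro x
    set x' : ↥(Set.range FPsi) := (Homeomorph.setCongr hrangePsi).symm x with hx'def
    have hx' : (x' : Fin (d - s) → ℝ) = (x : Fin (d - s) → ℝ) := rfl
    set p : ↥(Aset d s f u) := e₁.symm x' with hpdef
    have h1 : FPsi p = (x' : Fin (d - s) → ℝ) := by
      have := e₁.apply_symm_apply x'
      have h2 : ((e₁ p : ↥(Set.range FPsi)) : Fin (d - s) → ℝ) = FPsi p := rfl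
      rw [← h2, hpdef, this]
    show ((Homeomorph.setCongr hrangePhi) (e₂ p) : Fin (u.length - s) → ℝ)
      = projLow d s u (x : Fin (d - s) → ℝ)
    have h3 : ((Homeomorph.setCongr hrangePhi) (e₂ p) : Fin (u.length - s) → ℝ)
        = FPhi p := rfl
    rw [h3]
    show projLow d s u (FPsi p) = projLow d s u (x : Fin (d - s) → ℝ)
    rw [h1, hx']
  · rw [← hrangePhi]
    exact hmapPhi.isClosed_range
end
end
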